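/- arXiv:2008.12698 — 5 statements merged into one kernel-verified Lean document; each statement's English description precedes it below -/
import Mathlib

section
/- Let X be a locally compact Hausdorff topological space and let E be a linear subspace of the continuous real-valued functions on X that is an adapted space. Then for a linear functional L : E → ℝ the following are equivalent: (i) L(f) ≥ 0 for all f ∈ E₊; (ii) there exists a Radon measure μ on X such that every f ∈ E is μ-integrable and L(f) = ∫_X f dμ for all f ∈ E. -/
open MeasureTheory Set TopologicalSpace ENNReal NNReal

set_option linter.unusedSectionVars false
set_option linter.unusedVariables false
noncomputable section
namespace AdaptedRMK

variable {X : Type*} [TopologicalSpace X] [LocallyCompactSpace X] [T2Space X]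

variable (V : Submodule ℝ C(X, ℝ)) (Λ : V →ₗ[ℝ] ℝ)

/-- The set of values of `Λ` on nonnegative test functions that are `≥ 1` on `K`. -/
def tst (K : Set X) : Set ℝ :=
  {r | ∃ v : V, (∀ x, 0 ≤ (v : C(X, ℝ)) x) ∧ (∀ x ∈ K, 1 ≤ (v : C(X, ℝ)) x) ∧ Λ v = r}

/-- The content of a compact set. -/
def lam (K : Set X) : ℝ := sInf (tst V Λ K)

variable {V Λ}
variable (hCc : ∀ f : C(X, ℝ), HasCompactSupport f → f ∈ V)
    (hΛ : ∀ v : V, (∀ x, 0 ≤ (v : C(X, ℝ)) x) → 0 ≤ Λ v)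

include hΛ in

theorem lam_mono_fn {v w : V} (h : ∀ x, (v : C(X, ℝ)) x ≤ (w : C(X, ℝ)) x) : Λ v ≤ Λ w := by
  have h0 : (0 : ℝ) ≤ Λ (w - v) := by
    refine hΛ _ fun x => ?_
    simp only [Submodule.coe_sub, ContinuousMap.sub_apply]
    linarith [h x]
  have := map_sub Λ w v
  linarith [this ▸ h0]

include hCc in
theorem tst_nonempty {K : Set X} (hK : IsCompact K) : (tst V Λ K).Nonempty := by
  obtain ⟨f, hf1, _, hfc, hf01⟩ :=
    exists_continuous_one_zero_of_isCompact hK isClosed_empty (disjoint_empty K)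
  exact ⟨Λ ⟨f, hCc f hfc⟩, ⟨f, hCc f hfc⟩, fun x => (hf01 x).1,
    fun x hx => le_of_eq (hf1 hx).symm, rfl⟩

include hΛ in
theorem tst_nonneg {K : Set X} {r : ℝ} (hr : r ∈ tst V Λ K) : 0 ≤ r := by
  obtain ⟨v, hv0, _, rfl⟩ := hr
  exact hΛ v hv0

include hΛ in
theorem tst_bddBelow (K : Set X) : BddBelow (tst V Λ K) :=
  ⟨0, fun r hr => tst_nonneg hΛ hr⟩

include hΛ in
theorem lam_nonneg (K : Set X) : 0 ≤ lam V Λ K :=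
  Real.sInf_nonneg fun _ hr => tst_nonneg hΛ hr

include hΛ in
theorem lam_le {K : Set X} {v : V} (hv0 : ∀ x, 0 ≤ (v : C(X, ℝ)) x)
    (hv1 : ∀ x ∈ K, 1 ≤ (v : C(X, ℝ)) x) : lam V Λ K ≤ Λ v :=
  csInf_le (tst_bddBelow hΛ K) ⟨v, hv0, hv1, rfl⟩

include hCc in
theorem le_lam {K : Set X} (hK : IsCompact K) {c : ℝ}
    (h : ∀ v : V, (∀ x, 0 ≤ (v : C(X, ℝ)) x) → (∀ x ∈ K, 1 ≤ (v : C(X, ℝ)) x) → c ≤ Λ v) :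
    c ≤ lam V Λ K :=
  le_csInf (tst_nonempty hCc hK) (by rintro r ⟨v, hv0, hv1, rfl⟩; exact h v hv0 hv1)

include hCc hΛ in
theorem lam_mono {K₁ K₂ : Set X} (hK₂ : IsCompact K₂) (h : K₁ ⊆ K₂) :
    lam V Λ K₁ ≤ lam V Λ K₂ := by
  refine csInf_le_csInf (tst_bddBelow hΛ K₁) (tst_nonempty hCc hK₂) ?_
  rintro r ⟨v, hv0, hv1, rfl⟩
  exact ⟨v, hv0, fun x hx => hv1 x (h hx), rfl⟩


include hCc hΛ in
theorem lam_union_le {K₁ K₂ : Set X} (hK₁ : IsCompact K₁) (hK₂ : IsCompact K₂) :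
    lam V Λ (K₁ ∪ K₂) ≤ lam V Λ K₁ + lam V Λ K₂ := by
  refine le_of_forall_pos_le_add fun ε hε => ?_
  obtain ⟨r₁, hr₁m, hr₁⟩ := exists_lt_of_csInf_lt (tst_nonempty hCc hK₁)
    (lt_add_of_pos_right (lam V Λ K₁) (half_pos hε))
  obtain ⟨r₂, hr₂m, hr₂⟩ := exists_lt_of_csInf_lt (tst_nonempty hCc hK₂)
    (lt_add_of_pos_right (lam V Λ K₂) (half_pos hε))
  obtain ⟨v₁, hv₁0, hv₁1, rfl⟩ := hr₁m
  obtain ⟨v₂, hv₂0, hv₂1, rfl⟩ := hr₂m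
  have hle : lam V Λ (K₁ ∪ K₂) ≤ Λ (v₁ + v₂) := by
    refine lam_le hΛ (fun x => ?_) (fun x hx => ?_)
    · simp only [Submodule.coe_add, ContinuousMap.add_apply]
      exact add_nonneg (hv₁0 x) (hv₂0 x)
    · simp only [Submodule.coe_add, ContinuousMap.add_apply]
      rcases hx with hx | hx
      · linarith [hv₁1 x hx, hv₂0 x]
      · linarith [hv₂1 x hx, hv₁0 x]
  rw [map_add] at hle
  linarith

include hCc hΛ in
theorem lam_union_disjoint {K₁ K₂ : Set X} (hK₁ : IsCompact K₁) (hK₂ : IsCompact K₂)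
    (hd : Disjoint K₁ K₂) :
    lam V Λ (K₁ ∪ K₂) = lam V Λ K₁ + lam V Λ K₂ := by
  refine le_antisymm (lam_union_le hCc hΛ hK₁ hK₂) ?_
  obtain ⟨φ, hφ1, hφ0, hφc, hφ01⟩ :=
    exists_continuous_one_zero_of_isCompact hK₁ hK₂.isClosed hd
  refine le_lam hCc (hK₁.union hK₂) fun v hv0 hv1 => ?_
  have hmemc : HasCompactSupport ((v : C(X, ℝ)) * φ) := by
    rw [ContinuousMap.coe_mul]; exact hφc.mul_left
  set w₁ : V := ⟨(v : C(X, ℝ)) * φ, hCc _ hmemc⟩ with hw₁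
  have h₁ : lam V Λ K₁ ≤ Λ w₁ := by
    refine lam_le hΛ (fun x => ?_) (fun x hx => ?_)
    · exact mul_nonneg (hv0 x) (hφ01 x).1
    · show (1:ℝ) ≤ (v : C(X, ℝ)) x * φ x
      rw [hφ1 hx]; simpa using hv1 x (Or.inl hx)
  have h₂ : lam V Λ K₂ ≤ Λ (v - w₁) := by
    refine lam_le hΛ (fun x => ?_) (fun x hx => ?_)
    · show (0:ℝ) ≤ (v : C(X, ℝ)) x - (v : C(X, ℝ)) x * φ x
      have := (hφ01 x).2
      nlinarith [hv0 x, (hφ01 x).1]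
    · show (1:ℝ) ≤ (v : C(X, ℝ)) x - (v : C(X, ℝ)) x * φ x
      rw [hφ0 hx]; simpa using hv1 x (Or.inr hx)
  rw [map_sub] at h₂
  linarith

variable (V Λ) in
/-- The content associated to `Λ`. -/
def rContent (hCc : ∀ f : C(X, ℝ), HasCompactSupport f → f ∈ V)
    (hΛ : ∀ v : V, (∀ x, 0 ≤ (v : C(X, ℝ)) x) → 0 ≤ Λ v) : Content X where
  toFun K := (lam V Λ K).toNNReal
  mono' K₁ K₂ h := Real.toNNReal_mono (lam_mono hCc hΛ K₂.2 h)
  sup_disjoint' K₁ K₂ hd _ _ := by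
    have h := lam_union_disjoint hCc hΛ K₁.2 K₂.2 hd
    simp only [Compacts.coe_sup]
    rw [show (↑K₁ ∪ ↑K₂ : Set X) = K₁.carrier ∪ K₂.carrier from rfl, h,
      Real.toNNReal_add (lam_nonneg hΛ _) (lam_nonneg hΛ _)]
    rfl
  sup_le' K₁ K₂ := by
    have h := lam_union_le hCc hΛ K₁.2 K₂.2
    simp only [Compacts.coe_sup]
    calc (lam V Λ (↑K₁ ∪ ↑K₂)).toNNReal
        ≤ (lam V Λ ↑K₁ + lam V Λ ↑K₂).toNNReal := Real.toNNReal_mono h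
      _ = _ := Real.toNNReal_add (lam_nonneg hΛ _) (lam_nonneg hΛ _)


theorem rContent_apply (hCc : ∀ f : C(X, ℝ), HasCompactSupport f → f ∈ V)
    (hΛ : ∀ v : V, (∀ x, 0 ≤ (v : C(X, ℝ)) x) → 0 ≤ Λ v) (K : Compacts X) :
    (rContent V Λ hCc hΛ) K = ENNReal.ofReal (lam V Λ (K : Set X)) := rfl

theorem rContent_regular (hCc : ∀ f : C(X, ℝ), HasCompactSupport f → f ∈ V)
    (hΛ : ∀ v : V, (∀ x, 0 ≤ (v : C(X, ℝ)) x) → 0 ≤ Λ v) :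
    Content.ContentRegular (rContent V Λ hCc hΛ) := by
  intro K
  refine le_antisymm (le_iInf fun K' => le_iInf fun hK' => ?_) ?_
  · exact ENNReal.coe_le_coe.2
      (Real.toNNReal_mono (lam_mono hCc hΛ K'.2 (hK'.trans interior_subset)))
  · refine ENNReal.le_of_forall_pos_le_add fun ε hε _ => ?_
    set a := lam V Λ (K : Set X) with ha
    have ha0 : 0 ≤ a := lam_nonneg hΛ _
    set η : ℝ := min 1 ((ε : ℝ) / (a + 2)) with hη
    have hη0 : 0 < η := lt_min one_pos (div_pos hε (by linarith))
    have hη1 : η ≤ 1 := min_le_left _ _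
    have hηε : η * (a + 2) ≤ (ε : ℝ) := by
      rw [hη]
      calc min 1 ((ε : ℝ) / (a + 2)) * (a + 2) ≤ ((ε : ℝ) / (a + 2)) * (a + 2) :=
            mul_le_mul_of_nonneg_right (min_le_right _ _) (by linarith)
        _ = (ε : ℝ) := div_mul_cancel₀ _ (by linarith)
    -- pick a test function close to the infimum
    obtain ⟨r, hrm, hr⟩ := exists_lt_of_csInf_lt (tst_nonempty hCc K.2)
      (lt_add_of_pos_right a hη0)
    obtain ⟨v, hv0, hv1, rfl⟩ := hrm
    -- the open set where v > (1+η)⁻¹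
    have hU : IsOpen {x | (1 + η)⁻¹ < (v : C(X, ℝ)) x} :=
      isOpen_lt continuous_const (v : C(X, ℝ)).continuous
    have hKU : (K : Set X) ⊆ {x | (1 + η)⁻¹ < (v : C(X, ℝ)) x} := by
      intro x hx
      have h1 : (1 + η)⁻¹ < 1 := by
        rw [inv_lt_one_iff₀]; right; linarith
      exact lt_of_lt_of_le h1 (hv1 x hx)
    obtain ⟨K', hK'c, hKK', hK'U⟩ := exists_compact_between K.2 hU hKU
    have hlamK' : lam V Λ K' ≤ (1 + η) * Λ v := by
      have h0 : ∀ x, 0 ≤ ((((1 + η) • v : V)) : C(X, ℝ)) x := by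
        intro x
        simp only [Submodule.coe_smul, ContinuousMap.smul_apply, smul_eq_mul]
        exact mul_nonneg (by linarith) (hv0 x)
      have h1 : ∀ x ∈ K', 1 ≤ ((((1 + η) • v : V)) : C(X, ℝ)) x := by
        intro x hx
        simp only [Submodule.coe_smul, ContinuousMap.smul_apply, smul_eq_mul]
        have hx' := hK'U hx
        have h1η : (0:ℝ) < 1 + η := by linarith
        calc (1:ℝ) = (1 + η) * (1 + η)⁻¹ := by field_simp
          _ ≤ (1 + η) * (v : C(X, ℝ)) x :=
            mul_le_mul_of_nonneg_left (le_of_lt hx') (le_of_lt h1η)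
      have h2 := lam_le hΛ h0 h1
      rwa [_root_.map_smul, smul_eq_mul] at h2
    have hbound : lam V Λ K' ≤ a + (ε : ℝ) := by
      have hΛv0 : a ≤ Λ v := lam_le hΛ hv0 hv1
      have h1η : (0:ℝ) < 1 + η := by linarith
      calc lam V Λ K' ≤ (1 + η) * Λ v := hlamK'
        _ ≤ (1 + η) * (a + η) := mul_le_mul_of_nonneg_left (le_of_lt hr) (le_of_lt h1η)
        _ = a + (η * (a + 2) + η * η - η) := by ring
        _ ≤ a + (ε : ℝ) := by nlinarith
    refine iInf_le_of_le ⟨K', hK'c⟩ (iInf_le_of_le hKK' ?_)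
    rw [rContent_apply, rContent_apply]
    calc ENNReal.ofReal (lam V Λ K') ≤ ENNReal.ofReal (a + (ε : ℝ)) :=
          ENNReal.ofReal_le_ofReal hbound
      _ = ENNReal.ofReal a + ENNReal.ofReal (ε : ℝ) := ENNReal.ofReal_add ha0 ε.2
      _ = ENNReal.ofReal a + ε := by rw [ENNReal.ofReal_coe_nnreal]

variable (V Λ) in
/-- The Riesz measure associated to `Λ`. -/
def rMeasure [MeasurableSpace X] [BorelSpace X]
    (hCc : ∀ f : C(X, ℝ), HasCompactSupport f → f ∈ V)
    (hΛ : ∀ v : V, (∀ x, 0 ≤ (v : C(X, ℝ)) x) → 0 ≤ Λ v) : Measure X :=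
  (rContent V Λ hCc hΛ).measure

theorem rMeasure_regular [MeasurableSpace X] [BorelSpace X]
    (hCc : ∀ f : C(X, ℝ), HasCompactSupport f → f ∈ V)
    (hΛ : ∀ v : V, (∀ x, 0 ≤ (v : C(X, ℝ)) x) → 0 ≤ Λ v) :
    (rMeasure V Λ hCc hΛ).Regular :=
  Content.regular _

theorem rMeasure_compacts [MeasurableSpace X] [BorelSpace X]
    (hCc : ∀ f : C(X, ℝ), HasCompactSupport f → f ∈ V)
    (hΛ : ∀ v : V, (∀ x, 0 ≤ (v : C(X, ℝ)) x) → 0 ≤ Λ v)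
    {K : Set X} (hK : IsCompact K) :
    rMeasure V Λ hCc hΛ K = ENNReal.ofReal (lam V Λ K) :=
  (rContent V Λ hCc hΛ).measure_eq_content_of_regular (rContent_regular hCc hΛ) ⟨K, hK⟩


theorem sum_staircase {δ : ℝ} (hδ : 0 ≤ δ) (N : ℕ) {a : ℝ} (ha : 0 ≤ a) :
    ∑ k ∈ Finset.range N, min (max (a - k * δ) 0) δ = min a (N * δ) := by
  induction N with
  | zero => simp [min_eq_right ha]
  | succ n ih =>
    rw [Finset.sum_range_succ, ih]
    push_cast
    rcases le_or_gt a (n * δ) with h | h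
    · rw [min_eq_left h, max_eq_right (by linarith : a - (n:ℝ) * δ ≤ 0),
        min_eq_left hδ, min_eq_left (by nlinarith : a ≤ ((n:ℝ) + 1) * δ)]
      ring
    · rw [min_eq_right h.le, max_eq_left (by linarith : (0:ℝ) ≤ a - (n:ℝ) * δ)]
      rcases le_total (a - (n:ℝ) * δ) δ with h2 | h2
      · rw [min_eq_left h2, min_eq_left (by linarith : a ≤ ((n:ℝ) + 1) * δ)]; ring
      · rw [min_eq_right h2, min_eq_right (by linarith : ((n:ℝ) + 1) * δ ≤ a)]; ring

theorem ennreal_le_of_forall_pos {A B C : ℝ≥0∞} (hC : C ≠ ∞)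
    (h : ∀ δ : ℝ, 0 < δ → A ≤ B + ENNReal.ofReal δ * C) : A ≤ B := by
  refine ENNReal.le_of_forall_pos_le_add fun ε hε _ => ?_
  set t := C.toReal with ht'
  have ht : 0 ≤ t := ENNReal.toReal_nonneg
  have hε' : (0:ℝ) < ε := hε
  have hδ : (0:ℝ) < ε / (t + 1) := div_pos hε' (by linarith)
  refine (h _ hδ).trans (add_le_add_right ?_ B)
  calc ENNReal.ofReal ((ε:ℝ) / (t + 1)) * C
      = ENNReal.ofReal ((ε:ℝ) / (t + 1)) * ENNReal.ofReal t := by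
        rw [ht', ENNReal.ofReal_toReal hC]
    _ = ENNReal.ofReal ((ε:ℝ) / (t + 1) * t) := (ENNReal.ofReal_mul hδ.le).symm
    _ ≤ ENNReal.ofReal (ε:ℝ) := by
        refine ENNReal.ofReal_le_ofReal ?_
        rw [div_mul_eq_mul_div, div_le_iff₀ (by linarith : (0:ℝ) < t + 1)]
        nlinarith
    _ = (ε : ℝ≥0∞) := ENNReal.ofReal_coe_nnreal

section Core

variable [MeasurableSpace X] [BorelSpace X]

include hCc hΛ in
theorem rMeasure_lintegral (h : C(X, ℝ)) (hh : HasCompactSupport (h : X → ℝ))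
    (h0 : ∀ x, 0 ≤ h x) :
    ∫⁻ x, ENNReal.ofReal (h x) ∂(rMeasure V Λ hCc hΛ) = ENNReal.ofReal (Λ ⟨h, hCc h hh⟩) := by
  rcases isEmpty_or_nonempty X with hempty | hne
  · have h1 : (fun x => ENNReal.ofReal (h x)) = fun _ => (0:ℝ≥0∞) := funext fun x => isEmptyElim x
    have h2 : (⟨h, hCc h hh⟩ : V) = 0 := Subtype.ext (ContinuousMap.ext fun x => isEmptyElim x)
    rw [h1, lintegral_zero, h2, map_zero, ENNReal.ofReal_zero]
  set μ := rMeasure V Λ hCc hΛ with hμdef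
  haveI : μ.Regular := rMeasure_regular hCc hΛ
  set T := tsupport (h : X → ℝ) with hTdef
  have hTc : IsCompact T := hh
  have hμT : μ T ≠ ∞ := hTc.measure_lt_top.ne
  obtain ⟨x₀, hx₀⟩ := h.continuous.exists_forall_ge_of_hasCompactSupport hh
  have key : ∀ δ : ℝ, 0 < δ →
      (∫⁻ x, ENNReal.ofReal (h x) ∂μ
          ≤ ENNReal.ofReal (Λ ⟨h, hCc h hh⟩) + ENNReal.ofReal δ * μ T) ∧
      (ENNReal.ofReal (Λ ⟨h, hCc h hh⟩)
          ≤ ∫⁻ x, ENNReal.ofReal (h x) ∂μ + ENNReal.ofReal δ * μ T) := by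
    intro δ hδ
    set N : ℕ := ⌈h x₀ / δ⌉₊ with hN
    have hNδ : ∀ x, h x ≤ N * δ := by
      intro x
      calc h x ≤ h x₀ := hx₀ x
        _ = h x₀ / δ * δ := by field_simp
        _ ≤ N * δ := mul_le_mul_of_nonneg_right (Nat.le_ceil _) hδ.le
    -- the staircase pieces
    set g : ℕ → C(X, ℝ) := fun k =>
      ⟨fun x => min (max (h x - k * δ) 0) δ,
        ((h.continuous.sub continuous_const).max continuous_const).min continuous_const⟩
        with hgdef
    have hg_apply : ∀ k x, g k x = min (max (h x - k * δ) 0) δ := fun k x => rfl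
    have hg0 : ∀ k x, 0 ≤ g k x := fun k x => le_min (le_max_right _ _) hδ.le
    have hgδ : ∀ k x, g k x ≤ δ := fun k x => min_le_right _ _
    have hgzero : ∀ (k : ℕ) (x : X), h x ≤ (k:ℝ) * δ → g k x = 0 := by
      intro k x hx
      rw [hg_apply, max_eq_right (by linarith), min_eq_left hδ.le]
    have hsupp : ∀ k, Function.support (g k : X → ℝ) ⊆ {x | (k:ℝ) * δ ≤ h x} := by
      intro k x hx
      rcases le_or_gt ((k:ℝ) * δ) (h x) with hle | hlt
      · exact hle
      · exact absurd (hgzero k x hlt.le) hx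
    have hsupp' : ∀ k, Function.support (g k : X → ℝ) ⊆ Function.support (h : X → ℝ) := by
      intro k x hx
      intro hx0
      exact hx (hgzero k x (by rw [hx0]; positivity))
    have hgc : ∀ k, HasCompactSupport (g k : X → ℝ) := fun k => hh.mono (hsupp' k)
    have hTk_sub_T : ∀ k, tsupport (g k : X → ℝ) ⊆ T := fun k => closure_mono (hsupp' k)
    set Kk : ℕ → Set X := fun k => {x | (k:ℝ) * δ ≤ h x} with hKkdef
    have hKclosed : ∀ k, IsClosed (Kk k) := fun k =>
      isClosed_le continuous_const h.continuous
    have hKcpt : ∀ k, 1 ≤ k → IsCompact (Kk k) := by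
      intro k hk
      refine hTc.of_isClosed_subset (hKclosed k) ?_
      intro x hx
      have : (0:ℝ) < h x := by
        have h1 : (1:ℝ) ≤ (k:ℝ) := by exact_mod_cast hk
        have := hx
        simp only [hKkdef, mem_setOf_eq] at this
        nlinarith
      exact subset_closure (by simpa [Function.mem_support] using this.ne')
    have hTk_sub_K : ∀ k, tsupport (g k : X → ℝ) ⊆ Kk k := fun k =>
      closure_minimal (hsupp k) (hKclosed k)
    have hgK : ∀ k x, x ∈ Kk (k + 1) → g k x = δ := by
      intro k x hx
      simp only [hKkdef, mem_setOf_eq] at hx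
      push_cast at hx
      rw [hg_apply, max_eq_left (by linarith), min_eq_right (by linarith)]
    -- V-membership and values of Λ
    have gkV : ∀ k, g k ∈ V := fun k => hCc _ (hgc k)
    set gΛ : ℕ → ℝ := fun k => Λ ⟨g k, gkV k⟩ with hgΛ
    have hgΛ0 : ∀ k, 0 ≤ gΛ k := fun k => hΛ _ (hg0 k)
    have hsum : (⟨h, hCc h hh⟩ : V) = ∑ k ∈ Finset.range N, ⟨g k, gkV k⟩ := by
      apply Subtype.ext
      have hcoe : ((∑ k ∈ Finset.range N, (⟨g k, gkV k⟩ : V) : V) : C(X, ℝ))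
          = ∑ k ∈ Finset.range N, g k := by
        exact map_sum V.subtype _ _
      rw [hcoe]
      ext x
      rw [ContinuousMap.sum_apply]
      simp only [hg_apply]
      rw [sum_staircase hδ.le N (h0 x), min_eq_left (hNδ x)]
    have hΛsum : Λ ⟨h, hCc h hh⟩ = ∑ k ∈ Finset.range N, gΛ k := by
      rw [hsum, map_sum]
    -- Λ bounds
    have hlow : ∀ k, δ * lam V Λ (Kk (k+1)) ≤ gΛ k := by
      intro k
      have h0' : ∀ x, 0 ≤ ((δ⁻¹ • (⟨g k, gkV k⟩ : V) : V) : C(X, ℝ)) x := by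
        intro x
        simp only [Submodule.coe_smul, ContinuousMap.smul_apply, smul_eq_mul]
        exact mul_nonneg (inv_nonneg.2 hδ.le) (hg0 k x)
      have h1' : ∀ x ∈ Kk (k+1), 1 ≤ ((δ⁻¹ • (⟨g k, gkV k⟩ : V) : V) : C(X, ℝ)) x := by
        intro x hx
        simp only [Submodule.coe_smul, ContinuousMap.smul_apply, smul_eq_mul]
        rw [show ((⟨g k, gkV k⟩ : V) : C(X, ℝ)) x = g k x from rfl, hgK k x hx,
          inv_mul_cancel₀ hδ.ne']
      have hle := lam_le hΛ h0' h1'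
      rw [_root_.map_smul, smul_eq_mul] at hle
      calc δ * lam V Λ (Kk (k+1)) ≤ δ * (δ⁻¹ * gΛ k) :=
            mul_le_mul_of_nonneg_left hle hδ.le
        _ = gΛ k := by field_simp
    have hup : ∀ k, gΛ k ≤ δ * lam V Λ (tsupport (g k : X → ℝ)) := by
      intro k
      have hle : δ⁻¹ * gΛ k ≤ lam V Λ (tsupport (g k : X → ℝ)) := by
        refine le_lam hCc (hgc k) fun v hv0 hv1 => ?_
        have hmono : gΛ k ≤ Λ (δ • v) := by
          refine lam_mono_fn hΛ fun x => ?_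
          simp only [Submodule.coe_smul, ContinuousMap.smul_apply, smul_eq_mul]
          by_cases hx : x ∈ tsupport (g k : X → ℝ)
          · calc ((⟨g k, gkV k⟩ : V) : C(X, ℝ)) x = g k x := rfl
              _ ≤ δ := hgδ k x
              _ = δ * 1 := (mul_one δ).symm
              _ ≤ δ * (v : C(X, ℝ)) x := mul_le_mul_of_nonneg_left (hv1 x hx) hδ.le
          · calc ((⟨g k, gkV k⟩ : V) : C(X, ℝ)) x = g k x := rfl
              _ = 0 := image_eq_zero_of_notMem_tsupport hx
              _ ≤ δ * (v : C(X, ℝ)) x := mul_nonneg hδ.le (hv0 x)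
        rw [_root_.map_smul, smul_eq_mul] at hmono
        calc δ⁻¹ * gΛ k ≤ δ⁻¹ * (δ * Λ v) :=
              mul_le_mul_of_nonneg_left hmono (inv_nonneg.2 hδ.le)
          _ = Λ v := by field_simp
      calc gΛ k = δ * (δ⁻¹ * gΛ k) := by field_simp
        _ ≤ δ * lam V Λ (tsupport (g k : X → ℝ)) := mul_le_mul_of_nonneg_left hle hδ.le
    -- measure-theoretic bounds
    set ak : ℕ → ℝ≥0∞ := fun k => ∫⁻ x, ENNReal.ofReal (g k x) ∂μ with hak
    set bk : ℕ → ℝ≥0∞ := fun k => ENNReal.ofReal (gΛ k) with hbk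
    have hAsum : ∫⁻ x, ENNReal.ofReal (h x) ∂μ = ∑ k ∈ Finset.range N, ak k := by
      rw [← lintegral_finset_sum' _ fun k _ =>
        ((g k).continuous.measurable.ennreal_ofReal).aemeasurable]
      congr 1
      ext x
      rw [← ENNReal.ofReal_sum_of_nonneg fun k _ => hg0 k x]
      congr 1
      simp only [hg_apply]
      rw [sum_staircase hδ.le N (h0 x), min_eq_left (hNδ x)]
    have hBsum : ENNReal.ofReal (Λ ⟨h, hCc h hh⟩) = ∑ k ∈ Finset.range N, bk k := by
      rw [hΛsum, ENNReal.ofReal_sum_of_nonneg fun k _ => hgΛ0 k]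
    have haklow : ∀ k, ENNReal.ofReal δ * μ (Kk (k+1)) ≤ ak k := by
      intro k
      calc ENNReal.ofReal δ * μ (Kk (k+1))
          = ∫⁻ x, (Kk (k+1)).indicator (fun _ => ENNReal.ofReal δ) x ∂μ := by
            rw [lintegral_indicator_const (hKclosed (k+1)).measurableSet]
        _ ≤ ak k := by
            refine lintegral_mono fun x => ?_
            by_cases hx : x ∈ Kk (k+1)
            · rw [indicator_of_mem hx, hgK k x hx]
            · rw [indicator_of_notMem hx]; exact zero_le
    have hakup : ∀ k, ak k ≤ ENNReal.ofReal δ * μ (tsupport (g k : X → ℝ)) := by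
      intro k
      calc ak k ≤ ∫⁻ x, (tsupport (g k : X → ℝ)).indicator (fun _ => ENNReal.ofReal δ) x ∂μ := by
            refine lintegral_mono fun x => ?_
            by_cases hx : x ∈ tsupport (g k : X → ℝ)
            · rw [indicator_of_mem hx]; exact ENNReal.ofReal_le_ofReal (hgδ k x)
            · rw [indicator_of_notMem hx, image_eq_zero_of_notMem_tsupport hx,
                ENNReal.ofReal_zero]
        _ = ENNReal.ofReal δ * μ (tsupport (g k : X → ℝ)) :=
            lintegral_indicator_const (isClosed_tsupport _).measurableSet _
    have hbklow : ∀ k, ENNReal.ofReal δ * μ (Kk (k+1)) ≤ bk k := by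
      intro k
      have hcpt := hKcpt (k+1) (Nat.le_add_left 1 k)
      rw [hμdef, rMeasure_compacts hCc hΛ hcpt, ← ENNReal.ofReal_mul hδ.le]
      exact ENNReal.ofReal_le_ofReal (hlow k)
    have hbkup : ∀ k, bk k ≤ ENNReal.ofReal δ * μ (tsupport (g k : X → ℝ)) := by
      intro k
      rw [hμdef, rMeasure_compacts hCc hΛ (hgc k), ← ENNReal.ofReal_mul hδ.le]
      exact ENNReal.ofReal_le_ofReal (hup k)
    -- the symmetric combination step
    have main : ∀ a b : ℕ → ℝ≥0∞,
        (∀ k, ENNReal.ofReal δ * μ (Kk (k+1)) ≤ b k) →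
        (∀ k, a k ≤ ENNReal.ofReal δ * μ (tsupport (g k : X → ℝ))) →
        ∑ k ∈ Finset.range N, a k ≤ ∑ k ∈ Finset.range N, b k + ENNReal.ofReal δ * μ T := by
      intro a b hb ha'
      cases hNval : N with
      | zero => simp
      | succ m =>
        calc ∑ k ∈ Finset.range (m+1), a k
            ≤ ∑ k ∈ Finset.range (m+1), ENNReal.ofReal δ * μ (tsupport (g k : X → ℝ)) :=
              Finset.sum_le_sum fun k _ => ha' k
          _ = (∑ i ∈ Finset.range m, ENNReal.ofReal δ * μ (tsupport (g (i+1) : X → ℝ)))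
              + ENNReal.ofReal δ * μ (tsupport (g 0 : X → ℝ)) := Finset.sum_range_succ' _ m
          _ ≤ (∑ i ∈ Finset.range m, b i) + ENNReal.ofReal δ * μ T := by
              refine add_le_add (Finset.sum_le_sum fun i _ => ?_)
                (mul_le_mul_right (measure_mono (hTk_sub_T 0)) _)
              exact le_trans (mul_le_mul_right (measure_mono (hTk_sub_K (i+1))) _) (hb i)
          _ ≤ (∑ k ∈ Finset.range (m+1), b k) + ENNReal.ofReal δ * μ T :=
              add_le_add_left
                (Finset.sum_le_sum_of_subset (Finset.range_subset_range.2 (Nat.le_succ m))) _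
    constructor
    · rw [hAsum, hBsum]; exact main ak bk hbklow hakup
    · rw [hAsum, hBsum]; exact main bk ak haklow hbkup
  exact le_antisymm
    (ennreal_le_of_forall_pos hμT fun δ hδ => (key δ hδ).1)
    (ennreal_le_of_forall_pos hμT fun δ hδ => (key δ hδ).2)

end Core


section Radonify

variable [MeasurableSpace X] [BorelSpace X] (μ : Measure X)

variable (X) in
instance : Nonempty (Compacts X) := ⟨⊥⟩

/-- The inner regularization of a measure: `ν A = ⨆ {μ (A ∩ K) : K compact}`. -/
def radonify : Measure X :=
  Measure.ofMeasurable (fun A _ => ⨆ K : Compacts X, μ (A ∩ K))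
    (by simp)
    (by
      intro f hf hd
      have hAc : ∀ K : Compacts X, μ ((⋃ i, f i) ∩ K) = ∑' i, μ (f i ∩ K) := by
        intro K
        rw [Set.iUnion_inter]
        exact measure_iUnion (fun i j hij => (hd hij).mono inf_le_left inf_le_left)
          fun i => (hf i).inter K.2.isClosed.measurableSet
      simp only [hAc]
      refine le_antisymm (iSup_le fun K => ENNReal.tsum_le_tsum fun i => le_iSup
        (fun K : Compacts X => μ (f i ∩ K)) K) ?_
      rw [ENNReal.tsum_eq_iSup_sum]
      refine iSup_le fun s => ?_
      have hmono : ∀ i ∈ s, Monotone fun K : Compacts X => μ (f i ∩ K) :=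
        fun i _ K₁ K₂ hK => measure_mono (inter_subset_inter_right _ hK)
      rw [ENNReal.finsetSum_iSup_of_monotone fun i => ?_]
      · exact iSup_le fun K => le_iSup_of_le K (ENNReal.sum_le_tsum s)
      · exact fun K₁ K₂ hK => measure_mono (inter_subset_inter_right _ hK))

theorem radonify_apply {A : Set X} (hA : MeasurableSet A) :
    radonify μ A = ⨆ K : Compacts X, μ (A ∩ K) :=
  Measure.ofMeasurable_apply A hA

theorem radonify_compact {K : Set X} (hK : IsCompact K) : radonify μ K = μ K := by
  rw [radonify_apply μ hK.isClosed.measurableSet]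
  refine le_antisymm (iSup_le fun K' => measure_mono inter_subset_left) ?_
  exact le_iSup_of_le ⟨K, hK⟩ (le_of_eq (by simp))

theorem restrict_le_radonify {T : Set X} (hT : IsCompact T) :
    μ.restrict T ≤ radonify μ := by
  refine Measure.le_intro fun s hs _ => ?_
  rw [Measure.restrict_apply hs, radonify_apply μ hs]
  exact le_iSup_of_le ⟨T, hT⟩ le_rfl

theorem radonify_isFiniteMeasureOnCompacts [IsFiniteMeasureOnCompacts μ] :
    IsFiniteMeasureOnCompacts (radonify μ) := by
  constructor
  intro K hK
  rw [radonify_compact μ hK]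
  exact hK.measure_lt_top

theorem radonify_innerRegular [Measure.InnerRegularCompactLTTop μ]
    [IsFiniteMeasureOnCompacts μ] : (radonify μ).InnerRegular := by
  constructor
  intro A hA r hr
  rw [radonify_apply μ hA, lt_iSup_iff] at hr
  obtain ⟨K, hrK⟩ := hr
  have hfin : μ (A ∩ ↑K) ≠ ∞ :=
    ((measure_mono inter_subset_right).trans_lt K.2.measure_lt_top).ne
  obtain ⟨K', hK'sub, hK'c, hrK'⟩ :=
    Measure.InnerRegularCompactLTTop.innerRegular
      ⟨hA.inter K.2.isClosed.measurableSet, hfin⟩ r hrK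
  exact ⟨K', hK'sub.trans inter_subset_left, hK'c, by rwa [radonify_compact μ hK'c]⟩

theorem lintegral_radonify_le {f : X → ℝ≥0∞} (hf : Measurable f) {C : ℝ≥0∞}
    (h : ∀ K : Set X, IsCompact K → ∫⁻ x in K, f x ∂μ ≤ C) :
    ∫⁻ x, f x ∂(radonify μ) ≤ C := by
  rw [lintegral_eq_iSup_eapprox_lintegral hf]
  refine iSup_le fun n => ?_
  set s := SimpleFunc.eapprox f n with hs
  have h1 : s.lintegral (radonify μ)
      = ∑ y ∈ s.range, y * ⨆ K : Compacts X, μ (s ⁻¹' {y} ∩ K) := by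
    rw [SimpleFunc.lintegral]
    congr 1
    ext y
    rw [radonify_apply μ (s.measurableSet_preimage _)]
  rw [h1]
  have h2 : ∀ y ∈ s.range, y * (⨆ K : Compacts X, μ (s ⁻¹' {y} ∩ K))
      = ⨆ K : Compacts X, y * μ (s ⁻¹' {y} ∩ K) := fun y _ => by rw [ENNReal.mul_iSup]
  rw [Finset.sum_congr rfl h2, ENNReal.finsetSum_iSup_of_monotone fun y => ?_]
  · refine iSup_le fun K => ?_
    have h3 : ∑ y ∈ s.range, y * μ (s ⁻¹' {y} ∩ ↑K) = s.lintegral (μ.restrict K) := by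
      rw [SimpleFunc.lintegral]
      congr 1
      ext y
      rw [Measure.restrict_apply (s.measurableSet_preimage _)]
    rw [h3, ← SimpleFunc.lintegral_eq_lintegral]
    calc ∫⁻ x, s x ∂(μ.restrict K) ≤ ∫⁻ x, f x ∂(μ.restrict K) :=
          lintegral_mono fun a => by
            conv_rhs => rw [← SimpleFunc.iSup_eapprox_apply hf a]
            exact le_iSup (fun n => (SimpleFunc.eapprox f n) a) n
      _ ≤ C := h K.1 K.2
  · exact fun K₁ K₂ hK =>
      mul_le_mul_right (measure_mono (inter_subset_inter_right _ hK)) _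

end Radonify

end AdaptedRMK

end

open AdaptedRMK

/-- A Radon measure: finite on compact sets and inner regular with respect to compact sets. -/
def IsRadon {X : Type*} [TopologicalSpace X] [MeasurableSpace X] (μ : Measure X) : Prop :=
  IsFiniteMeasureOnCompacts μ ∧ μ.InnerRegular

/-- Integral representation of positive linear functionals on adapted spaces (Choquet). -/
theorem adapted_space_positive_functional_is_moment_functional
    {X : Type*} [TopologicalSpace X] [LocallyCompactSpace X] [T2Space X]
    [MeasurableSpace X] [BorelSpace X]
    (E : Submodule ℝ C(X, ℝ))
    -- (i)  E = E₊ - E₊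
    (hdecomp : ∀ f ∈ E, ∃ g ∈ E, ∃ h ∈ E,
      (∀ x, 0 ≤ g x) ∧ (∀ x, 0 ≤ h x) ∧ f = g - h)
    -- (ii) for each x ∈ X there is f ∈ E₊ with f(x) > 0
    (hpos : ∀ x : X, ∃ f ∈ E, (∀ y, 0 ≤ f y) ∧ 0 < f x)
    -- (iii) each f ∈ E₊ is dominated by some g ∈ E₊
    (hdom : ∀ f ∈ E, (∀ x, 0 ≤ f x) → ∃ g ∈ E, (∀ x, 0 ≤ g x) ∧
      ∀ ε : ℝ, 0 < ε → ∃ K : Set X, IsCompact K ∧ ∀ x ∉ K, |f x| ≤ ε * |g x|)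
    (L : E →ₗ[ℝ] ℝ) :
    (∀ f : E, (∀ x, 0 ≤ (f : C(X, ℝ)) x) → 0 ≤ L f) ↔
    (∃ μ : Measure X, IsRadon μ ∧
      ∀ f : E, Integrable (fun x => (f : C(X, ℝ)) x) μ ∧
        L f = ∫ x, (f : C(X, ℝ)) x ∂μ) := by
  constructor
  · intro hL
    classical
    -- the compactly supported continuous functions, as a submodule
    set Cc : Submodule ℝ C(X, ℝ) :=
      { carrier := {f : C(X, ℝ) | HasCompactSupport (f : X → ℝ)}
        add_mem' := fun hf hg => by
          simpa [ContinuousMap.coe_add] using hf.add hg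
        zero_mem' := by
          simp only [Set.mem_setOf_eq, ContinuousMap.coe_zero]
          exact HasCompactSupport.intro isCompact_empty (fun x _ => rfl)
        smul_mem' := fun c f hf => by
          show HasCompactSupport (c • (f : X → ℝ))
          exact hf.smul_left (f := fun _ => c) } with hCcdef
    set V : Submodule ℝ C(X, ℝ) := E ⊔ Cc with hVdef
    have hCc : ∀ f : C(X, ℝ), HasCompactSupport (f : X → ℝ) → f ∈ V :=
      fun f hf => Submodule.mem_sup_right hf
    have hEV : ∀ f : C(X, ℝ), f ∈ E → f ∈ V := fun f hf => Submodule.mem_sup_left hf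
    -- a nonnegative element of E which is ≥ 1 on a given compact set
    have hone : ∀ K : Set X, IsCompact K →
        ∃ g, ∃ hg : g ∈ E, (∀ x, 0 ≤ g x) ∧ ∀ x ∈ K, 1 ≤ g x := by
      intro K hK
      rcases K.eq_empty_or_nonempty with rfl | hKne
      · exact ⟨0, E.zero_mem, by simp, by simp⟩
      choose w hwE hw0 hwpos using hpos
      obtain ⟨b, hbK, hbfin, hbcov⟩ := hK.elim_finite_subcover_image
        (fun x (_ : x ∈ K) => isOpen_lt continuous_const (w x).continuous)
        (fun y hy => Set.mem_biUnion hy (hwpos y))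
      set g₀ : C(X, ℝ) := ∑ x ∈ hbfin.toFinset, w x with hg₀
      have hg₀E : g₀ ∈ E := Submodule.sum_mem E fun x _ => hwE x
      have hg₀app : ∀ y, g₀ y = ∑ x ∈ hbfin.toFinset, w x y := by
        intro y
        rw [hg₀, ContinuousMap.sum_apply]
      have hg₀0 : ∀ y, 0 ≤ g₀ y := by
        intro y
        rw [hg₀app]
        exact Finset.sum_nonneg fun x _ => hw0 x y
      have hg₀pos : ∀ y ∈ K, 0 < g₀ y := by
        intro y hy
        obtain ⟨x, hxb, hxy⟩ := Set.mem_iUnion₂.1 (hbcov hy)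
        rw [hg₀app]
        exact Finset.sum_pos' (fun x _ => hw0 x y) ⟨x, hbfin.mem_toFinset.2 hxb, hxy⟩
      obtain ⟨z, hzK, hz⟩ := hK.exists_isMinOn hKne g₀.continuous.continuousOn
      set m : ℝ := g₀ z with hm
      have hm0 : 0 < m := hg₀pos z hzK
      refine ⟨m⁻¹ • g₀, Submodule.smul_mem E _ hg₀E, fun x => ?_, fun x hx => ?_⟩
      · simp only [ContinuousMap.smul_apply, smul_eq_mul]
        exact mul_nonneg (inv_nonneg.2 hm0.le) (hg₀0 x)
      · simp only [ContinuousMap.smul_apply, smul_eq_mul]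
        rw [← inv_mul_cancel₀ hm0.ne']
        exact mul_le_mul_of_nonneg_left (hz hx) (inv_nonneg.2 hm0.le)
    -- the positivity cone in V
    set s : ConvexCone ℝ ↥V :=
      { carrier := {v : ↥V | ∀ x, 0 ≤ (v : C(X, ℝ)) x}
        smul_mem' := fun c hc v hv x => by
          simp only [Submodule.coe_smul, ContinuousMap.smul_apply, smul_eq_mul]
          exact mul_nonneg hc.le (hv x)
        add_mem' := fun u hu v hv x => by
          simp only [Submodule.coe_add, ContinuousMap.add_apply]
          exact add_nonneg (hu x) (hv x) } with hsdef
    -- L as a partial linear map on V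
    set j : (E.comap V.subtype) →ₗ[ℝ] ↥E :=
      { toFun := fun d => ⟨V.subtype d, d.2⟩
        map_add' := fun d e => rfl
        map_smul' := fun c d => rfl } with hjdef
    set pmap : (↥V) →ₗ.[ℝ] ℝ := ⟨E.comap V.subtype, L.comp j⟩ with hpmapdef
    have hnonneg : ∀ x : pmap.domain, (x : ↥V) ∈ s → 0 ≤ pmap x := by
      intro x hx
      exact hL (j x) hx
    have hdense : ∀ y : ↥V, ∃ x : pmap.domain, (x : ↥V) + y ∈ s := by
      intro y
      obtain ⟨e, heE, c, hcCc, hec⟩ := Submodule.mem_sup.1 y.2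
      obtain ⟨gd, hgdE, h', hh'E, hgd0, hh'0, hghd⟩ := hdecomp e heE
      have hcsupp : HasCompactSupport (c : X → ℝ) := hcCc
      obtain ⟨w, hwE, hw0, hw1⟩ := hone (tsupport (c : X → ℝ)) hcsupp
      -- a bound for -c
      obtain ⟨M, hM0, hMb⟩ : ∃ M : ℝ, 0 ≤ M ∧ ∀ x, -(c x) ≤ M * w x := by
        rcases (tsupport (c : X → ℝ)).eq_empty_or_nonempty with hempty | hne
        · refine ⟨0, le_rfl, fun x => ?_⟩
          have : c x = 0 := image_eq_zero_of_notMem_tsupport (by rw [hempty]; exact Set.notMem_empty x)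
          rw [this]
          simp
        · obtain ⟨z, hzK, hz⟩ := hcsupp.exists_isMaxOn hne
            (c.continuous.neg.continuousOn)
          refine ⟨max 0 (-(c z)), le_max_left _ _, fun x => ?_⟩
          by_cases hx : x ∈ tsupport (c : X → ℝ)
          · calc -(c x) ≤ -(c z) := hz hx
              _ ≤ max 0 (-(c z)) := le_max_right _ _
              _ = max 0 (-(c z)) * 1 := (mul_one _).symm
              _ ≤ max 0 (-(c z)) * w x :=
                mul_le_mul_of_nonneg_left (hw1 x hx) (le_max_left _ _)
          · rw [image_eq_zero_of_notMem_tsupport hx]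
            simp only [neg_zero]
            exact mul_nonneg (le_max_left _ _) (hw0 x)
      set xE : C(X, ℝ) := h' + M • w with hxE
      have hxEE : xE ∈ E := E.add_mem hh'E (E.smul_mem M hwE)
      refine ⟨⟨⟨xE, hEV xE hxEE⟩, hxEE⟩, fun pt => ?_⟩
      simp only [Submodule.coe_add, ContinuousMap.add_apply]
      have hy : (y : C(X, ℝ)) pt = e pt + c pt := by rw [← hec]; rfl
      have he : e pt = gd pt - h' pt := by rw [hghd]; rfl
      have hxEpt : xE pt = h' pt + M * w pt := by
        rw [hxE]
        simp [ContinuousMap.add_apply, ContinuousMap.smul_apply]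
      rw [hy, hxEpt, he]
      have h1 := hgd0 pt
      have h2 := hMb pt
      linarith
    obtain ⟨Λ, hΛext, hΛpos⟩ := riesz_extension (s.toPointedCone (fun x => le_rfl)) pmap hnonneg hdense
    have hΛ : ∀ v : ↥V, (∀ x, 0 ≤ (v : C(X, ℝ)) x) → 0 ≤ Λ v := fun v hv => hΛpos v hv
    have hΛL : ∀ (f : C(X, ℝ)) (hf : f ∈ E), Λ ⟨f, hEV f hf⟩ = L ⟨f, hf⟩ := by
      intro f hf
      exact hΛext ⟨⟨f, hEV f hf⟩, hf⟩
    -- the measures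
    set μ0 : Measure X := rMeasure V Λ hCc hΛ with hμ0def
    haveI hreg : μ0.Regular := rMeasure_regular hCc hΛ
    set ν : Measure X := radonify μ0 with hνdef
    have hν1 : IsFiniteMeasureOnCompacts ν := radonify_isFiniteMeasureOnCompacts μ0
    have hν2 : ν.InnerRegular := radonify_innerRegular μ0
    -- the lintegral identity for nonnegative elements of E
    have main_nonneg : ∀ (f : C(X, ℝ)) (hfE : f ∈ E), (∀ x, 0 ≤ f x) →
        ∫⁻ x, ENNReal.ofReal (f x) ∂ν = ENNReal.ofReal (L ⟨f, hfE⟩) := by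
      intro f hfE hf0
      have upper : ∀ K : Set X, IsCompact K →
          ∫⁻ x in K, ENNReal.ofReal (f x) ∂μ0 ≤ ENNReal.ofReal (L ⟨f, hfE⟩) := by
        intro K hK
        obtain ⟨φ, hφ1, hφ0, hφc, hφ01⟩ :=
          exists_continuous_one_zero_of_isCompact hK isClosed_empty (disjoint_empty K)
        have hfφc : HasCompactSupport ((f * φ : C(X, ℝ)) : X → ℝ) := by
          rw [ContinuousMap.coe_mul]; exact hφc.mul_left
        have hfφ0 : ∀ x, 0 ≤ (f * φ) x := fun x => mul_nonneg (hf0 x) (hφ01 x).1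
        have hint := rMeasure_lintegral hCc hΛ (f * φ) hfφc hfφ0
        calc ∫⁻ x in K, ENNReal.ofReal (f x) ∂μ0
            = ∫⁻ x in K, ENNReal.ofReal ((f * φ) x) ∂μ0 := by
              refine setLIntegral_congr_fun hK.isClosed.measurableSet
                (fun x hx => ?_)
              rw [ContinuousMap.mul_apply, hφ1 hx, Pi.one_apply, mul_one]
          _ ≤ ∫⁻ x, ENNReal.ofReal ((f * φ) x) ∂μ0 := setLIntegral_le_lintegral _ _
          _ = ENNReal.ofReal (Λ ⟨f * φ, hCc _ hfφc⟩) := hint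
          _ ≤ ENNReal.ofReal (L ⟨f, hfE⟩) := by
              refine ENNReal.ofReal_le_ofReal ?_
              rw [← hΛL f hfE]
              refine lam_mono_fn hΛ fun x => ?_
              calc ((⟨f * φ, hCc _ hfφc⟩ : ↥V) : C(X, ℝ)) x = f x * φ x := rfl
                _ ≤ f x * 1 := mul_le_mul_of_nonneg_left (hφ01 x).2 (hf0 x)
                _ = f x := mul_one _
      have hub : ∫⁻ x, ENNReal.ofReal (f x) ∂ν ≤ ENNReal.ofReal (L ⟨f, hfE⟩) :=
        lintegral_radonify_le μ0 (f.continuous.measurable.ennreal_ofReal) upper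
      refine le_antisymm hub ?_
      obtain ⟨gd, hgdE, hgd0, hgdprop⟩ := hdom f hfE hf0
      refine ennreal_le_of_forall_pos (C := ENNReal.ofReal (L ⟨gd, hgdE⟩))
        ENNReal.ofReal_ne_top fun ε hε => ?_
      obtain ⟨K, hKc, hKb⟩ := hgdprop ε hε
      obtain ⟨φ, hφ1, hφ0, hφc, hφ01⟩ :=
        exists_continuous_one_zero_of_isCompact hKc isClosed_empty (disjoint_empty K)
      have hfφc : HasCompactSupport ((f * φ : C(X, ℝ)) : X → ℝ) := by
        rw [ContinuousMap.coe_mul]; exact hφc.mul_left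
      have hfφ0 : ∀ x, 0 ≤ (f * φ) x := fun x => mul_nonneg (hf0 x) (hφ01 x).1
      have hfφle : ∀ x, (f * φ) x ≤ f x := fun x => by
        calc (f * φ) x = f x * φ x := rfl
          _ ≤ f x * 1 := mul_le_mul_of_nonneg_left (hφ01 x).2 (hf0 x)
          _ = f x := mul_one _
      have hptwise : ∀ x, f x ≤ (f * φ) x + ε * gd x := by
        intro x
        by_cases hx : x ∈ K
        · have : (f * φ) x = f x := by
            rw [ContinuousMap.mul_apply, hφ1 hx, Pi.one_apply, mul_one]
          rw [this]
          have := mul_nonneg hε.le (hgd0 x)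
          linarith
        · have habs := hKb x hx
          rw [abs_of_nonneg (hf0 x), abs_of_nonneg (hgd0 x)] at habs
          have : 0 ≤ (f * φ) x := hfφ0 x
          linarith
      have hΛle : L ⟨f, hfE⟩ ≤ Λ ⟨f * φ, hCc _ hfφc⟩ + ε * L ⟨gd, hgdE⟩ := by
        have hm := lam_mono_fn (Λ := Λ) hΛ
          (v := ⟨f, hEV f hfE⟩)
          (w := ⟨f * φ, hCc _ hfφc⟩ + ε • ⟨gd, hEV gd hgdE⟩)
          (by
            intro x
            simp only [Submodule.coe_add, Submodule.coe_smul, ContinuousMap.add_apply,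
              ContinuousMap.smul_apply, smul_eq_mul]
            exact hptwise x)
        rw [map_add, _root_.map_smul, smul_eq_mul, hΛL f hfE, hΛL gd hgdE] at hm
        exact hm
      have hint := rMeasure_lintegral hCc hΛ (f * φ) hfφc hfφ0
      have h1 : ENNReal.ofReal (Λ ⟨f * φ, hCc _ hfφc⟩) ≤ ∫⁻ x, ENNReal.ofReal (f x) ∂ν := by
        rw [← hint]
        set Tφ := tsupport ((f * φ : C(X, ℝ)) : X → ℝ) with hTφdef
        have hTφ : IsCompact Tφ := hfφc
        have heq : ∫⁻ x, ENNReal.ofReal ((f * φ) x) ∂μ0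
            = ∫⁻ x in Tφ, ENNReal.ofReal ((f * φ) x) ∂μ0 := by
          rw [← lintegral_indicator (isClosed_tsupport _).measurableSet]
          congr 1
          ext x
          by_cases hx : x ∈ Tφ
          · rw [Set.indicator_of_mem hx]
          · rw [Set.indicator_of_notMem hx, image_eq_zero_of_notMem_tsupport hx,
              ENNReal.ofReal_zero]
        rw [heq]
        calc ∫⁻ x in Tφ, ENNReal.ofReal ((f * φ) x) ∂μ0
            ≤ ∫⁻ x, ENNReal.ofReal ((f * φ) x) ∂ν :=
              lintegral_mono' (restrict_le_radonify μ0 hTφ) le_rfl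
          _ ≤ ∫⁻ x, ENNReal.ofReal (f x) ∂ν :=
              lintegral_mono fun x => ENNReal.ofReal_le_ofReal (hfφle x)
      calc ENNReal.ofReal (L ⟨f, hfE⟩)
          ≤ ENNReal.ofReal (Λ ⟨f * φ, hCc _ hfφc⟩ + ε * L ⟨gd, hgdE⟩) :=
            ENNReal.ofReal_le_ofReal hΛle
        _ ≤ ENNReal.ofReal (Λ ⟨f * φ, hCc _ hfφc⟩) + ENNReal.ofReal (ε * L ⟨gd, hgdE⟩) :=
            ENNReal.ofReal_add_le
        _ ≤ (∫⁻ x, ENNReal.ofReal (f x) ∂ν) + ENNReal.ofReal ε * ENNReal.ofReal (L ⟨gd, hgdE⟩) :=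
            add_le_add h1 (le_of_eq (ENNReal.ofReal_mul hε.le))
    -- nonnegative elements are integrable with the right integral
    have hnn : ∀ (u : C(X, ℝ)) (huE : u ∈ E), (∀ x, 0 ≤ u x) →
        Integrable (fun x => u x) ν ∧ ∫ x, u x ∂ν = L ⟨u, huE⟩ := by
      intro u huE hu0
      have hlint := main_nonneg u huE hu0
      have hmeas : AEStronglyMeasurable (fun x => u x) ν :=
        u.continuous.aestronglyMeasurable
      have hnorm : ∀ x, (‖u x‖₊ : ℝ≥0∞) = ENNReal.ofReal (u x) := by
        intro x
        rw [← enorm_eq_nnnorm, ← ofReal_norm, Real.norm_of_nonneg (hu0 x)]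
      have hInt : Integrable (fun x => u x) ν := by
        refine ⟨hmeas, ?_⟩
        rw [hasFiniteIntegral_def]
        calc ∫⁻ x, (‖u x‖₊ : ℝ≥0∞) ∂ν = ∫⁻ x, ENNReal.ofReal (u x) ∂ν := by
              congr 1; ext x; exact hnorm x
          _ = ENNReal.ofReal (L ⟨u, huE⟩) := hlint
          _ < ∞ := ENNReal.ofReal_lt_top
      have hIntEq : ∫ x, u x ∂ν = (∫⁻ x, ENNReal.ofReal (u x) ∂ν).toReal :=
        integral_eq_lintegral_of_nonneg_ae (Filter.Eventually.of_forall hu0) hmeas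
      rw [hlint, ENNReal.toReal_ofReal (hL ⟨u, huE⟩ hu0)] at hIntEq
      exact ⟨hInt, hIntEq⟩
    refine ⟨ν, ⟨hν1, hν2⟩, fun f => ?_⟩
    obtain ⟨gd, hgdE, h', hh'E, hgd0, hh'0, heq⟩ := hdecomp (f : C(X, ℝ)) f.2
    obtain ⟨hIg, hEg⟩ := hnn gd hgdE hgd0
    obtain ⟨hIh, hEh⟩ := hnn h' hh'E hh'0
    have hfun : (fun x => (f : C(X, ℝ)) x) = fun x => gd x - h' x := by
      funext x
      rw [heq, ContinuousMap.sub_apply]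
    constructor
    · rw [hfun]; exact hIg.sub hIh
    · have hfsub : f = (⟨gd, hgdE⟩ : ↥E) - ⟨h', hh'E⟩ := Subtype.ext (by rw [heq]; rfl)
      calc L f = L ⟨gd, hgdE⟩ - L ⟨h', hh'E⟩ := by rw [hfsub, map_sub]
        _ = (∫ x, gd x ∂ν) - ∫ x, h' x ∂ν := by rw [hEg, hEh]
        _ = ∫ x, (gd x - h' x) ∂ν := (integral_sub hIg hIh).symm
        _ = ∫ x, (f : C(X, ℝ)) x ∂ν := by rw [hfun]
  · rintro ⟨μ, _, hrep⟩ f hf0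
    rw [(hrep f).2]
    exact integral_nonneg hf0
end

section
/- Let p ∈ ℝ[x] be a real polynomial in one variable and let a, b ∈ ℝ with a < b. Then: (i) p(x) ≥ 0 for all x ∈ ℝ if and only if p is a sum of squares in ℝ[x]; (ii) p(x) ≥ 0 for all x ∈ [0,+∞) if and only if p = f + x·g for some sums of squares f, g in ℝ[x]; (iii) p(x) ≥ 0 for all x ∈ [a,b] if and only if p = f + (b−x)(x−a)·g for some sums of squares f, g in ℝ[x]. -/
open Polynomial Set Filter Topology

/-- A sum of squares in `ℝ[x]`. -/
def IsSOS (p : Polynomial ℝ) : Prop :=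
  ∃ (n : ℕ) (q : Fin n → Polynomial ℝ), p = ∑ i, (q i) ^ 2


lemma sos_zero : IsSOS 0 := ⟨0, ![], by simp⟩

lemma sos_add {p q : ℝ[X]} (hp : IsSOS p) (hq : IsSOS q) : IsSOS (p + q) := by
  obtain ⟨n, u, rfl⟩ := hp
  obtain ⟨m, v, rfl⟩ := hq
  exact ⟨n + m, Fin.append u v, by rw [Fin.sum_univ_add]; simp [Fin.append]⟩

lemma sos_sq (q : ℝ[X]) : IsSOS (q ^ 2) := ⟨1, ![q], by simp⟩

lemma sos_sq_mul (q : ℝ[X]) {p : ℝ[X]} (hp : IsSOS p) : IsSOS (q ^ 2 * p) := by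
  obtain ⟨n, u, rfl⟩ := hp
  exact ⟨n, fun i => q * u i, by rw [Finset.mul_sum]; simp [mul_pow]⟩

lemma sos_const {m : ℝ} (hm : 0 ≤ m) : IsSOS (C m) := by
  have : (C (Real.sqrt m)) ^ 2 = C m := by
    rw [← C_pow, sq, Real.mul_self_sqrt hm]
  exact this ▸ sos_sq _

lemma sos_const_mul {m : ℝ} (hm : 0 ≤ m) {p : ℝ[X]} (hp : IsSOS p) : IsSOS (C m * p) := by
  have : (C (Real.sqrt m)) ^ 2 = C m := by rw [← C_pow, sq, Real.mul_self_sqrt hm]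
  exact this ▸ sos_sq_mul _ hp

lemma sos_eval_nonneg {p : ℝ[X]} (hp : IsSOS p) (x : ℝ) : 0 ≤ p.eval x := by
  obtain ⟨n, u, rfl⟩ := hp
  simp only [eval_finset_sum, eval_pow]
  exact Finset.sum_nonneg fun i _ => sq_nonneg _

/-- minimum attainment on a closed set where p is nonneg -/
lemma exists_min_on {S : Set ℝ} (hS : IsClosed S) {x₀ : ℝ} (hx₀ : x₀ ∈ S) {p : ℝ[X]}
    (hp : ∀ x ∈ S, 0 ≤ p.eval x) : ∃ c ∈ S, ∀ x ∈ S, p.eval c ≤ p.eval x := by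
  by_cases hdeg : 0 < p.degree
  · have htend : Tendsto (fun x : ℝ => ‖p.eval x‖) (cocompact ℝ) atTop :=
      p.tendsto_norm_atTop hdeg tendsto_norm_cocompact_atTop
    obtain ⟨K, hK, hKb⟩ := (hasBasis_cocompact.tendsto_iff atTop_basis).mp htend
      (p.eval x₀) trivial
    have hcpt : IsCompact ((S ∩ K) ∪ {x₀}) := by
      refine ((hK.inter_left ?_).union isCompact_singleton)
      exact hS
    have hne : (((S ∩ K) ∪ {x₀})).Nonempty := ⟨x₀, Or.inr rfl⟩
    obtain ⟨c, hc, hcmin⟩ := hcpt.exists_isMinOn hne p.continuous.continuousOn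
    have hcS : c ∈ S := by rcases hc with ⟨h, _⟩ | h; · exact h
                           · exact (mem_singleton_iff.mp h) ▸ hx₀
    refine ⟨c, hcS, fun x hx => ?_⟩
    by_cases hxK : x ∈ K
    · exact hcmin (Or.inl ⟨hx, hxK⟩)
    · have h1 : p.eval x₀ ≤ ‖p.eval x‖ := hKb x hxK
      have h2 : ‖p.eval x‖ = p.eval x := Real.norm_of_nonneg (hp x hx)
      calc p.eval c ≤ p.eval x₀ := hcmin (Or.inr rfl)
        _ ≤ p.eval x := h2 ▸ h1
  · refine ⟨x₀, hx₀, fun x hx => ?_⟩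
    rw [eq_C_of_degree_le_zero (le_of_not_gt hdeg)]; simp


lemma nonneg_at_of_right {s : ℝ[X]} {c v : ℝ} (hcv : c < v)
    (h : ∀ x ∈ Ioc c v, 0 ≤ s.eval x) : 0 ≤ s.eval c := by
  have ht : Tendsto (fun x => s.eval x) (𝓝[>] c) (𝓝 (s.eval c)) :=
    (s.continuous.tendsto c).mono_left nhdsWithin_le_nhds
  refine ge_of_tendsto ht ?_
  filter_upwards [Ioc_mem_nhdsGT_of_mem ⟨le_refl c, hcv⟩] with x hx using h x hx

lemma nonneg_at_of_left {s : ℝ[X]} {u c : ℝ} (huc : u < c)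
    (h : ∀ x ∈ Ico u c, 0 ≤ s.eval x) : 0 ≤ s.eval c := by
  have ht : Tendsto (fun x => s.eval x) (𝓝[<] c) (𝓝 (s.eval c)) :=
    (s.continuous.tendsto c).mono_left nhdsWithin_le_nhds
  refine ge_of_tendsto ht ?_
  filter_upwards [Ico_mem_nhdsLT_of_mem ⟨huc, le_refl c⟩] with x hx using h x hx

lemma double_root {q : ℝ[X]} {c : ℝ} (h0 : q.eval c = 0) (h1 : q.derivative.eval c = 0) :
    ∃ s, q = (X - C c) ^ 2 * s := by
  obtain ⟨r, hr⟩ := (dvd_iff_isRoot.mpr h0)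
  have hrc : r.eval c = 0 := by
    have := congrArg (fun p => Polynomial.eval c (Polynomial.derivative p)) hr
    simp only [derivative_mul, derivative_sub, derivative_X, derivative_C, sub_zero, one_mul,
      eval_add, eval_mul, eval_sub, eval_X, eval_C, sub_self, zero_mul, add_zero, mul_zero,
      zero_add] at this
    simpa [h1] using this.symm
  obtain ⟨s, hs⟩ := (dvd_iff_isRoot.mpr hrc)
  exact ⟨s, by rw [hr, hs]; ring⟩

lemma deriv_zero_of_min_mem {q : ℝ[X]} {S : Set ℝ} {c : ℝ} (hS : S ∈ 𝓝 c)
    (hmin : ∀ x ∈ S, q.eval c ≤ q.eval x) : q.derivative.eval c = 0 := by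
  have hloc : IsLocalMin (fun x => q.eval x) c := by
    filter_upwards [hS] with x hx using hmin x hx
  rw [← Polynomial.deriv]
  exact hloc.deriv_eq_zero

lemma icc_rep (a b : ℝ) (hab : a < b) :
    ∀ n (p : ℝ[X]), p.natDegree ≤ n → (∀ x ∈ Icc a b, 0 ≤ p.eval x) →
    ∃ f g, IsSOS f ∧ IsSOS g ∧ p = f + (C b - X) * (X - C a) * g := by
  intro n
  induction n with
  | zero =>
    intro p hdeg hnn
    obtain ⟨v, rfl⟩ := natDegree_eq_zero.mp (Nat.le_zero.mp hdeg)
    have hv : 0 ≤ v := by simpa using hnn a ⟨le_refl a, hab.le⟩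
    exact ⟨C v, 0, sos_const hv, sos_zero, by ring⟩
  | succ n ih =>
    intro p hdeg hnn
    obtain ⟨c, hc, hmin⟩ := exists_min_on isClosed_Icc ⟨le_refl a, hab.le⟩ hnn
    set m := p.eval c with hm
    have hm0 : 0 ≤ m := hnn c hc
    set q := p - C m with hqdef
    have hqnn : ∀ x ∈ Icc a b, 0 ≤ q.eval x := by
      intro x hx; simp only [hqdef, eval_sub, eval_C, sub_nonneg]; exact hmin x hx
    have hqc : q.eval c = 0 := by simp [hqdef, hm]
    by_cases hq0 : q = 0
    · refine ⟨C m, 0, sos_const hm0, sos_zero, ?_⟩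
      have h2 : p - C m = 0 := by rw [← hqdef]; exact hq0
      rw [sub_eq_zero.mp h2]; ring
    have hqdeg : q.natDegree ≤ n + 1 := by
      rw [hqdef, natDegree_sub_C]; exact hdeg
    have ht0 : (0:ℝ) < (b - a)⁻¹ := inv_pos.mpr (by linarith)
    set t := (b - a)⁻¹ with htdef
    have h1 : C t * (C b - C a) = 1 := by
      rw [← C_sub, ← C_mul, inv_mul_cancel₀ (by linarith : b - a ≠ 0), C_1]
    rcases eq_or_lt_of_le hc.1 with hca | hca
    · -- c = a
      obtain ⟨r, hr⟩ := dvd_iff_isRoot.mpr (show q.IsRoot a by rw [IsRoot.def, hca]; exact hqc)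
      have hrnn : ∀ x ∈ Icc a b, 0 ≤ r.eval x := by
        have hIoc : ∀ x ∈ Ioc a b, 0 ≤ r.eval x := by
          intro x hx
          have h2 : 0 ≤ (x - a) * r.eval x := by
            have := hqnn x ⟨hx.1.le, hx.2⟩; rw [hr] at this; simpa using this
          nlinarith [hx.1]
        intro x hx
        rcases eq_or_lt_of_le hx.1 with h | h
        · rw [← h]; exact nonneg_at_of_right hab hIoc
        · exact hIoc x ⟨h, hx.2⟩
      have hr0 : r ≠ 0 := by rintro rfl; simp at hr; exact hq0 hr
      have hrdeg : r.natDegree ≤ n := by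
        have := natDegree_mul (X_sub_C_ne_zero a) hr0
        rw [← hr, natDegree_X_sub_C] at this
        omega
      obtain ⟨f, g, hf, hg, hfg⟩ := ih r hrdeg hrnn
      have hkey : C t * ((X - C a) ^ 2 + (C b - X) * (X - C a)) = X - C a := by
        linear_combination (X - C a) * h1
      refine ⟨C m + C t * ((X - C a) ^ 2 * f) + C t * (((C b - X) * (X - C a)) ^ 2 * g),
        C t * f + C t * ((X - C a) ^ 2 * g), ?_, ?_, ?_⟩
      · exact sos_add (sos_add (sos_const hm0) (sos_const_mul ht0.le (sos_sq_mul _ hf)))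
          (sos_const_mul ht0.le (sos_sq_mul _ hg))
      · exact sos_add (sos_const_mul ht0.le hf) (sos_const_mul ht0.le (sos_sq_mul _ hg))
      · have hp : p = C m + (X - C a) * r := by rw [← hr]; simp [hqdef]
        rw [hp, hfg]
        linear_combination (-(f + (C b - X) * (X - C a) * g)) * hkey
    rcases eq_or_lt_of_le hc.2 with hcb | hcb
    · -- c = b
      obtain ⟨r₀, hr₀⟩ := dvd_iff_isRoot.mpr (show q.IsRoot b by rw [IsRoot.def, ← hcb]; exact hqc)
      set r := -r₀ with hrdef
      have hr : q = (C b - X) * r := by rw [hr₀, hrdef]; ring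
      have hrnn : ∀ x ∈ Icc a b, 0 ≤ r.eval x := by
        have hIco : ∀ x ∈ Ico a b, 0 ≤ r.eval x := by
          intro x hx
          have h2 : 0 ≤ (b - x) * r.eval x := by
            have := hqnn x ⟨hx.1, hx.2.le⟩; rw [hr] at this; simpa using this
          nlinarith [hx.2]
        intro x hx
        rcases eq_or_lt_of_le hx.2 with h | h
        · rw [h]; exact nonneg_at_of_left hab hIco
        · exact hIco x ⟨hx.1, h⟩
      have hr0 : r ≠ 0 := by rintro h; rw [h, mul_zero] at hr; exact hq0 hr
      have hrdeg : r.natDegree ≤ n := by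
        have hb0 : (C b - X : ℝ[X]) ≠ 0 := by
          intro h
          have := congrArg (fun p => p.coeff 1) h
          simp [coeff_sub] at this
        have := natDegree_mul hb0 hr0
        have hdb : (C b - X : ℝ[X]).natDegree = 1 := by
          have : (C b - X : ℝ[X]) = -(X - C b) := by ring
          rw [this, natDegree_neg, natDegree_X_sub_C]
        rw [← hr, hdb] at this
        omega
      obtain ⟨f, g, hf, hg, hfg⟩ := ih r hrdeg hrnn
      have hkey : C t * ((C b - X) ^ 2 + (C b - X) * (X - C a)) = C b - X := by
        linear_combination (C b - X) * h1
      refine ⟨C m + C t * ((C b - X) ^ 2 * f) + C t * (((C b - X) * (X - C a)) ^ 2 * g),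
        C t * f + C t * ((C b - X) ^ 2 * g), ?_, ?_, ?_⟩
      · exact sos_add (sos_add (sos_const hm0) (sos_const_mul ht0.le (sos_sq_mul _ hf)))
          (sos_const_mul ht0.le (sos_sq_mul _ hg))
      · exact sos_add (sos_const_mul ht0.le hf) (sos_const_mul ht0.le (sos_sq_mul _ hg))
      · have hp : p = C m + (C b - X) * r := by rw [← hr]; simp [hqdef]
        rw [hp, hfg]
        linear_combination (-(f + (C b - X) * (X - C a) * g)) * hkey
    · -- interior
      have hder : q.derivative.eval c = 0 := by
        refine deriv_zero_of_min_mem (Icc_mem_nhds hca hcb) ?_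
        intro x hx
        have := hqnn x hx
        rw [hqc]; exact this
      obtain ⟨s, hs⟩ := double_root hqc hder
      have hsnn : ∀ x ∈ Icc a b, 0 ≤ s.eval x := by
        have hIoc : ∀ x ∈ Ioc c b, 0 ≤ s.eval x := by
          intro x hx
          have h2 : 0 ≤ (x - c) ^ 2 * s.eval x := by
            have := hqnn x ⟨hca.le.trans hx.1.le, hx.2⟩; rw [hs] at this; simpa using this
          have h3 : 0 < (x - c) ^ 2 :=
            lt_of_le_of_ne (sq_nonneg _) (Ne.symm (pow_ne_zero 2 (sub_ne_zero.mpr hx.1.ne')))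
          nlinarith
        intro x hx
        rcases eq_or_ne x c with h | h
        · rw [h]; exact nonneg_at_of_right hcb hIoc
        · have h2 : 0 ≤ (x - c) ^ 2 * s.eval x := by
            have := hqnn x hx; rw [hs] at this; simpa using this
          have h3 : 0 < (x - c) ^ 2 :=
            lt_of_le_of_ne (sq_nonneg _) (Ne.symm (pow_ne_zero 2 (sub_ne_zero.mpr h)))
          nlinarith
      have hs0 : s ≠ 0 := by rintro rfl; rw [mul_zero] at hs; exact hq0 hs
      have hsdeg : s.natDegree ≤ n := by
        have := natDegree_mul (pow_ne_zero 2 (X_sub_C_ne_zero c)) hs0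
        rw [← hs, natDegree_pow, natDegree_X_sub_C] at this
        omega
      obtain ⟨f, g, hf, hg, hfg⟩ := ih s hsdeg hsnn
      refine ⟨C m + (X - C c) ^ 2 * f, (X - C c) ^ 2 * g, ?_, sos_sq_mul _ hg, ?_⟩
      · exact sos_add (sos_const hm0) (sos_sq_mul _ hf)
      · have hp : p = C m + (X - C c) ^ 2 * s := by rw [← hs]; simp [hqdef]
        rw [hp, hfg]; ring
lemma univ_rep : ∀ n (p : ℝ[X]), p.natDegree ≤ n → (∀ x : ℝ, 0 ≤ p.eval x) → IsSOS p := by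
  intro n
  induction n with
  | zero =>
    intro p hdeg hnn
    obtain ⟨v, rfl⟩ := natDegree_eq_zero.mp (Nat.le_zero.mp hdeg)
    exact sos_const (by simpa using hnn 0)
  | succ n ih =>
    intro p hdeg hnn
    obtain ⟨c, -, hmin⟩ := exists_min_on isClosed_univ (mem_univ (0:ℝ))
      (fun x _ => hnn x)
    set m := p.eval c with hm
    have hm0 : 0 ≤ m := hnn c
    set q := p - C m with hqdef
    have hqnn : ∀ x : ℝ, 0 ≤ q.eval x := by
      intro x; simp only [hqdef, eval_sub, eval_C, sub_nonneg]; exact hmin x (mem_univ x)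
    have hqc : q.eval c = 0 := by simp [hqdef, hm]
    by_cases hq0 : q = 0
    · have h2 : p - C m = 0 := by rw [← hqdef]; exact hq0
      rw [sub_eq_zero.mp h2]; exact sos_const hm0
    have hder : q.derivative.eval c = 0 :=
      deriv_zero_of_min_mem (univ_mem) (fun x _ => hqc ▸ hqnn x)
    obtain ⟨s, hs⟩ := double_root hqc hder
    have hsnn : ∀ x : ℝ, 0 ≤ s.eval x := by
      have hIoc : ∀ x ∈ Ioc c (c + 1), 0 ≤ s.eval x := by
        intro x hx
        have h2 : 0 ≤ (x - c) ^ 2 * s.eval x := by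
          have := hqnn x; rw [hs] at this; simpa using this
        have h3 : 0 < (x - c) ^ 2 :=
          lt_of_le_of_ne (sq_nonneg _) (Ne.symm (pow_ne_zero 2 (sub_ne_zero.mpr hx.1.ne')))
        nlinarith
      intro x
      rcases eq_or_ne x c with h | h
      · rw [h]; exact nonneg_at_of_right (by linarith) hIoc
      · have h2 : 0 ≤ (x - c) ^ 2 * s.eval x := by
          have := hqnn x; rw [hs] at this; simpa using this
        have h3 : 0 < (x - c) ^ 2 :=
          lt_of_le_of_ne (sq_nonneg _) (Ne.symm (pow_ne_zero 2 (sub_ne_zero.mpr h)))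
        nlinarith
    have hs0 : s ≠ 0 := by rintro rfl; rw [mul_zero] at hs; exact hq0 hs
    have hsdeg : s.natDegree ≤ n := by
      have h4 := natDegree_mul (pow_ne_zero 2 (X_sub_C_ne_zero c)) hs0
      have hqdeg : q.natDegree ≤ n + 1 := by rw [hqdef, natDegree_sub_C]; exact hdeg
      rw [← hs, natDegree_pow, natDegree_X_sub_C] at h4
      omega
    have hssos := ih s hsdeg hsnn
    have hp : p = C m + (X - C c) ^ 2 * s := by rw [← hs]; simp [hqdef]
    rw [hp]
    exact sos_add (sos_const hm0) (sos_sq_mul _ hssos)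

lemma ici_rep : ∀ n (p : ℝ[X]), p.natDegree ≤ n → (∀ x : ℝ, 0 ≤ x → 0 ≤ p.eval x) →
    ∃ f g, IsSOS f ∧ IsSOS g ∧ p = f + X * g := by
  intro n
  induction n with
  | zero =>
    intro p hdeg hnn
    obtain ⟨v, rfl⟩ := natDegree_eq_zero.mp (Nat.le_zero.mp hdeg)
    exact ⟨C v, 0, sos_const (by simpa using hnn 0 le_rfl), sos_zero, by ring⟩
  | succ n ih =>
    intro p hdeg hnn
    obtain ⟨c, hc, hmin⟩ := exists_min_on isClosed_Ici (self_mem_Ici (a := (0:ℝ)))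
      (fun x hx => hnn x hx)
    set m := p.eval c with hm
    have hm0 : 0 ≤ m := hnn c hc
    set q := p - C m with hqdef
    have hqnn : ∀ x : ℝ, 0 ≤ x → 0 ≤ q.eval x := by
      intro x hx; simp only [hqdef, eval_sub, eval_C, sub_nonneg]; exact hmin x hx
    have hqc : q.eval c = 0 := by simp [hqdef, hm]
    by_cases hq0 : q = 0
    · have h2 : p - C m = 0 := by rw [← hqdef]; exact hq0
      exact ⟨C m, 0, sos_const hm0, sos_zero, by rw [sub_eq_zero.mp h2]; ring⟩
    have hqdeg : q.natDegree ≤ n + 1 := by rw [hqdef, natDegree_sub_C]; exact hdeg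
    rcases eq_or_lt_of_le (mem_Ici.mp hc) with hc0 | hc0
    · -- c = 0
      obtain ⟨r, hr⟩ := dvd_iff_isRoot.mpr (show q.IsRoot 0 by rw [← hc0] at hqc; exact hqc)
      rw [C_0, sub_zero] at hr
      have hrnn : ∀ x : ℝ, 0 ≤ x → 0 ≤ r.eval x := by
        have hIoc : ∀ x ∈ Ioc (0:ℝ) 1, 0 ≤ r.eval x := by
          intro x hx
          have h2 : 0 ≤ x * r.eval x := by
            have := hqnn x hx.1.le; rw [hr] at this; simpa using this
          nlinarith [hx.1]
        intro x hx
        rcases eq_or_lt_of_le hx with h | h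
        · rw [← h]; exact nonneg_at_of_right one_pos hIoc
        · have h2 : 0 ≤ x * r.eval x := by
            have := hqnn x hx; rw [hr] at this; simpa using this
          nlinarith
      have hr0 : r ≠ 0 := by rintro rfl; rw [mul_zero] at hr; exact hq0 hr
      have hrdeg : r.natDegree ≤ n := by
        have h4 := natDegree_mul (X_ne_zero (R := ℝ)) hr0
        rw [← hr, natDegree_X] at h4
        omega
      obtain ⟨f, g, hf, hg, hfg⟩ := ih r hrdeg hrnn
      refine ⟨C m + X ^ 2 * g, f, ?_, hf, ?_⟩
      · exact sos_add (sos_const hm0) (sos_sq_mul _ hg)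
      · have hp : p = C m + X * r := by rw [← hr]; simp [hqdef]
        rw [hp, hfg]; ring
    · -- c > 0, interior
      have hder : q.derivative.eval c = 0 :=
        deriv_zero_of_min_mem (Ici_mem_nhds hc0) (fun x hx => hqc ▸ hqnn x hx)
      obtain ⟨s, hs⟩ := double_root hqc hder
      have hsnn : ∀ x : ℝ, 0 ≤ x → 0 ≤ s.eval x := by
        have hIoc : ∀ x ∈ Ioc c (c + 1), 0 ≤ s.eval x := by
          intro x hx
          have h2 : 0 ≤ (x - c) ^ 2 * s.eval x := by
            have := hqnn x (by linarith [hx.1]); rw [hs] at this; simpa using this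
          have h3 : 0 < (x - c) ^ 2 :=
            lt_of_le_of_ne (sq_nonneg _) (Ne.symm (pow_ne_zero 2 (sub_ne_zero.mpr hx.1.ne')))
          nlinarith
        intro x hx
        rcases eq_or_ne x c with h | h
        · rw [h]; exact nonneg_at_of_right (by linarith) hIoc
        · have h2 : 0 ≤ (x - c) ^ 2 * s.eval x := by
            have := hqnn x hx; rw [hs] at this; simpa using this
          have h3 : 0 < (x - c) ^ 2 :=
            lt_of_le_of_ne (sq_nonneg _) (Ne.symm (pow_ne_zero 2 (sub_ne_zero.mpr h)))
          nlinarith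
      have hs0 : s ≠ 0 := by rintro rfl; rw [mul_zero] at hs; exact hq0 hs
      have hsdeg : s.natDegree ≤ n := by
        have h4 := natDegree_mul (pow_ne_zero 2 (X_sub_C_ne_zero c)) hs0
        rw [← hs, natDegree_pow, natDegree_X_sub_C] at h4
        omega
      obtain ⟨f, g, hf, hg, hfg⟩ := ih s hsdeg hsnn
      refine ⟨C m + (X - C c) ^ 2 * f, (X - C c) ^ 2 * g, ?_, sos_sq_mul _ hg, ?_⟩
      · exact sos_add (sos_const hm0) (sos_sq_mul _ hf)
      · have hp : p = C m + (X - C c) ^ 2 * s := by rw [← hs]; simp [hqdef]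
        rw [hp, hfg]; ring

/-- Descriptions of polynomials nonnegative on `ℝ`, `[0,∞)` and `[a,b]`. -/
theorem positive_polynomials_on_intervals (p : Polynomial ℝ) (a b : ℝ) (hab : a < b) :
    ((∀ x : ℝ, 0 ≤ p.eval x) ↔ IsSOS p) ∧
    ((∀ x : ℝ, 0 ≤ x → 0 ≤ p.eval x) ↔
      ∃ f g : Polynomial ℝ, IsSOS f ∧ IsSOS g ∧ p = f + Polynomial.X * g) ∧
    ((∀ x ∈ Set.Icc a b, 0 ≤ p.eval x) ↔
      ∃ f g : Polynomial ℝ, IsSOS f ∧ IsSOS g ∧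
        p = f + (Polynomial.C b - Polynomial.X) * (Polynomial.X - Polynomial.C a) * g) := by
  refine ⟨⟨fun h => univ_rep p.natDegree p le_rfl h, fun h x => sos_eval_nonneg h x⟩,
    ⟨fun h => ici_rep p.natDegree p le_rfl h, ?_⟩,
    ⟨fun h => icc_rep a b hab p.natDegree p le_rfl h, ?_⟩⟩
  · rintro ⟨f, g, hf, hg, rfl⟩ x hx
    simp only [eval_add, eval_mul, eval_X]
    exact add_nonneg (sos_eval_nonneg hf x) (mul_nonneg hx (sos_eval_nonneg hg x))
  · rintro ⟨f, g, hf, hg, rfl⟩ x hx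
    simp only [eval_add, eval_mul, eval_X, eval_sub, eval_C]
    refine add_nonneg (sos_eval_nonneg hf x) ?_
    exact mul_nonneg (mul_nonneg (by linarith [hx.2]) (by linarith [hx.1])) (sos_eval_nonneg hg x)
end

section
/- Hamburger's theorem: For a real sequence s = (s_n)_{n∈ℕ₀} the following are equivalent: (i) there exists a Radon measure μ on ℝ such that for every n the function x^n is μ-integrable and s_n = ∫_ℝ x^n dμ(x); (ii) for every n ∈ ℕ₀ the Hankel matrix H_n(s) is positive semidefinite, equivalently ∑_{k,l=0}^n s_{k+l} ξ_k ξ_l ≥ 0 for all ξ₀,…,ξ_n ∈ ℝ. -/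
open MeasureTheory

open Polynomial

namespace Hamb

lemma quot_nonneg {p d q : ℝ[X]} (r : ℝ) (hp : ∀ x, 0 ≤ p.eval x)
    (hpdq : p = d * q) (hd : ∀ x, x ≠ r → 0 < d.eval x) : ∀ x, 0 ≤ q.eval x := by
  have h1 : ∀ x, x ≠ r → 0 ≤ q.eval x := by
    intro x hx
    have hppos := hp x
    rw [hpdq, eval_mul] at hppos
    by_contra hq
    push_neg at hq
    have := mul_neg_of_pos_of_neg (hd x hx) hq
    linarith
  have hclosed : IsClosed {x : ℝ | 0 ≤ q.eval x} :=
    isClosed_le continuous_const q.continuous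
  have hdense : Dense ({r}ᶜ : Set ℝ) := dense_compl_singleton r
  intro x
  have hsub : ({r}ᶜ : Set ℝ) ⊆ {x : ℝ | 0 ≤ q.eval x} := fun y hy => h1 y hy
  have : closure ({r}ᶜ : Set ℝ) ⊆ {x : ℝ | 0 ≤ q.eval x} :=
    hclosed.closure_subset_iff.mpr hsub
  exact this (by rw [hdense.closure_eq]; trivial)

lemma root_of_factor {p q : ℝ[X]} (r : ℝ) (hp : ∀ x, 0 ≤ p.eval x)
    (hpdq : p = (X - C r) * q) : q.eval r = 0 := by
  by_contra h
  have hc : ContinuousAt (fun x => q.eval x) r := q.continuous.continuousAt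
  rcases Metric.continuousAt_iff.mp hc |q.eval r| (abs_pos.mpr h) with ⟨δ, δpos, hδ⟩
  rcases lt_trichotomy (q.eval r) 0 with hneg | hzero | hpos
  · -- take x = r + δ/2
    have hdist : dist (r + δ/2) r < δ := by
      have he : r + δ/2 - r = δ/2 := by ring
      rw [Real.dist_eq, he, abs_of_pos (by linarith)]; linarith
    have hq := hδ hdist
    rw [Real.dist_eq] at hq
    have hqx : q.eval (r + δ/2) < 0 := by
      rw [abs_of_neg hneg] at hq
      cases abs_lt.mp hq with
      | intro h1 h2 => linarith
    have hpx := hp (r + δ/2)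
    rw [hpdq, eval_mul, eval_sub, eval_X, eval_C] at hpx
    nlinarith
  · exact h hzero
  · -- take x = r - δ/2
    have hdist : dist (r - δ/2) r < δ := by
      have he : r - δ/2 - r = -(δ/2) := by ring
      rw [Real.dist_eq, he, abs_neg, abs_of_pos (by linarith)]; linarith
    have hq := hδ hdist
    rw [Real.dist_eq] at hq
    have hqx : 0 < q.eval (r - δ/2) := by
      rw [abs_of_pos hpos] at hq
      cases abs_lt.mp hq with
      | intro h1 h2 => linarith
    have hpx := hp (r - δ/2)
    rw [hpdq, eval_mul, eval_sub, eval_X, eval_C] at hpx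
    nlinarith

lemma exists_factor (p : ℝ[X]) (hp : ∀ x, 0 ≤ p.eval x) (h0 : p.natDegree ≠ 0) :
    ∃ u v q : ℝ[X], p = (u^2 + v^2) * q ∧ q.natDegree < p.natDegree ∧
      ∀ x, 0 ≤ q.eval x := by
  have hpne : p ≠ 0 := fun h => h0 (by simp [h])
  set P : ℂ[X] := p.map (algebraMap ℝ ℂ) with hP
  have hPdeg : 0 < P.degree := by
    rw [hP, degree_map_eq_of_injective (algebraMap ℝ ℂ).injective]
    exact natDegree_pos_iff_degree_pos.mp (Nat.pos_of_ne_zero h0)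
  obtain ⟨z, hz⟩ := Complex.exists_root hPdeg
  by_cases him : z.im = 0
  · -- real root
    set r := z.re with hr
    have hzr : z = (r : ℂ) := Complex.ext rfl (by simp [him])
    have hroot : p.eval r = 0 := by
      have h1 : P.eval ((algebraMap ℝ ℂ) r) = (algebraMap ℝ ℂ) (p.eval r) := by
        rw [hP, eval_map, eval₂_at_apply]
      have h2 : P.eval z = 0 := hz
      have h3 : ((p.eval r : ℝ) : ℂ) = 0 := by
        have hcoe : ((r : ℂ)) = (algebraMap ℝ ℂ) r := rfl
        rw [show ((p.eval r : ℝ) : ℂ) = (algebraMap ℝ ℂ) (p.eval r) from rfl,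
          ← h1, ← hcoe, ← hzr]
        exact h2
      exact_mod_cast h3
    obtain ⟨q₀, hq₀⟩ := (dvd_iff_isRoot.mpr hroot : (X - C r) ∣ p)
    have hq₀r : q₀.eval r = 0 := root_of_factor r hp hq₀
    obtain ⟨q, hq⟩ := (dvd_iff_isRoot.mpr hq₀r : (X - C r) ∣ q₀)
    have hfac : p = (X - C r)^2 * q := by rw [hq₀, hq]; ring
    have hXr : (X - C r) ≠ (0 : ℝ[X]) := X_sub_C_ne_zero r
    have hqne : q ≠ 0 := by
      intro h; rw [h, mul_zero] at hfac; exact hpne hfac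
    have hdpos : ∀ x, x ≠ r → 0 < ((X - C r)^2 : ℝ[X]).eval x := by
      intro x hx
      rw [eval_pow, eval_sub, eval_X, eval_C]
      have h := sub_ne_zero_of_ne hx
      have := abs_pos.mpr h
      nlinarith [sq_abs (x - r)]
    refine ⟨X - C r, 0, q, by rw [hfac]; ring, ?_, quot_nonneg r hp hfac hdpos⟩
    have hnd : p.natDegree = 2 + q.natDegree := by
      rw [hfac, natDegree_mul (pow_ne_zero 2 hXr) hqne, natDegree_pow,
        natDegree_X_sub_C]
    omega
  · -- complex root, quadratic factor
    set d : ℝ[X] := X^2 - C (2*z.re) * X + C (Complex.normSq z) with hd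
    have hdmap : d.map (algebraMap ℝ ℂ) = (X - C z) * (X - C ((starRingEnd ℂ) z)) := by
      have h1 : ((2*z.re : ℝ) : ℂ) = z + (starRingEnd ℂ) z := by
        rw [Complex.add_conj]
      have h2 : ((Complex.normSq z : ℝ) : ℂ) = z * (starRingEnd ℂ) z :=
        (Complex.mul_conj z).symm
      rw [hd]
      simp only [Polynomial.map_add, Polynomial.map_sub, Polynomial.map_mul,
        Polynomial.map_pow, map_X, map_C, Complex.coe_algebraMap]
      rw [h1, h2]
      simp only [C_add, C_mul]
      ring
    have hPconj : P.eval ((starRingEnd ℂ) z) = 0 := by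
      have hmapP : P.map (starRingEnd ℂ) = P := by
        rw [hP, map_map]
        congr 1
        exact RingHom.ext fun x => Complex.conj_ofReal x
      calc P.eval ((starRingEnd ℂ) z) = (P.map (starRingEnd ℂ)).eval ((starRingEnd ℂ) z) := by
            rw [hmapP]
        _ = (starRingEnd ℂ) (P.eval z) := by rw [eval_map, eval₂_at_apply]
        _ = 0 := by rw [hz]; simp
    have hne : z ≠ (starRingEnd ℂ) z := by
      intro h
      exact him (Complex.conj_eq_iff_im.mp h.symm)
    have hcop : IsCoprime (X - C z) (X - C ((starRingEnd ℂ) z)) :=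
      isCoprime_X_sub_C_of_isUnit_sub (sub_ne_zero_of_ne hne).isUnit
    have hdvd : d.map (algebraMap ℝ ℂ) ∣ P := by
      rw [hdmap]
      exact hcop.mul_dvd (dvd_iff_isRoot.mpr hz) (dvd_iff_isRoot.mpr hPconj)
    have hdvd' : d ∣ p := (map_dvd_map' (algebraMap ℝ ℂ)).mp hdvd
    obtain ⟨q, hq⟩ := hdvd'
    have hdeval : ∀ x : ℝ, d.eval x = (x - z.re)^2 + z.im^2 := by
      intro x
      rw [hd]
      simp [Complex.normSq_apply]
      ring
    have him2 : 0 < z.im^2 := by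
      have := abs_pos.mpr him
      nlinarith [sq_abs z.im]
    have hdpos : ∀ x : ℝ, x ≠ 0 → 0 < d.eval x := by
      intro x _
      rw [hdeval]
      nlinarith [sq_nonneg (x - z.re)]
    have hdne : d ≠ 0 := by
      intro h
      have h0' := hdeval 0
      rw [h, eval_zero] at h0'
      nlinarith [sq_nonneg (0 - z.re)]
    have hqne : q ≠ 0 := by
      intro h; rw [h, mul_zero] at hq; exact hpne hq
    have hndd : d.natDegree = 2 := by
      have : d = C 1 * X^2 + C (-(2*z.re)) * X + C (Complex.normSq z) := by
        rw [hd, C_neg, C_1]; ring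
      rw [this, natDegree_quadratic one_ne_zero]
    have hsum : d = (X - C z.re)^2 + (C z.im)^2 := by
      have hns : Complex.normSq z = z.re*z.re + z.im*z.im := Complex.normSq_apply z
      rw [hd, hns, show (2*z.re) = z.re + z.re by ring]
      rw [C_add, C_add, C_mul, C_mul]
      ring
    refine ⟨X - C z.re, C z.im, q, by rw [← hsum]; exact hq, ?_, quot_nonneg 0 hp hq hdpos⟩
    have hnd : p.natDegree = 2 + q.natDegree := by
      rw [hq, natDegree_mul hdne hqne, hndd]
    omega

theorem nonneg_sum_two_sq (p : ℝ[X]) (hp : ∀ x, 0 ≤ p.eval x) :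
    ∃ a b : ℝ[X], p = a^2 + b^2 := by
  suffices h : ∀ n : ℕ, ∀ p : ℝ[X], p.natDegree ≤ n → (∀ x, 0 ≤ p.eval x) →
      ∃ a b : ℝ[X], p = a^2 + b^2 from h p.natDegree p le_rfl hp
  intro n
  induction n using Nat.strong_induction_on with
  | _ n ih =>
    intro p hdeg hp
    by_cases h0 : p.natDegree = 0
    · -- constant
      have hc : p = C (p.coeff 0) := eq_C_of_natDegree_eq_zero h0
      have hc0 : 0 ≤ p.coeff 0 := by
        have := hp 0
        rw [hc] at this
        simpa using this
      refine ⟨C (Real.sqrt (p.coeff 0)), 0, ?_⟩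
      rw [← map_pow, Real.sq_sqrt hc0]
      rw [hc]
      simp
    · obtain ⟨u, v, q, hfac, hlt, hq⟩ := exists_factor p hp h0
      have hqn : q.natDegree < n := lt_of_lt_of_le hlt hdeg
      obtain ⟨a, b, hab⟩ := ih q.natDegree hqn q le_rfl hq
      refine ⟨u*a - v*b, u*b + v*a, ?_⟩
      rw [hfac, hab]; ring

end Hamb

open Polynomial

namespace Hamb

/-- The moment functional: `p ↦ ∑ i, coeff i * s i`. -/
noncomputable def toFinsuppL : Polynomial ℝ →ₗ[ℝ] (ℕ →₀ ℝ) where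
  toFun := fun p => p.toFinsupp.coeff
  map_add' := fun p q => by exact congrArg AddMonoidAlgebra.coeff (Polynomial.toFinsupp_add p q)
  map_smul' := fun c p => by exact congrArg AddMonoidAlgebra.coeff (Polynomial.toFinsupp_smul c p)

noncomputable def momL (s : ℕ → ℝ) : Polynomial ℝ →ₗ[ℝ] ℝ :=
  (Finsupp.linearCombination ℝ s).comp toFinsuppL

lemma momL_monomial (s : ℕ → ℝ) (k : ℕ) (c : ℝ) :
    momL s (monomial k c) = c * s k := by
  simp [momL, toFinsuppL, Polynomial.toFinsupp_monomial, Finsupp.linearCombination_single]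

lemma momL_X_pow (s : ℕ → ℝ) (k : ℕ) : momL s (X ^ k) = s k := by
  rw [X_pow_eq_monomial, momL_monomial, one_mul]

lemma momL_one (s : ℕ → ℝ) : momL s 1 = s 0 := by
  simpa using momL_X_pow s 0

/-- Expansion of the moment functional on a product. -/
lemma momL_mul_self (s : ℕ → ℝ) (p : ℝ[X]) :
    momL s (p * p) = ∑ i ∈ Finset.range (p.natDegree + 1),
      ∑ j ∈ Finset.range (p.natDegree + 1), p.coeff i * p.coeff j * s (i + j) := by
  conv_lhs => rw [p.as_sum_range, Finset.sum_mul_sum]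
  rw [map_sum]
  refine Finset.sum_congr rfl fun i _ => ?_
  rw [map_sum]
  refine Finset.sum_congr rfl fun j _ => ?_
  rw [monomial_mul_monomial, momL_monomial]

/-- The Hankel positivity hypothesis gives nonnegativity on squares. -/
lemma momL_sq_nonneg (s : ℕ → ℝ)
    (hs : ∀ n : ℕ, Matrix.PosSemidef (Matrix.of fun i j : Fin (n + 1) => s ((i : ℕ) + (j : ℕ))))
    (p : ℝ[X]) : 0 ≤ momL s (p * p) := by
  rw [momL_mul_self]
  set n := p.natDegree
  have h := (hs n).dotProduct_mulVec_nonneg (fun i : Fin (n+1) => p.coeff i)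
  have hexp : dotProduct (star fun i : Fin (n+1) => p.coeff i)
      ((Matrix.of fun i j : Fin (n + 1) => s ((i : ℕ) + (j : ℕ))).mulVec
        fun i : Fin (n+1) => p.coeff i)
      = ∑ i ∈ Finset.range (n + 1), ∑ j ∈ Finset.range (n + 1),
          p.coeff i * p.coeff j * s (i + j) := by
    rw [dotProduct]
    rw [← Fin.sum_univ_eq_sum_range (fun i => ∑ j ∈ Finset.range (n + 1),
      p.coeff i * p.coeff j * s (i + j))]
    refine Finset.sum_congr rfl fun i _ => ?_
    rw [Matrix.mulVec, dotProduct]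
    rw [← Fin.sum_univ_eq_sum_range (fun j => p.coeff i * p.coeff j * s (i + j)),
      Finset.mul_sum]
    refine Finset.sum_congr rfl fun j _ => ?_
    simp [Matrix.of_apply]
    ring
  rw [hexp] at h
  exact_mod_cast h

/-- Nonnegativity on pointwise-nonnegative polynomials. -/
lemma momL_nonneg (s : ℕ → ℝ)
    (hs : ∀ n : ℕ, Matrix.PosSemidef (Matrix.of fun i j : Fin (n + 1) => s ((i : ℕ) + (j : ℕ))))
    (p : ℝ[X]) (hp : ∀ x, 0 ≤ p.eval x) : 0 ≤ momL s p := by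
  obtain ⟨a, b, hab⟩ := nonneg_sum_two_sq p hp
  have : momL s p = momL s (a * a) + momL s (b * b) := by
    rw [hab]; rw [← map_add]; congr 1; ring
  rw [this]
  exact add_nonneg (momL_sq_nonneg s hs a) (momL_sq_nonneg s hs b)

end Hamb

open MeasureTheory Polynomial

namespace Hamb

theorem easy_dir (s : ℕ → ℝ) (μ : Measure ℝ)
    (h : ∀ n : ℕ, Integrable (fun x : ℝ => x ^ n) μ ∧ s n = ∫ x : ℝ, x ^ n ∂μ) :
    ∀ n : ℕ, Matrix.PosSemidef (Matrix.of fun i j : Fin (n + 1) => s ((i : ℕ) + (j : ℕ))) := by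
  intro n
  refine Matrix.PosSemidef.of_dotProduct_mulVec_nonneg ?_ ?_
  · -- Hermitian
    ext i j
    simp [Matrix.conjTranspose_apply, Matrix.of_apply, add_comm]
  · intro x
    have hInt : ∀ k : ℕ, Integrable (fun t : ℝ => t ^ k) μ := fun k => (h k).1
    have key : ∫ t : ℝ, (∑ i : Fin (n+1), x i * t ^ (i:ℕ))^2 ∂μ
        = ∑ i : Fin (n+1), ∑ j : Fin (n+1), (x i * x j) * s ((i:ℕ) + (j:ℕ)) := by
      have hexp : ∀ t : ℝ, (∑ i : Fin (n+1), x i * t ^ (i:ℕ))^2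
          = ∑ i : Fin (n+1), ∑ j : Fin (n+1), (x i * x j) * t ^ ((i:ℕ) + (j:ℕ)) := by
        intro t
        rw [sq, Finset.sum_mul_sum]
        refine Finset.sum_congr rfl fun i _ => Finset.sum_congr rfl fun j _ => ?_
        rw [pow_add]; ring
      simp_rw [hexp]
      rw [integral_finset_sum _ (fun i _ => integrable_finset_sum _
        (fun j _ => ((hInt _).const_mul _)))]
      refine Finset.sum_congr rfl fun i _ => ?_
      rw [integral_finset_sum _ (fun j _ => ((hInt _).const_mul _))]
      refine Finset.sum_congr rfl fun j _ => ?_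
      rw [MeasureTheory.integral_const_mul, ← (h ((i:ℕ) + (j:ℕ))).2]
    have hnn : 0 ≤ ∫ t : ℝ, (∑ i : Fin (n+1), x i * t ^ (i:ℕ))^2 ∂μ :=
      integral_nonneg fun t => sq_nonneg _
    rw [key] at hnn
    have : dotProduct (star x)
        ((Matrix.of fun i j : Fin (n + 1) => s ((i : ℕ) + (j : ℕ))).mulVec x)
        = ∑ i : Fin (n+1), ∑ j : Fin (n+1), (x i * x j) * s ((i:ℕ) + (j:ℕ)) := by
      rw [dotProduct]
      refine Finset.sum_congr rfl fun i _ => ?_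
      rw [Matrix.mulVec, dotProduct, Finset.mul_sum]
      refine Finset.sum_congr rfl fun j _ => ?_
      simp [Matrix.of_apply]
      ring
    rw [this]
    exact hnn

end Hamb

open MeasureTheory Polynomial Set

namespace Hamb

/-- Functions of polynomial growth. -/
def polyGrowth : Submodule ℝ (ℝ → ℝ) where
  carrier := {f | ∃ C : ℝ, ∃ n : ℕ, ∀ x, |f x| ≤ C * (1 + x^2)^n}
  add_mem' := by
    rintro f g ⟨C, n, hC⟩ ⟨D, m, hD⟩
    refine ⟨C + D, max n m, fun x => ?_⟩
    have h1 : (1:ℝ) ≤ 1 + x^2 := by nlinarith [sq_nonneg x]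
    have hC0 : 0 ≤ C := by have := hC 0; simp at this; linarith [abs_nonneg (f 0)]
    have hD0 : 0 ≤ D := by have := hD 0; simp at this; linarith [abs_nonneg (g 0)]
    have e1 : (1 + x^2)^n ≤ (1 + x^2)^(max n m) := pow_le_pow_right₀ h1 (le_max_left n m)
    have e2 : (1 + x^2)^m ≤ (1 + x^2)^(max n m) := pow_le_pow_right₀ h1 (le_max_right n m)
    calc |(f + g) x| ≤ |f x| + |g x| := abs_add_le _ _
      _ ≤ C * (1 + x^2)^n + D * (1 + x^2)^m := add_le_add (hC x) (hD x)
      _ ≤ C * (1 + x^2)^(max n m) + D * (1 + x^2)^(max n m) := by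
          exact add_le_add (mul_le_mul_of_nonneg_left e1 hC0)
            (mul_le_mul_of_nonneg_left e2 hD0)
      _ = (C + D) * (1 + x^2)^(max n m) := by ring
  zero_mem' := ⟨0, 0, fun x => by simp⟩
  smul_mem' := by
    rintro c f ⟨C, n, hC⟩
    refine ⟨|c| * C, n, fun x => ?_⟩
    have : |(c • f) x| = |c| * |f x| := by simp [abs_mul]
    rw [this, mul_assoc]
    exact mul_le_mul_of_nonneg_left (hC x) (abs_nonneg c)

abbrev EE := ↥polyGrowth

lemma eval_mem_polyGrowth (p : ℝ[X]) : (fun x => p.eval x) ∈ polyGrowth := by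
  refine ⟨∑ i ∈ Finset.range (p.natDegree + 1), |p.coeff i|, p.natDegree, fun x => ?_⟩
  have h1 : (1:ℝ) ≤ 1 + x^2 := by nlinarith [sq_nonneg x]
  show |p.eval x| ≤ _
  rw [eval_eq_sum_range]
  calc |∑ i ∈ Finset.range (p.natDegree + 1), p.coeff i * x ^ i|
      ≤ ∑ i ∈ Finset.range (p.natDegree + 1), |p.coeff i * x ^ i| :=
        Finset.abs_sum_le_sum_abs _ _
    _ ≤ ∑ i ∈ Finset.range (p.natDegree + 1), |p.coeff i| * (1 + x^2)^p.natDegree := by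
        refine Finset.sum_le_sum fun i hi => ?_
        rw [abs_mul]
        refine mul_le_mul_of_nonneg_left ?_ (abs_nonneg _)
        calc |x ^ i| = |x|^i := abs_pow x i
          _ ≤ (1 + x^2)^i := by
              refine pow_le_pow_left₀ (abs_nonneg x) ?_ i
              nlinarith [sq_abs x, sq_nonneg (|x| - 1)]
          _ ≤ (1 + x^2)^p.natDegree :=
              pow_le_pow_right₀ h1 (Nat.lt_succ_iff.mp (Finset.mem_range.mp hi))
    _ = (∑ i ∈ Finset.range (p.natDegree + 1), |p.coeff i|) * (1 + x^2)^p.natDegree := by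
        rw [Finset.sum_mul]

noncomputable def toE : ℝ[X] →ₗ[ℝ] EE where
  toFun p := ⟨fun x => p.eval x, eval_mem_polyGrowth p⟩
  map_add' p q := Subtype.ext (funext fun x => by simp)
  map_smul' c p := Subtype.ext (funext fun x => by simp)

lemma toE_inj : Function.Injective toE := by
  intro p q h
  have h2 := congrArg Subtype.val h
  exact Polynomial.funext fun r => congrFun h2 r

@[simp] lemma toE_apply (p : ℝ[X]) (x : ℝ) : (toE p).1 x = p.eval x := rfl

/-- The cone of pointwise nonnegative functions. -/
def posCone : ConvexCone ℝ EE where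
  carrier := {f | ∀ x, 0 ≤ f.1 x}
  smul_mem' := by
    intro c hc f hf x
    have : ((c • f : EE) : ℝ → ℝ) x = c * f.1 x := rfl
    rw [Set.mem_setOf_eq] at hf
    show 0 ≤ ((c • f : EE) : ℝ → ℝ) x
    rw [this]
    exact mul_nonneg hc.le (hf x)
  add_mem' := by
    intro f hf g hg x
    rw [Set.mem_setOf_eq] at hf hg
    show 0 ≤ ((f + g : EE) : ℝ → ℝ) x
    exact add_nonneg (hf x) (hg x)

lemma mem_posCone {f : EE} : f ∈ posCone ↔ ∀ x, 0 ≤ f.1 x := Iff.rfl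

/-- The partial linear map given by the moment functional on polynomials. -/
noncomputable def momPL (s : ℕ → ℝ) : EE →ₗ.[ℝ] ℝ :=
  ⟨LinearMap.range toE, (momL s) ∘ₗ (LinearEquiv.ofInjective toE toE_inj).symm.toLinearMap⟩

lemma momPL_apply (s : ℕ → ℝ) (p : ℝ[X]) (h : toE p ∈ LinearMap.range toE) :
    (momPL s).toFun ⟨toE p, h⟩ = momL s p := by
  have : (⟨toE p, h⟩ : LinearMap.range toE) = (LinearEquiv.ofInjective toE toE_inj) p := by
    apply Subtype.ext
    simp [LinearEquiv.ofInjective_apply]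
  simp only [momPL, this, LinearMap.coe_comp, Function.comp_apply,
    LinearEquiv.coe_toLinearMap, LinearEquiv.symm_apply_apply, LinearMap.comp_apply]
  exact congrArg (momL s) ((LinearEquiv.ofInjective toE toE_inj).symm_apply_apply p)

/-- The Hankel positivity hypothesis. -/
def Hankel (s : ℕ → ℝ) : Prop :=
  ∀ n : ℕ, Matrix.PosSemidef (Matrix.of fun i j : Fin (n + 1) => s ((i : ℕ) + (j : ℕ)))

variable (s : ℕ → ℝ)

lemma riesz_hyp1 (hs : Hankel s) : ∀ x : (momPL s).domain, (x : EE) ∈ posCone → 0 ≤ (momPL s).toFun x := by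
  rintro ⟨x, hx⟩ hpos
  obtain ⟨p, hp⟩ := hx
  subst hp
  erw [momPL_apply]
  refine momL_nonneg s hs p fun t => ?_
  exact hpos t

lemma riesz_hyp2 : ∀ y : EE, ∃ x : (momPL s).domain, (x : EE) + y ∈ posCone := by
  rintro ⟨y, C, n, hC⟩
  set p : ℝ[X] := (max C 0) • ((1 + X^2)^n) with hp
  refine ⟨⟨toE p, LinearMap.mem_range_self _ p⟩, fun x => ?_⟩
  have hev : p.eval x = (max C 0) * (1 + x^2)^n := by
    rw [hp]
    simp [eval_pow]
  show 0 ≤ p.eval x + y x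
  rw [hev]
  have h2 : |y x| ≤ (max C 0) * (1 + x^2)^n := by
    refine le_trans (hC x) ?_
    have h1 : (0:ℝ) ≤ (1 + x^2)^n := by positivity
    exact mul_le_mul_of_nonneg_right (le_max_left C 0) h1
  have := neg_abs_le (y x)
  linarith [h2, this]

lemma posCone_pointed : posCone.Pointed := fun _ => le_rfl

noncomputable def Lam (hs : Hankel s) : EE →ₗ[ℝ] ℝ :=
  (riesz_extension (posCone.toPointedCone posCone_pointed) (momPL s) (riesz_hyp1 s hs) (riesz_hyp2 s)).choose

lemma Lam_spec (hs : Hankel s) : (∀ x : (momPL s).domain, Lam s hs x = (momPL s).toFun x) ∧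
    ∀ x ∈ posCone, 0 ≤ Lam s hs x :=
  (riesz_extension (posCone.toPointedCone posCone_pointed) (momPL s) (riesz_hyp1 s hs) (riesz_hyp2 s)).choose_spec

lemma Lam_toE (hs : Hankel s) (p : ℝ[X]) : Lam s hs (toE p) = momL s p := by
  have h := (Lam_spec s hs).1 ⟨toE p, LinearMap.mem_range_self _ p⟩
  rw [momPL_apply] at h
  exact h

lemma Lam_nonneg (hs : Hankel s) {f : EE} (hf : ∀ x, 0 ≤ f.1 x) : 0 ≤ Lam s hs f :=
  (Lam_spec s hs).2 f hf

lemma Lam_mono (hs : Hankel s) {f g : EE} (h : ∀ x, f.1 x ≤ g.1 x) : Lam s hs f ≤ Lam s hs g := by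
  have h1 : 0 ≤ Lam s hs (g - f) := Lam_nonneg s hs (f := g - f) (fun x => by
    have : ((g - f : EE) : ℝ → ℝ) x = g.1 x - f.1 x := rfl
    rw [this]; linarith [h x])
  rw [map_sub] at h1
  linarith

end Hamb

open MeasureTheory Polynomial Set

namespace Hamb

lemma indicator_mem_polyGrowth (f : ℝ → ℝ) (hf : Continuous f) (a b : ℝ) :
    (Set.Ioc a b).indicator f ∈ polyGrowth := by
  obtain ⟨B, hB⟩ := (isCompact_Icc (a := a) (b := b)).exists_bound_of_continuousOn
    hf.continuousOn
  refine ⟨max B 0, 0, fun x => ?_⟩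
  rw [pow_zero, mul_one]
  by_cases hx : x ∈ Set.Ioc a b
  · rw [Set.indicator_of_mem hx]
    calc |f x| = ‖f x‖ := rfl
      _ ≤ B := hB x (Set.Ioc_subset_Icc_self hx)
      _ ≤ max B 0 := le_max_left _ _
  · rw [Set.indicator_of_notMem hx]
    simp

/-- Truncation of a continuous function to `Ioc a b`, as an element of `EE`. -/
noncomputable def truncE (f : ℝ → ℝ) (hf : Continuous f) (a b : ℝ) : EE :=
  ⟨(Set.Ioc a b).indicator f, indicator_mem_polyGrowth f hf a b⟩

@[simp] lemma truncE_apply (f : ℝ → ℝ) (hf : Continuous f) (a b x : ℝ) :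
    (truncE f hf a b).1 x = (Set.Ioc a b).indicator f x := rfl

lemma iic_indicator_mem_polyGrowth (t : ℝ) :
    (Set.Iic t).indicator (fun _ => (1:ℝ)) ∈ polyGrowth := by
  refine ⟨1, 0, fun x => ?_⟩
  rw [pow_zero, mul_one]
  by_cases hx : x ∈ Set.Iic t
  · rw [Set.indicator_of_mem hx]; norm_num
  · rw [Set.indicator_of_notMem hx]; norm_num

noncomputable def chiIic (t : ℝ) : EE :=
  ⟨(Set.Iic t).indicator (fun _ => (1:ℝ)), iic_indicator_mem_polyGrowth t⟩

variable (s : ℕ → ℝ)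

/-- The distribution function `F`. -/
noncomputable def Fd (hs : Hankel s) : ℝ → ℝ := fun t => Lam s hs (chiIic t)

lemma Fd_mono (hs : Hankel s) : Monotone (Fd s hs) := by
  intro u v huv
  refine Lam_mono s hs fun x => ?_
  show (Set.Iic u).indicator (fun _ => (1:ℝ)) x ≤ (Set.Iic v).indicator (fun _ => (1:ℝ)) x
  refine Set.indicator_le_indicator_of_subset (Set.Iic_subset_Iic.mpr huv)
    (fun _ => zero_le_one) x

lemma Fd_nonneg (hs : Hankel s) (t : ℝ) : 0 ≤ Fd s hs t :=
  Lam_nonneg s hs fun x => Set.indicator_nonneg (fun y _ => zero_le_one) x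

lemma s0_nonneg (hs : Hankel s) : 0 ≤ s 0 := by
  have := momL_sq_nonneg s hs 1
  simpa [momL_one] using this

lemma Fd_le (hs : Hankel s) (t : ℝ) : Fd s hs t ≤ s 0 := by
  have h1 : Lam s hs (toE 1) = s 0 := by rw [Lam_toE, momL_one]
  rw [← h1]
  refine Lam_mono s hs fun x => ?_
  show (Set.Iic t).indicator (fun _ => (1:ℝ)) x ≤ (toE 1).1 x
  have h2 : (toE 1).1 x = 1 := by simp
  rw [h2]
  by_cases hx : x ∈ Set.Iic t
  · rw [Set.indicator_of_mem hx]
  · rw [Set.indicator_of_notMem hx]; norm_num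

/-- The right-continuous modification, a Stieltjes function. -/
noncomputable def Gd (hs : Hankel s) : StieltjesFunction ℝ := (Fd_mono s hs).stieltjesFunction

lemma Fd_le_Gd (hs : Hankel s) (t : ℝ) : Fd s hs t ≤ Gd s hs t :=
  (Fd_mono s hs).le_rightLim le_rfl

lemma Gd_le_Fd (hs : Hankel s) {t u : ℝ} (h : t < u) : Gd s hs t ≤ Fd s hs u :=
  (Fd_mono s hs).rightLim_le h

lemma Gd_nonneg (hs : Hankel s) (t : ℝ) : 0 ≤ Gd s hs t :=
  le_trans (Fd_nonneg s hs t) (Fd_le_Gd s hs t)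

lemma Gd_le (hs : Hankel s) (t : ℝ) : Gd s hs t ≤ s 0 :=
  le_trans (Gd_le_Fd s hs (lt_add_one t)) (Fd_le s hs (t + 1))

lemma Gd_eq_Fd (hs : Hankel s) {t : ℝ} (h : ContinuousAt (Fd s hs) t) :
    Gd s hs t = Fd s hs t :=
  rightLim_eq_of_tendsto (f := Fd s hs)
    (h.tendsto.mono_left nhdsWithin_le_nhds)

/-- The candidate measure. -/
noncomputable def md (hs : Hankel s) : Measure ℝ := (Gd s hs).measure

lemma md_Ioc (hs : Hankel s) (a b : ℝ) :
    md s hs (Set.Ioc a b) = ENNReal.ofReal (Gd s hs b - Gd s hs a) :=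
  (Gd s hs).measure_Ioc a b

lemma md_univ_le (hs : Hankel s) : md s hs Set.univ ≤ ENNReal.ofReal (s 0) := by
  have huniv : (Set.univ : Set ℝ) = ⋃ n : ℕ, Set.Ioc (-(n:ℝ)) n := by
    ext x
    simp only [Set.mem_univ, Set.mem_iUnion, Set.mem_Ioc, true_iff]
    obtain ⟨n, hn⟩ := exists_nat_gt |x|
    obtain ⟨h1, h2⟩ := abs_lt.mp hn
    exact ⟨n, by linarith, by linarith⟩
  rw [huniv]
  have hmono : Monotone (fun n : ℕ => Set.Ioc (-(n:ℝ)) (n:ℝ)) := by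
    intro i j hij
    have : (i:ℝ) ≤ (j:ℝ) := by exact_mod_cast hij
    exact Set.Ioc_subset_Ioc (neg_le_neg this) this
  rw [hmono.directed_le.measure_iUnion]
  refine iSup_le fun n => ?_
  rw [md_Ioc]
  refine ENNReal.ofReal_le_ofReal ?_
  linarith [Gd_le s hs (n:ℝ), Gd_nonneg s hs (-(n:ℝ))]

instance md_finite (hs : Hankel s) : IsFiniteMeasure (md s hs) :=
  ⟨lt_of_le_of_lt (md_univ_le s hs) ENNReal.ofReal_lt_top⟩

end Hamb

open MeasureTheory Polynomial Set

namespace Hamb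

variable (s : ℕ → ℝ)

lemma trunc_split (f : ℝ → ℝ) (hf : Continuous f) {a b c : ℝ} (hab : a ≤ b) (hbc : b ≤ c) :
    truncE f hf a c = truncE f hf a b + truncE f hf b c := by
  apply Subtype.ext
  funext x
  show (Set.Ioc a c).indicator f x
      = (Set.Ioc a b).indicator f x + (Set.Ioc b c).indicator f x
  by_cases h1 : x ∈ Set.Ioc a b
  · have h2 : x ∈ Set.Ioc a c := ⟨h1.1, le_trans h1.2 hbc⟩
    have h3 : x ∉ Set.Ioc b c := fun h => absurd h.1 (not_lt.mpr h1.2)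
    rw [Set.indicator_of_mem h1, Set.indicator_of_mem h2, Set.indicator_of_notMem h3,
      add_zero]
  · by_cases h2 : x ∈ Set.Ioc b c
    · have h3 : x ∈ Set.Ioc a c := ⟨lt_of_le_of_lt hab h2.1, h2.2⟩
      rw [Set.indicator_of_mem h2, Set.indicator_of_mem h3, Set.indicator_of_notMem h1,
        zero_add]
    · have h3 : x ∉ Set.Ioc a c := by
        intro h
        rcases le_or_gt x b with hxb | hxb
        · exact h1 ⟨h.1, hxb⟩
        · exact h2 ⟨hxb, h.2⟩
      rw [Set.indicator_of_notMem h1, Set.indicator_of_notMem h2,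
        Set.indicator_of_notMem h3, add_zero]

lemma chi_split {a b : ℝ} (hab : a ≤ b) :
    chiIic b = chiIic a + truncE (fun _ => (1:ℝ)) continuous_const a b := by
  apply Subtype.ext
  funext x
  show (Set.Iic b).indicator (fun _ => (1:ℝ)) x
      = (Set.Iic a).indicator (fun _ => (1:ℝ)) x + (Set.Ioc a b).indicator (fun _ => (1:ℝ)) x
  by_cases h1 : x ≤ a
  · have h2 : x ∈ Set.Iic b := le_trans h1 hab
    have h3 : x ∉ Set.Ioc a b := fun h => absurd h.1 (not_lt.mpr h1)
    rw [Set.indicator_of_mem h2, Set.indicator_of_mem (show x ∈ Set.Iic a from h1),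
      Set.indicator_of_notMem h3, add_zero]
  · push_neg at h1
    by_cases h2 : x ≤ b
    · have h3 : x ∈ Set.Ioc a b := ⟨h1, h2⟩
      rw [Set.indicator_of_mem (show x ∈ Set.Iic b from h2), Set.indicator_of_mem h3,
        Set.indicator_of_notMem (show x ∉ Set.Iic a from not_le.mpr h1), zero_add]
    · push_neg at h2
      rw [Set.indicator_of_notMem (show x ∉ Set.Iic b from not_le.mpr h2),
        Set.indicator_of_notMem (show x ∉ Set.Iic a from not_le.mpr h1),
        Set.indicator_of_notMem (show x ∉ Set.Ioc a b from fun h =>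
          absurd h.2 (not_le.mpr h2)), add_zero]

lemma Lam_chiIoc (hs : Hankel s) {a b : ℝ} (hab : a ≤ b) :
    Lam s hs (truncE (fun _ => (1:ℝ)) continuous_const a b) = Fd s hs b - Fd s hs a := by
  have h := congrArg (Lam s hs) (chi_split hab)
  rw [map_add] at h
  have : Fd s hs b = Fd s hs a + Lam s hs (truncE (fun _ => (1:ℝ)) continuous_const a b) := h
  linarith

lemma Lam_short (hs : Hankel s) (f : ℝ → ℝ) (hf : Continuous f) {a b c ε : ℝ}
    (hab : a ≤ b) (hε : 0 ≤ ε) (h : ∀ x ∈ Set.Ioc a b, |f x - c| ≤ ε) :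
    |Lam s hs (truncE f hf a b) - c * (Fd s hs b - Fd s hs a)|
      ≤ ε * (Fd s hs b - Fd s hs a) := by
  set χ := truncE (fun _ => (1:ℝ)) continuous_const a b with hχ
  have hFba : 0 ≤ Fd s hs b - Fd s hs a := by linarith [Fd_mono s hs hab]
  have hup : Lam s hs (truncE f hf a b) ≤ (c + ε) * (Fd s hs b - Fd s hs a) := by
    have : Lam s hs (truncE f hf a b) ≤ Lam s hs ((c + ε) • χ) := by
      refine Lam_mono s hs fun x => ?_
      show (Set.Ioc a b).indicator f x ≤ ((c + ε) • χ).1 x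
      have hsm : ((c + ε) • χ).1 x = (c + ε) * (Set.Ioc a b).indicator (fun _ => (1:ℝ)) x := rfl
      rw [hsm]
      by_cases hx : x ∈ Set.Ioc a b
      · rw [Set.indicator_of_mem hx, Set.indicator_of_mem hx]
        have := abs_le.mp (h x hx)
        linarith [this.2]
      · rw [Set.indicator_of_notMem hx, Set.indicator_of_notMem hx, mul_zero]
    rw [_root_.map_smul, smul_eq_mul, Lam_chiIoc s hs hab] at this
    exact this
  have hlo : (c - ε) * (Fd s hs b - Fd s hs a) ≤ Lam s hs (truncE f hf a b) := by
    have : Lam s hs ((c - ε) • χ) ≤ Lam s hs (truncE f hf a b) := by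
      refine Lam_mono s hs fun x => ?_
      show ((c - ε) • χ).1 x ≤ (Set.Ioc a b).indicator f x
      have hsm : ((c - ε) • χ).1 x = (c - ε) * (Set.Ioc a b).indicator (fun _ => (1:ℝ)) x := rfl
      rw [hsm]
      by_cases hx : x ∈ Set.Ioc a b
      · rw [Set.indicator_of_mem hx, Set.indicator_of_mem hx]
        have := abs_le.mp (h x hx)
        linarith [this.1]
      · rw [Set.indicator_of_notMem hx, Set.indicator_of_notMem hx, mul_zero]
    rw [_root_.map_smul, smul_eq_mul, Lam_chiIoc s hs hab] at this
    exact this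
  rw [abs_le]
  constructor <;> nlinarith

lemma md_Ioc_toReal (hs : Hankel s) {a b : ℝ} (hab : a ≤ b) :
    (md s hs (Set.Ioc a b)).toReal = Gd s hs b - Gd s hs a := by
  rw [md_Ioc, ENNReal.toReal_ofReal]
  linarith [(Gd s hs).mono hab]

lemma integral_short (hs : Hankel s) (f : ℝ → ℝ) (hf : Continuous f) {a b c ε : ℝ}
    (hab : a ≤ b) (hε : 0 ≤ ε) (h : ∀ x ∈ Set.Ioc a b, |f x - c| ≤ ε) :
    |∫ x in Set.Ioc a b, f x ∂(md s hs) - c * (Gd s hs b - Gd s hs a)|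
      ≤ ε * (Gd s hs b - Gd s hs a) := by
  have hfin : md s hs (Set.Ioc a b) < ⊤ := measure_lt_top _ _
  have hint : IntegrableOn f (Set.Ioc a b) (md s hs) := hf.integrableOn_Ioc
  have hsub : ∫ x in Set.Ioc a b, f x ∂(md s hs) - c * (Gd s hs b - Gd s hs a)
      = ∫ x in Set.Ioc a b, (f x - c) ∂(md s hs) := by
    rw [integral_sub hint (integrableOn_const hfin.ne)]
    rw [setIntegral_const, smul_eq_mul, measureReal_def, md_Ioc_toReal s hs hab]
    ring
  rw [hsub]
  calc |∫ x in Set.Ioc a b, (f x - c) ∂(md s hs)|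
      ≤ ε * ((md s hs) (Set.Ioc a b)).toReal :=
        norm_setIntegral_le_of_norm_le_const (f := fun x => f x - c) hfin (fun x hx => by
          simpa using h x hx)
    _ = ε * (Gd s hs b - Gd s hs a) := by rw [md_Ioc_toReal s hs hab]

lemma integrableOn_Ioc' (hs : Hankel s) (f : ℝ → ℝ) (hf : Continuous f) (a b : ℝ) :
    IntegrableOn f (Set.Ioc a b) (md s hs) := hf.integrableOn_Ioc

/-- One short piece estimate. -/
lemma piece_est (hs : Hankel s) (f : ℝ → ℝ) (hf : Continuous f) {u v : ℝ} (huv : u ≤ v)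
    (hu : ContinuousAt (Fd s hs) u) (hv : ContinuousAt (Fd s hs) v) {ε : ℝ} (hε : 0 ≤ ε)
    (hclose : ∀ x ∈ Set.Ioc u v, |f x - f v| ≤ ε) :
    |Lam s hs (truncE f hf u v) - ∫ x in Set.Ioc u v, f x ∂(md s hs)|
      ≤ ε * ((Fd s hs v - Fd s hs u) + (Gd s hs v - Gd s hs u)) := by
  have h1 := Lam_short s hs f hf huv hε hclose
  have h2 := integral_short s hs f hf huv hε hclose
  have hGu : Gd s hs u = Fd s hs u := Gd_eq_Fd s hs hu
  have hGv : Gd s hs v = Fd s hs v := Gd_eq_Fd s hs hv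
  rw [hGu, hGv] at h2 ⊢
  calc |Lam s hs (truncE f hf u v) - ∫ x in Set.Ioc u v, f x ∂(md s hs)|
      ≤ |Lam s hs (truncE f hf u v) - f v * (Fd s hs v - Fd s hs u)|
        + |∫ x in Set.Ioc u v, f x ∂(md s hs) - f v * (Fd s hs v - Fd s hs u)| := by
        have h3 := abs_sub_le (Lam s hs (truncE f hf u v))
          (f v * (Fd s hs v - Fd s hs u)) (∫ x in Set.Ioc u v, f x ∂(md s hs))
        rw [abs_sub_comm (f v * (Fd s hs v - Fd s hs u))] at h3
        exact h3
    _ ≤ ε * (Fd s hs v - Fd s hs u) + ε * (Fd s hs v - Fd s hs u) := add_le_add h1 h2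
    _ = ε * ((Fd s hs v - Fd s hs u) + (Fd s hs v - Fd s hs u)) := by ring

/-- The key identity: on intervals with endpoints at continuity points of `Fd`,
the extended functional agrees with the integral. -/
lemma key (hs : Hankel s) (f : ℝ → ℝ) (hf : Continuous f) {a b : ℝ} (hab : a ≤ b)
    (ha : ContinuousAt (Fd s hs) a) (hb : ContinuousAt (Fd s hs) b) :
    Lam s hs (truncE f hf a b) = ∫ x in Set.Ioc a b, f x ∂(md s hs) := by
  have h2s0 : 0 ≤ s 0 := s0_nonneg s hs
  suffices H : ∀ ε > (0:ℝ),
      |Lam s hs (truncE f hf a b) - ∫ x in Set.Ioc a b, f x ∂(md s hs)| ≤ ε * (2 * s 0) by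
    by_contra hne
    have habs : 0 < |Lam s hs (truncE f hf a b) - ∫ x in Set.Ioc a b, f x ∂(md s hs)| :=
      abs_pos.mpr (sub_ne_zero_of_ne hne)
    set d := |Lam s hs (truncE f hf a b) - ∫ x in Set.Ioc a b, f x ∂(md s hs)| with hd
    have hH := H (d / (2 * s 0 + 1)) (by positivity)
    have h1 : d / (2 * s 0 + 1) * (2 * s 0) < d := by
      rw [div_mul_eq_mul_div, div_lt_iff₀ (by linarith)]
      nlinarith
    linarith
  intro ε hε
  have huc := (isCompact_Icc (a := a) (b := b)).uniformContinuousOn_of_continuous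
    hf.continuousOn
  obtain ⟨δ, hδ, hucδ⟩ := Metric.uniformContinuousOn_iff.mp huc ε hε
  have hD : Dense {x : ℝ | ¬ContinuousAt (Fd s hs) x}ᶜ :=
    Set.Countable.dense_compl ℝ ((Fd_mono s hs).countable_not_continuousAt)
  have claim : ∀ k : ℕ, ∀ a' : ℝ, a ≤ a' → a' ≤ b → ContinuousAt (Fd s hs) a' →
      b - a' ≤ k * (δ/4) →
      |Lam s hs (truncE f hf a' b) - ∫ x in Set.Ioc a' b, f x ∂(md s hs)|
        ≤ ε * ((Fd s hs b - Fd s hs a') + (Gd s hs b - Gd s hs a')) := by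
    intro k
    induction k with
    | zero =>
      intro a' haa' ha'b _ hlen
      have hba : a' = b := le_antisymm ha'b (by simpa using hlen)
      subst hba
      have htr : truncE f hf a' a' = 0 := by
        apply Subtype.ext; funext x
        show (Set.Ioc a' a').indicator f x = 0
        rw [Set.Ioc_self, Set.indicator_empty]
      rw [htr, map_zero, Set.Ioc_self, Measure.restrict_empty, integral_zero_measure]
      simp
    | succ k ihk =>
      intro a' haa' ha'b ha' hlen
      by_cases hsh : b - a' < δ
      · -- short: single piece with right endpoint b
        refine piece_est s hs f hf ha'b ha' hb hε.le fun x hx => ?_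
        have hx1 : x ∈ Set.Icc a b := ⟨le_trans haa' hx.1.le, hx.2⟩
        have hb1 : b ∈ Set.Icc a b := ⟨hab, le_rfl⟩
        have hdist : dist x b < δ := by
          rw [Real.dist_eq, abs_of_nonpos (by linarith [hx.2])]
          linarith [hx.1]
        exact (hucδ x hx1 b hb1 hdist).le
      · -- long: split a short piece off the left
        push_neg at hsh
        obtain ⟨c, hcD, hc1, hc2⟩ := hD.exists_between
          (show a' + δ/4 < a' + δ/2 by linarith)
        have hcCont : ContinuousAt (Fd s hs) c := not_not.mp hcD
        have ha'c : a' ≤ c := by linarith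
        have hcb : c ≤ b := by linarith
        have hac : a ≤ c := le_trans haa' ha'c
        have hLam : Lam s hs (truncE f hf a' b)
            = Lam s hs (truncE f hf a' c) + Lam s hs (truncE f hf c b) := by
          rw [trunc_split f hf ha'c hcb, map_add]
        have hInt : ∫ x in Set.Ioc a' b, f x ∂(md s hs)
            = (∫ x in Set.Ioc a' c, f x ∂(md s hs))
              + ∫ x in Set.Ioc c b, f x ∂(md s hs) := by
          rw [← Set.Ioc_union_Ioc_eq_Ioc ha'c hcb,
            setIntegral_union (Set.Ioc_disjoint_Ioc_of_le le_rfl) measurableSet_Ioc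
              (integrableOn_Ioc' s hs f hf a' c) (integrableOn_Ioc' s hs f hf c b)]
        -- short piece (a', c]
        have hshort : |Lam s hs (truncE f hf a' c) - ∫ x in Set.Ioc a' c, f x ∂(md s hs)|
            ≤ ε * ((Fd s hs c - Fd s hs a') + (Gd s hs c - Gd s hs a')) := by
          refine piece_est s hs f hf ha'c ha' hcCont hε.le fun x hx => ?_
          have hx1 : x ∈ Set.Icc a b := ⟨le_trans haa' hx.1.le, le_trans hx.2 hcb⟩
          have hc3 : c ∈ Set.Icc a b := ⟨hac, hcb⟩
          have hdist : dist x c < δ := by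
            rw [Real.dist_eq, abs_of_nonpos (by linarith [hx.2])]
            linarith [hx.1]
          exact (hucδ x hx1 c hc3 hdist).le
        -- IH on (c, b]
        have hIH := ihk c hac hcb hcCont (by
          have : b - c ≤ b - a' - δ/4 := by linarith
          have h4 : b - a' ≤ (k+1) * (δ/4) := by exact_mod_cast hlen
          have : b - c ≤ (k:ℝ) * (δ/4) := by push_cast at h4 ⊢; linarith
          exact this)
        calc |Lam s hs (truncE f hf a' b) - ∫ x in Set.Ioc a' b, f x ∂(md s hs)|
            = |(Lam s hs (truncE f hf a' c) - ∫ x in Set.Ioc a' c, f x ∂(md s hs))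
              + (Lam s hs (truncE f hf c b) - ∫ x in Set.Ioc c b, f x ∂(md s hs))| := by
              rw [hLam, hInt]; ring_nf
          _ ≤ |Lam s hs (truncE f hf a' c) - ∫ x in Set.Ioc a' c, f x ∂(md s hs)|
              + |Lam s hs (truncE f hf c b) - ∫ x in Set.Ioc c b, f x ∂(md s hs)| :=
              abs_add_le _ _
          _ ≤ ε * ((Fd s hs c - Fd s hs a') + (Gd s hs c - Gd s hs a'))
              + ε * ((Fd s hs b - Fd s hs c) + (Gd s hs b - Gd s hs c)) :=
              add_le_add hshort hIH
          _ = ε * ((Fd s hs b - Fd s hs a') + (Gd s hs b - Gd s hs a')) := by ring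
  obtain ⟨k, hk⟩ := exists_nat_ge ((b - a) / (δ/4))
  have hlen : b - a ≤ k * (δ/4) := by
    rw [div_le_iff₀ (by linarith)] at hk
    linarith
  have hfin := claim k a le_rfl hab ha hlen
  refine le_trans hfin ?_
  have e1 : Fd s hs b - Fd s hs a ≤ s 0 := by
    linarith [Fd_le s hs b, Fd_nonneg s hs a]
  have e2 : Gd s hs b - Gd s hs a ≤ s 0 := by
    linarith [Gd_le s hs b, Gd_nonneg s hs a]
  have e3 : 0 ≤ Fd s hs b - Fd s hs a := by linarith [Fd_mono s hs hab]
  have e4 : 0 ≤ Gd s hs b - Gd s hs a := by linarith [(Gd s hs).mono hab]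
  nlinarith

end Hamb

open MeasureTheory Polynomial Set Filter ENNReal Topology

namespace Hamb

variable (s : ℕ → ℝ)

lemma exists_cont_seq (hs : Hankel s) : ∃ A B : ℕ → ℝ,
    ∀ j : ℕ, ContinuousAt (Fd s hs) (A j) ∧ ContinuousAt (Fd s hs) (B j) ∧
      -(j:ℝ) - 1 < A j ∧ A j < -(j:ℝ) ∧ (j:ℝ) < B j ∧ B j < (j:ℝ) + 1 := by
  have hD : Dense {x : ℝ | ¬ContinuousAt (Fd s hs) x}ᶜ :=
    Set.Countable.dense_compl ℝ ((Fd_mono s hs).countable_not_continuousAt)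
  have hA : ∀ j : ℕ, ∃ x, ContinuousAt (Fd s hs) x ∧ -(j:ℝ) - 1 < x ∧ x < -(j:ℝ) := by
    intro j
    obtain ⟨x, hx, h1, h2⟩ := hD.exists_between (show -(j:ℝ) - 1 < -(j:ℝ) by linarith)
    exact ⟨x, not_not.mp hx, h1, h2⟩
  have hB : ∀ j : ℕ, ∃ x, ContinuousAt (Fd s hs) x ∧ (j:ℝ) < x ∧ x < (j:ℝ) + 1 := by
    intro j
    obtain ⟨x, hx, h1, h2⟩ := hD.exists_between (show (j:ℝ) < (j:ℝ) + 1 by linarith)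
    exact ⟨x, not_not.mp hx, h1, h2⟩
  choose A hA1 hA2 hA3 using hA
  choose B hB1 hB2 hB3 using hB
  exact ⟨A, B, fun j => ⟨hA1 j, hB1 j, hA2 j, hA3 j, hB2 j, hB3 j⟩⟩

/-- Λ of a truncation of a nonneg-power is at most the corresponding moment. -/
lemma Lam_trunc_pow_le (hs : Hankel s) (n : ℕ) (a b : ℝ) :
    Lam s hs (truncE (fun x => x^(2*n)) (continuous_pow _) a b) ≤ s (2*n) := by
  have h1 : Lam s hs (toE (X^(2*n))) = s (2*n) := by rw [Lam_toE, momL_X_pow]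
  rw [← h1]
  refine Lam_mono s hs fun x => ?_
  show (Set.Ioc a b).indicator (fun x => x^(2*n)) x ≤ (toE (X^(2*n))).1 x
  have h2 : (toE (X^(2*n))).1 x = x^(2*n) := by simp
  rw [h2]
  have hnn : (0:ℝ) ≤ x^(2*n) := by rw [pow_mul]; exact pow_nonneg (sq_nonneg x) n
  by_cases hx : x ∈ Set.Ioc a b
  · rw [Set.indicator_of_mem hx]
  · rw [Set.indicator_of_notMem hx]; exact hnn

lemma integral_trunc_pow_le (hs : Hankel s) (n : ℕ) {a b : ℝ} (hab : a ≤ b)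
    (ha : ContinuousAt (Fd s hs) a) (hb : ContinuousAt (Fd s hs) b) :
    ∫ x in Set.Ioc a b, x^(2*n) ∂(md s hs) ≤ s (2*n) := by
  rw [← key s hs _ (continuous_pow _) hab ha hb]
  exact Lam_trunc_pow_le s hs n a b

/-- All even moments are integrable. -/
lemma integrable_pow_even (hs : Hankel s) (n : ℕ) :
    Integrable (fun x : ℝ => x^(2*n)) (md s hs) := by
  obtain ⟨A, B, hAB⟩ := exists_cont_seq s hs
  have hABle : ∀ j, A j ≤ B j := by
    intro j
    have h := hAB j
    have : (0:ℝ) ≤ j := Nat.cast_nonneg j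
    linarith [h.2.2.2.1, h.2.2.2.2.1]
  have hnn : ∀ x : ℝ, (0:ℝ) ≤ x^(2*n) := fun x => by
    rw [pow_mul]; exact pow_nonneg (sq_nonneg x) n
  constructor
  · exact (continuous_pow _).aestronglyMeasurable
  · rw [hasFiniteIntegral_iff_norm]
    have hkey : ∫⁻ x, ENNReal.ofReal ‖x^(2*n)‖ ∂(md s hs) ≤ ENNReal.ofReal (s (2*n)) := by
      set g : ℕ → ℝ → ℝ≥0∞ := fun j x =>
        (Set.Ioc (A j) (B j)).indicator (fun x => ENNReal.ofReal (x^(2*n))) x with hg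
      have hmono : Monotone g := by
        intro i j hij x
        rcases eq_or_lt_of_le hij with rfl | hlt
        · exact le_rfl
        have hij1 : (i:ℝ) + 1 ≤ (j:ℝ) := by exact_mod_cast hlt
        have hsub : Set.Ioc (A i) (B i) ⊆ Set.Ioc (A j) (B j) := by
          apply Set.Ioc_subset_Ioc
          · have h1 := (hAB j).2.2.2.1
            have h2 := (hAB i).2.2.1
            linarith
          · have h1 := (hAB i).2.2.2.2.2
            have h2 := (hAB j).2.2.2.2.1
            linarith
        exact Set.indicator_le_indicator_of_subset hsub (fun y => zero_le) x
      have htend : ∀ x : ℝ, Tendsto (fun j => g j x) atTop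
          (𝓝 (ENNReal.ofReal (x^(2*n)))) := by
        intro x
        obtain ⟨j₀, hj₀⟩ := exists_nat_gt |x|
        refine Tendsto.congr' ?_ tendsto_const_nhds
        filter_upwards [eventually_ge_atTop j₀] with j hj
        have hxj : x ∈ Set.Ioc (A j) (B j) := by
          obtain ⟨h1, h2⟩ := abs_lt.mp hj₀
          have hj' : (j₀:ℝ) ≤ (j:ℝ) := by exact_mod_cast hj
          constructor
          · have := (hAB j).2.2.2.1; linarith
          · have := (hAB j).2.2.2.2.1; linarith
        rw [hg]
        simp only [Set.indicator_of_mem hxj]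
      have hlim : Tendsto (fun j => ∫⁻ x, g j x ∂(md s hs)) atTop
          (𝓝 (∫⁻ x, ENNReal.ofReal (x^(2*n)) ∂(md s hs))) := by
        refine lintegral_tendsto_of_tendsto_of_monotone ?_ ?_ ?_
        · intro j
          refine (AEMeasurable.indicator ?_ measurableSet_Ioc)
          exact (ENNReal.measurable_ofReal.comp ((continuous_pow (2*n)).measurable)).aemeasurable
        · exact Filter.Eventually.of_forall fun x i j hij => hmono hij x
        · exact Filter.Eventually.of_forall htend
      have hbound : ∀ j, ∫⁻ x, g j x ∂(md s hs) ≤ ENNReal.ofReal (s (2*n)) := by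
        intro j
        rw [hg]
        simp only
        rw [lintegral_indicator measurableSet_Ioc]
        have heq : ∫⁻ x in Set.Ioc (A j) (B j), ENNReal.ofReal (x^(2*n)) ∂(md s hs)
            = ENNReal.ofReal (∫ x in Set.Ioc (A j) (B j), x^(2*n) ∂(md s hs)) := by
          rw [← ofReal_integral_eq_lintegral_ofReal
            (integrableOn_Ioc' s hs _ (continuous_pow _) _ _)
            (Filter.Eventually.of_forall fun x => hnn x)]
        rw [heq]
        exact ENNReal.ofReal_le_ofReal (integral_trunc_pow_le s hs n (hABle j)
          ((hAB j).1) ((hAB j).2.1))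
      have := le_of_tendsto hlim (Filter.Eventually.of_forall hbound)
      calc ∫⁻ x, ENNReal.ofReal ‖x^(2*n)‖ ∂(md s hs)
          = ∫⁻ x, ENNReal.ofReal (x^(2*n)) ∂(md s hs) := by
            refine lintegral_congr fun x => ?_
            rw [Real.norm_eq_abs, abs_of_nonneg (hnn x)]
        _ ≤ ENNReal.ofReal (s (2*n)) := this
    exact lt_of_le_of_lt hkey ENNReal.ofReal_lt_top

/-- All moments are integrable. -/
lemma integrable_pow (hs : Hankel s) (n : ℕ) :
    Integrable (fun x : ℝ => x^n) (md s hs) := by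
  have h2n := integrable_pow_even s hs n
  have h1 : Integrable (fun x : ℝ => 1 + x^(2*n)) (md s hs) :=
    (integrable_const 1).add h2n
  refine h1.mono' (continuous_pow n).aestronglyMeasurable
    (Filter.Eventually.of_forall fun x => ?_)
  rw [Real.norm_eq_abs, abs_pow]
  have hx2 : |x|^(2*n) = x^(2*n) := by
    rw [← abs_pow]
    exact abs_of_nonneg (by rw [pow_mul]; exact pow_nonneg (sq_nonneg x) n)
  by_cases hx : |x| ≤ 1
  · have : |x|^n ≤ 1 := pow_le_one₀ (abs_nonneg x) hx
    have h0 : (0:ℝ) ≤ x^(2*n) := by rw [pow_mul]; exact pow_nonneg (sq_nonneg x) n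
    linarith
  · push_neg at hx
    have h2 : |x|^n ≤ |x|^(2*n) := pow_le_pow_right₀ hx.le (by omega)
    have h0 : (0:ℝ) ≤ |x|^n := pow_nonneg (abs_nonneg x) n
    rw [hx2] at h2
    linarith

end Hamb

open MeasureTheory Polynomial Set Filter ENNReal Topology

namespace Hamb

variable (s : ℕ → ℝ)

lemma abs_Lam_le (hs : Hankel s) {g h : EE} (hgh : ∀ x, |g.1 x| ≤ h.1 x) :
    |Lam s hs g| ≤ Lam s hs h := by
  have h1 : Lam s hs g ≤ Lam s hs h :=
    Lam_mono s hs fun x => (abs_le.mp (hgh x)).2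
  have h2 : Lam s hs (-g) ≤ Lam s hs h := by
    refine Lam_mono s hs fun x => ?_
    have : ((-g : EE) : ℝ → ℝ) x = -(g.1 x) := rfl
    rw [this]
    linarith [(abs_le.mp (hgh x)).1]
  rw [map_neg] at h2
  exact abs_le.mpr ⟨by linarith, h1⟩

lemma mom_eq (hs : Hankel s) (n : ℕ) : s n = ∫ x, x^n ∂(md s hs) := by
  obtain ⟨A, B, hAB⟩ := exists_cont_seq s hs
  have hABle : ∀ j, A j ≤ B j := by
    intro j
    have h := hAB j
    have : (0:ℝ) ≤ j := Nat.cast_nonneg j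
    linarith [h.2.2.2.1, h.2.2.2.2.1]
  set I : ℕ → ℝ := fun j => ∫ x in Set.Ioc (A j) (B j), x^n ∂(md s hs) with hI
  have hkeyj : ∀ j, Lam s hs (truncE (fun x => x^n) (continuous_pow n) (A j) (B j)) = I j :=
    fun j => key s hs _ (continuous_pow n) (hABle j) ((hAB j).1) ((hAB j).2.1)
  have hsn : s n = Lam s hs (toE (X^n)) := by rw [Lam_toE, momL_X_pow]
  have heven : ∀ x : ℝ, (0:ℝ) ≤ x^(2*n+2) := by
    intro x
    have : 2*n+2 = 2*(n+1) := by ring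
    rw [this, pow_mul]
    exact pow_nonneg (sq_nonneg x) _
  have htail : ∀ j : ℕ, 1 ≤ j → |s n - I j| ≤ s (2*n+2) / j := by
    intro j hj
    have hj0 : (0:ℝ) < j := by exact_mod_cast hj
    have hj1 : (1:ℝ) ≤ j := by exact_mod_cast hj
    rw [← hkeyj j, hsn, ← map_sub]
    have hptw : ∀ x : ℝ, |((toE (X^n)
        - truncE (fun x => x^n) (continuous_pow n) (A j) (B j) : EE) : ℝ → ℝ) x|
        ≤ (((1/(j:ℝ)) • toE (X^(2*n+2)) : EE) : ℝ → ℝ) x := by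
      intro x
      have hlhs : ((toE (X^n)
          - truncE (fun x => x^n) (continuous_pow n) (A j) (B j) : EE) : ℝ → ℝ) x
          = x^n - (Set.Ioc (A j) (B j)).indicator (fun x => x^n) x := by
        show (toE (X^n)).1 x - _ = _
        simp
      have hrhs : (((1/(j:ℝ)) • toE (X^(2*n+2)) : EE) : ℝ → ℝ) x
          = (1/(j:ℝ)) * x^(2*n+2) := by
        show (1/(j:ℝ)) * (toE (X^(2*n+2))).1 x = _
        simp
      rw [hlhs, hrhs]
      by_cases hx : x ∈ Set.Ioc (A j) (B j)
      · rw [Set.indicator_of_mem hx]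
        simp only [sub_self, abs_zero]
        exact mul_nonneg (by positivity) (heven x)
      · rw [Set.indicator_of_notMem hx, sub_zero]
        have hxj : (j:ℝ) < |x| := by
          rcases not_and_or.mp hx with h1 | h2
          · push_neg at h1
            have := (hAB j).2.2.2.1
            have hx1 : x < -(j:ℝ) := by linarith
            rw [abs_of_neg (by linarith)]
            linarith
          · push_neg at h2
            have := (hAB j).2.2.2.2.1
            rw [abs_of_pos (by linarith)]
            linarith
        have h1x : (1:ℝ) ≤ |x| := le_trans hj1 hxj.le
        have hchain : (j:ℝ) * |x|^n ≤ |x|^(2*n+2) := by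
          have e1 : |x|^(2*n+2) = |x|^(n+2) * |x|^n := by
            rw [← pow_add]; congr 1; ring
          have e2 : (j:ℝ) ≤ |x|^(n+2) := by
            refine le_trans hxj.le (le_self_pow₀ h1x (by omega))
          rw [e1]
          exact mul_le_mul_of_nonneg_right e2 (pow_nonneg (abs_nonneg x) n)
        have habs : |x^n| = |x|^n := abs_pow x n
        have heq : |x|^(2*n+2) = x^(2*n+2) := by
          rw [← abs_pow]
          exact abs_of_nonneg (heven x)
        rw [habs]
        have hfin : |x|^n ≤ x^(2*n+2) / j := by
          rw [le_div_iff₀ hj0]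
          calc |x|^n * (j:ℝ) = (j:ℝ) * |x|^n := by ring
            _ ≤ |x|^(2*n+2) := hchain
            _ = x^(2*n+2) := heq
        calc |x|^n ≤ x^(2*n+2)/j := hfin
          _ = 1/(j:ℝ) * x^(2*n+2) := by ring

    refine le_trans (abs_Lam_le s hs hptw) (le_of_eq ?_)
    rw [_root_.map_smul, smul_eq_mul, Lam_toE, momL_X_pow]
    ring
  have hlim1 : Tendsto (fun j : ℕ => s (2*n+2) / j) atTop (𝓝 0) :=
    tendsto_const_div_atTop_nhds_zero_nat _
  have htendI : Tendsto I atTop (𝓝 (s n)) := by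
    have h0 : Tendsto (fun j => I j - s n) atTop (𝓝 0) := by
      refine squeeze_zero_norm' ?_ hlim1
      filter_upwards [eventually_ge_atTop 1] with j hj
      rw [Real.norm_eq_abs, abs_sub_comm]
      exact htail j hj
    have := h0.add (tendsto_const_nhds (x := s n))
    simpa using this
  have htendI2 : Tendsto I atTop (𝓝 (∫ x, x^n ∂(md s hs))) := by
    have hIeq : ∀ j, I j = ∫ x, (Set.Ioc (A j) (B j)).indicator (fun x => x^n) x
        ∂(md s hs) := fun j => (integral_indicator measurableSet_Ioc).symm
    rw [show I = fun j => ∫ x, (Set.Ioc (A j) (B j)).indicator (fun x => x^n) x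
        ∂(md s hs) from funext hIeq]
    have hbint : Integrable (fun x : ℝ => |x|^n) (md s hs) := by
      refine (integrable_pow s hs n).abs.congr ?_
      exact Filter.Eventually.of_forall fun x => (abs_pow x n)
    refine tendsto_integral_of_dominated_convergence (fun x => |x|^n)
      (fun j => ((continuous_pow n).aestronglyMeasurable).indicator measurableSet_Ioc)
      hbint ?_ ?_
    · intro j
      refine Filter.Eventually.of_forall fun x => ?_
      by_cases hx : x ∈ Set.Ioc (A j) (B j)
      · rw [Set.indicator_of_mem hx, Real.norm_eq_abs, abs_pow]
      · rw [Set.indicator_of_notMem hx]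
        simp [pow_nonneg (abs_nonneg x) n]
    · refine Filter.Eventually.of_forall fun x => ?_
      obtain ⟨j₀, hj₀⟩ := exists_nat_gt |x|
      refine Tendsto.congr' ?_ tendsto_const_nhds
      filter_upwards [eventually_ge_atTop j₀] with j hj
      have hxj : x ∈ Set.Ioc (A j) (B j) := by
        obtain ⟨h1, h2⟩ := abs_lt.mp hj₀
        have hj' : (j₀:ℝ) ≤ (j:ℝ) := by exact_mod_cast hj
        constructor
        · have := (hAB j).2.2.2.1; linarith
        · have := (hAB j).2.2.2.2.1; linarith
      rw [Set.indicator_of_mem hxj]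
  exact tendsto_nhds_unique htendI htendI2

theorem hard_dir (hs : Hankel s) :
    ∃ μ : Measure ℝ, (IsFiniteMeasureOnCompacts μ ∧ μ.InnerRegular) ∧
      ∀ n : ℕ, Integrable (fun x : ℝ => x ^ n) μ ∧ s n = ∫ x : ℝ, x ^ n ∂μ := by
  refine ⟨md s hs, ⟨inferInstance, inferInstance⟩, fun n =>
    ⟨integrable_pow s hs n, mom_eq s hs n⟩⟩

end Hamb

/-- Hamburger's theorem: a real sequence is a moment sequence of a Radon measure on `ℝ`
iff all its Hankel matrices are positive semidefinite. -/
theorem hamburger (s : ℕ → ℝ) :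
    (∃ μ : Measure ℝ, IsRadon μ ∧
      ∀ n : ℕ, Integrable (fun x : ℝ => x ^ n) μ ∧ s n = ∫ x : ℝ, x ^ n ∂μ) ↔
    (∀ n : ℕ, Matrix.PosSemidef (Matrix.of fun i j : Fin (n + 1) => s ((i : ℕ) + (j : ℕ)))) := by
  constructor
  · rintro ⟨μ, _, h⟩
    exact Hamb.easy_dir s μ h
  · intro hs
    obtain ⟨μ, hrad, h⟩ := Hamb.hard_dir s hs
    exact ⟨μ, ⟨hrad.1, hrad.2⟩, h⟩
end

section
/- Richter–Tchakaloff theorem: Let (Y, 𝒜, μ) be a measure space and let V be a finite-dimensional linear space of μ-integrable measurable real-valued functions on Y. Then there exist k ∈ ℕ₀ with k ≤ dim V, pairwise distinct points x₁,…,x_k ∈ Y and positive real numbers m₁,…,m_k such that ∫_Y f dμ = ∑_{j=1}^k m_j f(x_j) for every f ∈ V. -/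
set_option linter.unusedSectionVars false

open MeasureTheory Finset Module Submodule Pointwise

section ConeBasics

variable {Y : Type*} [MeasurableSpace Y]
variable {E : Type*} [NormedAddCommGroup E] [NormedSpace ℝ E]

/-- The conic hull (with nonnegative weights) of the image of `Z` under `g`. -/
def coneOf (g : Y → E) (Z : Set Y) : Set E :=
  {x | ∃ (s : Finset Y) (w : Y → ℝ), ↑s ⊆ Z ∧ (∀ y ∈ s, 0 ≤ w y) ∧ x = ∑ y ∈ s, w y • g y}

lemma coneOf_zero_mem (g : Y → E) (Z : Set Y) : (0 : E) ∈ coneOf g Z :=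
  ⟨∅, fun _ => 0, by simp, by simp, by simp⟩

lemma coneOf_g_mem (g : Y → E) {Z : Set Y} {y : Y} (hy : y ∈ Z) : g y ∈ coneOf g Z :=
  ⟨{y}, fun _ => 1, by simpa, by simp, by simp⟩

lemma coneOf_add_mem (g : Y → E) (Z : Set Y) {x₁ x₂ : E} (h₁ : x₁ ∈ coneOf g Z)
    (h₂ : x₂ ∈ coneOf g Z) : x₁ + x₂ ∈ coneOf g Z := by
  classical
  obtain ⟨s₁, w₁, hs₁, hw₁, rfl⟩ := h₁
  obtain ⟨s₂, w₂, hs₂, hw₂, rfl⟩ := h₂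
  refine ⟨s₁ ∪ s₂, fun y => (if y ∈ s₁ then w₁ y else 0) + (if y ∈ s₂ then w₂ y else 0),
    ?_, ?_, ?_⟩
  · intro y hy
    rcases Finset.mem_union.mp (by exact_mod_cast hy) with h | h
    exacts [hs₁ h, hs₂ h]
  · intro y _
    apply add_nonneg
    · split
      · exact hw₁ _ ‹_›
      · exact le_rfl
    · split
      · exact hw₂ _ ‹_›
      · exact le_rfl
  · simp only [add_smul, Finset.sum_add_distrib, ite_smul, zero_smul]
    rw [Finset.sum_ite_mem, Finset.sum_ite_mem, Finset.union_inter_cancel_left,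
      Finset.union_inter_cancel_right]

lemma coneOf_smul_mem (g : Y → E) (Z : Set Y) {x : E} {t : ℝ} (ht : 0 ≤ t)
    (h : x ∈ coneOf g Z) : t • x ∈ coneOf g Z := by
  obtain ⟨s, w, hs, hw, rfl⟩ := h
  exact ⟨s, fun y => t * w y, hs, fun y hy => mul_nonneg ht (hw y hy), by
    rw [Finset.smul_sum]; exact Finset.sum_congr rfl fun y hy => (mul_smul t (w y) (g y)).symm⟩

lemma coneOf_convex (g : Y → E) (Z : Set Y) : Convex ℝ (coneOf g Z) := by
  intro x hx y hy a b ha hb _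
  exact coneOf_add_mem g Z (coneOf_smul_mem g Z ha hx) (coneOf_smul_mem g Z hb hy)

lemma coneOf_subset_span (g : Y → E) (Z : Set Y) :
    coneOf g Z ⊆ (span ℝ (g '' Z) : Submodule ℝ E) := by
  rintro x ⟨s, w, hs, hw, rfl⟩
  exact Submodule.sum_mem _ fun y hy =>
    Submodule.smul_mem _ _ (subset_span ⟨y, hs hy, rfl⟩)

lemma coneOf_mono (g : Y → E) {Z Z' : Set Y} (h : Z' ⊆ Z) : coneOf g Z' ⊆ coneOf g Z := by
  rintro x ⟨s, w, hs, hw, rfl⟩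
  exact ⟨s, w, fun y hy => h (hs hy), hw, rfl⟩

lemma sep_lemma {E : Type*} [NormedAddCommGroup E] [NormedSpace ℝ E] {D : Set E}
    (hD : Convex ℝ D) {x₀ : E} (hx₀ : x₀ ∈ interior D) {L : E} (hL : L ∉ D) :
    ∃ φ : E →L[ℝ] ℝ, (∀ x ∈ closure D, φ x ≤ φ L) ∧ φ x₀ < φ L := by
  have hLi : L ∉ interior (closure D) := by
    intro hLi
    apply hL
    have hcont : Continuous fun t : ℝ => L + t • (L - x₀) := by continuity
    have h0 : (fun t : ℝ => L + t • (L - x₀)) 0 ∈ interior (closure D) := by simpa using hLi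
    have hev : ∀ᶠ t in nhds (0:ℝ), L + t • (L - x₀) ∈ interior (closure D) :=
      hcont.continuousAt.eventually_mem (isOpen_interior.mem_nhds h0)
    obtain ⟨ε, hε, hball⟩ := Metric.eventually_nhds_iff.mp hev
    set t := ε / 2 with ht
    have ht0 : 0 < t := by positivity
    have hft : L + t • (L - x₀) ∈ closure D := by
      refine interior_subset (hball ?_)
      simp [ht, abs_of_pos hε, Real.dist_eq]
      linarith
    have h1t : (0:ℝ) < 1 + t := by linarith
    have hcombo : (t / (1 + t)) • x₀ + (1 / (1 + t)) • (L + t • (L - x₀)) = L := by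
      match_scalars <;> field_simp <;> ring
    have := hD.combo_interior_closure_mem_interior hx₀ hft
      (by positivity : (0:ℝ) < t / (1 + t)) (by positivity : (0:ℝ) ≤ 1 / (1 + t))
      (by field_simp; ring)
    rw [hcombo] at this
    exact interior_subset this
  obtain ⟨φ, hφ⟩ := geometric_hahn_banach_open_point (hD.closure.interior) isOpen_interior hLi
  have hx₀' : x₀ ∈ interior (closure D) := interior_mono subset_closure hx₀
  refine ⟨φ, ?_, hφ _ hx₀'⟩
  intro x hx
  have key : ∀ t : ℝ, t ∈ Set.Ioc (0:ℝ) 1 → φ (t • x₀ + (1 - t) • x) < φ L := by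
    intro t ht
    refine hφ _ (hD.closure.combo_interior_closure_mem_interior hx₀' ?_ ht.1
      (by linarith [ht.2]) (by ring))
    rwa [closure_closure]
  have hcont : Continuous fun t : ℝ => φ (t • x₀ + (1 - t) • x) := by continuity
  have htend : Filter.Tendsto (fun t : ℝ => φ (t • x₀ + (1 - t) • x))
      (nhdsWithin 0 (Set.Ioi 0)) (nhds (φ x)) := by
    have := hcont.tendsto 0
    simp only [zero_smul, sub_zero, one_smul, zero_add] at this
    exact this.mono_left nhdsWithin_le_nhds
  refine le_of_tendsto htend ?_
  filter_upwards [Ioc_mem_nhdsGT_of_mem (Set.mem_Ico.mpr ⟨le_refl 0, zero_lt_one⟩)] with t ht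
  exact (key t ht).le

lemma cara {Y : Type*} {E : Type*} [AddCommGroup E] [Module ℝ E]
    (g : Y → E) :
    ∀ (N : ℕ) (s : Finset Y), s.card ≤ N → ∀ (w : Y → ℝ), (∀ y ∈ s, 0 < w y) →
    ∃ (t : Finset Y) (v : Y → ℝ), t ⊆ s ∧ (∀ y ∈ t, 0 < v y) ∧
      LinearIndependent ℝ (fun y : ↥t => g ↑y) ∧
      ∑ y ∈ t, v y • g y = ∑ y ∈ s, w y • g y := by
  classical
  intro N
  induction N with
  | zero =>
    intro s hs w hw
    have : s = ∅ := Finset.card_eq_zero.mp (Nat.le_zero.mp hs)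
    subst this
    exact ⟨∅, w, subset_rfl, hw, linearIndependent_empty_type, rfl⟩
  | succ N ih =>
    intro s hs w hw
    by_cases hLI : LinearIndependent ℝ (fun y : ↥s => g ↑y)
    · exact ⟨s, w, subset_rfl, hw, hLI, rfl⟩
    obtain ⟨c₀, hc₀, i₀, hi₀⟩ := Fintype.not_linearIndependent_iff.mp hLI
    have hex : ∃ (c : ↥s → ℝ), (∑ i, c i • g ↑i = 0) ∧ ∃ i, 0 < c i := by
      rcases hi₀.lt_or_gt with h | h
      · refine ⟨-c₀, ?_, i₀, by simpa using h⟩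
        simp only [Pi.neg_apply, neg_smul, Finset.sum_neg_distrib, hc₀, neg_zero]
      · exact ⟨c₀, hc₀, i₀, h⟩
    obtain ⟨c, hc, i₀', hi₀'⟩ := hex
    set T := Finset.univ.filter (fun i : ↥s => 0 < c i) with hT
    have hTne : T.Nonempty := ⟨i₀', by simp [hT, hi₀']⟩
    obtain ⟨istar, histar, hmin⟩ := T.exists_min_image (fun i => w ↑i / c i) hTne
    have hcistar : 0 < c istar := (Finset.mem_filter.mp histar).2
    set τ := w ↑istar / c istar with hτ
    have hτ0 : 0 < τ := div_pos (hw _ istar.2) hcistar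
    set w' : Y → ℝ := fun y => w y - τ * (if h : y ∈ s then c ⟨y, h⟩ else 0) with hw'
    have hw'nonneg : ∀ y ∈ s, 0 ≤ w' y := by
      intro y hy
      simp only [hw', dif_pos hy]
      rcases le_or_gt (c ⟨y, hy⟩) 0 with h | h
      · nlinarith [hw y hy, mul_nonpos_of_nonneg_of_nonpos hτ0.le h]
      · have hmem : (⟨y, hy⟩ : ↥s) ∈ T := Finset.mem_filter.mpr ⟨Finset.mem_univ _, h⟩
        have := (le_div_iff₀ h).mp (hmin _ hmem)
        linarith
    have hw'istar : w' ↑istar = 0 := by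
      simp only [hw', dif_pos istar.2, Subtype.coe_eta, hτ]
      field_simp
      ring
    have hdite : ∑ y ∈ s, (if h : y ∈ s then c ⟨y, h⟩ else 0) • g y = 0 := by
      rw [← Finset.sum_coe_sort s (fun y => (if h : y ∈ s then c ⟨y, h⟩ else 0) • g y)]
      rw [← hc]
      exact Finset.sum_congr rfl fun i _ => by simp [i.2]
    have hsum' : ∑ y ∈ s, w' y • g y = ∑ y ∈ s, w y • g y := by
      simp only [hw', sub_smul, Finset.sum_sub_distrib, mul_smul]
      rw [← Finset.smul_sum, hdite, smul_zero, sub_zero]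
    set s' := s.filter (fun y => w' y ≠ 0) with hs'
    have hsub : s' ⊆ s.erase ↑istar := by
      intro y hy
      obtain ⟨hys, hyne⟩ := Finset.mem_filter.mp hy
      refine Finset.mem_erase.mpr ⟨?_, hys⟩
      rintro rfl
      exact hyne hw'istar
    have hcard : s'.card ≤ N := by
      have h1 := Finset.card_le_card hsub
      rw [Finset.card_erase_of_mem istar.2] at h1
      have h2 : 1 ≤ s.card := Finset.card_pos.mpr ⟨↑istar, istar.2⟩
      omega
    obtain ⟨t, v, hts, hv, hli, hsum⟩ := ih s' hcard w' (by
      intro y hy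
      obtain ⟨hys, hyne⟩ := Finset.mem_filter.mp hy
      exact lt_of_le_of_ne (hw'nonneg y hys) (Ne.symm hyne))
    refine ⟨t, v, hts.trans (Finset.filter_subset _ _), hv, hli, ?_⟩
    rw [hsum, ← hsum']
    exact Finset.sum_filter_of_ne fun y hy hne => fun h => hne (by rw [h, zero_smul])

set_option maxHeartbeats 1000000 in
lemma coneA [MeasurableSpace E] [BorelSpace E] [FiniteDimensional ℝ E]
    (μ : Measure Y) (g : Y → E) (hg : Measurable g) :
    ∀ (n : ℕ) (Z : Set Y), MeasurableSet Z → IntegrableOn g Z μ →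
      finrank ℝ (span ℝ (g '' Z)) ≤ n → (∫ y in Z, g y ∂μ) ∈ coneOf g Z := by
  intro n
  induction n with
  | zero =>
    intro Z hZ hint hrank
    have hbot : span ℝ (g '' Z) = ⊥ := by
      have h0 : finrank ℝ (span ℝ (g '' Z)) = 0 := Nat.le_zero.mp hrank
      exact (Submodule.finrank_eq_zero (R := ℝ) (M := E)).mp h0
    have hzero : ∀ y ∈ Z, g y = 0 := by
      intro y hy
      have hmem : g y ∈ span ℝ (g '' Z) := subset_span (Set.mem_image_of_mem g hy)
      rw [hbot, Submodule.mem_bot] at hmem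
      exact hmem
    have : ∫ y in Z, g y ∂μ = 0 := by
      rw [setIntegral_congr_fun hZ hzero, integral_zero]
    rw [this]
    exact coneOf_zero_mem g Z
  | succ n ih =>
    intro Z hZ hint hrank
    set L := ∫ y in Z, g y ∂μ with hL
    by_cases hmem : L ∈ coneOf g Z
    · exact hmem
    exfalso
    set S₀ := span ℝ (g '' Z) with hS₀
    have hC_sub : coneOf g Z ⊆ (S₀ : Set E) := coneOf_subset_span g Z
    -- Step 1 : L ∈ closure of the cone
    have hLclC : L ∈ closure (coneOf g Z) := by
      by_contra hnot
      obtain ⟨f, u, hfu, hub⟩ := geometric_hahn_banach_point_closed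
        ((coneOf_convex g Z).closure) isClosed_closure hnot
      have hu0 : u < 0 := by
        simpa using hub 0 (subset_closure (coneOf_zero_mem g Z))
      have hfg : ∀ y ∈ Z, 0 ≤ f (g y) := by
        intro y hy
        by_contra hneg
        push_neg at hneg
        set t := (u - 1) / f (g y) with htdef
        have ht0 : 0 < t := div_pos_of_neg_of_neg (by linarith) hneg
        have hmem2 : t • g y ∈ coneOf g Z :=
          coneOf_smul_mem _ _ ht0.le (coneOf_g_mem g hy)
        have h2 := hub _ (subset_closure hmem2)
        rw [_root_.map_smul, smul_eq_mul] at h2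
        have : t * f (g y) = u - 1 := div_mul_cancel₀ _ hneg.ne
        linarith
      have hfL : 0 ≤ f L := by
        have heq : ∫ y in Z, f (g y) ∂μ = f L :=
          ContinuousLinearMap.integral_comp_comm f hint
        rw [← heq]
        exact setIntegral_nonneg hZ hfg
      linarith
    -- Step 2 : L ∈ S₀
    have hLS₀ : L ∈ S₀ := by
      have hcl : closure (coneOf g Z) ⊆ (S₀ : Set E) :=
        closure_minimal hC_sub S₀.closed_of_finiteDimensional
      exact hcl hLclC
    obtain ⟨W', hcompl⟩ := Submodule.exists_isCompl S₀
    set D := coneOf g Z + (W' : Set E) with hD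
    have hDconv : Convex ℝ D := (coneOf_convex g Z).add W'.convex
    have h0D : (0 : E) ∈ D := by
      have := Set.add_mem_add (coneOf_zero_mem g Z) (W'.zero_mem)
      simpa using this
    have hCD : coneOf g Z ⊆ D := fun x hx => by
      have := Set.add_mem_add hx W'.zero_mem
      simpa using this
    have hWD : (W' : Set E) ⊆ D := fun x hx => by
      have := Set.add_mem_add (coneOf_zero_mem g Z) hx
      simpa using this
    have hspanD : Submodule.span ℝ D = ⊤ := by
      have h1 : S₀ ≤ span ℝ D := by
        rw [hS₀]
        refine span_le.mpr ?_
        rintro x ⟨y, hy, rfl⟩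
        exact subset_span (hCD (coneOf_g_mem g hy))
      have h2 : W' ≤ span ℝ D := fun x hx => subset_span (hWD hx)
      rw [eq_top_iff, ← hcompl.sup_eq_top]
      exact sup_le h1 h2
    have haff : affineSpan ℝ D = ⊤ := by
      rw [AffineSubspace.affineSpan_eq_top_iff_vectorSpan_eq_top_of_nonempty ℝ E E ⟨0, h0D⟩]
      rw [vectorSpan_eq_span_vsub_set_right ℝ h0D]
      simpa [vsub_eq_sub] using hspanD
    obtain ⟨x₀, hx₀⟩ := hDconv.interior_nonempty_iff_affineSpan_eq_top.mpr haff
    have hLD : L ∉ D := by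
      rintro ⟨cpt, hcpt, v, hv, hsumLv⟩
      have hsum2 : cpt + v = L := hsumLv
      have hc0 : cpt ∈ S₀ := hC_sub hcpt
      have hvS : v ∈ S₀ := by
        have hveq : v = L - cpt := by rw [← hsum2]; abel
        rw [hveq]
        exact sub_mem hLS₀ hc0
      have hvbot : v ∈ S₀ ⊓ W' := ⟨hvS, hv⟩
      rw [hcompl.inf_eq_bot, Submodule.mem_bot] at hvbot
      subst hvbot
      rw [add_zero] at hsum2
      exact hmem (hsum2 ▸ hcpt)
    obtain ⟨φ, hφle, hφlt⟩ := sep_lemma hDconv hx₀ hLD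
    have hφL0 : φ L = 0 := by
      have h2L : (2 : ℝ) • L ∈ closure (coneOf g Z) := by
        have himg : (2 : ℝ) • L ∈ (fun x => (2:ℝ) • x) '' closure (coneOf g Z) :=
          ⟨L, hLclC, rfl⟩
        have h1 := image_closure_subset_closure_image
          (continuous_const_smul (2:ℝ)) himg
        refine closure_mono ?_ h1
        rintro x ⟨c, hc, rfl⟩
        exact coneOf_smul_mem g Z (by norm_num) hc
      have hle2 : φ ((2 : ℝ) • L) ≤ φ L := hφle _ (closure_mono hCD h2L)
      have h0le : (0 : ℝ) ≤ φ L := by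
        simpa using hφle 0 (subset_closure h0D)
      rw [_root_.map_smul, smul_eq_mul] at hle2
      linarith
    have hφW : ∀ v ∈ W', φ v = 0 := by
      intro v hv
      have h1 := hφle v (subset_closure (hWD hv))
      have h2 := hφle (-v) (subset_closure (hWD (neg_mem hv)))
      rw [hφL0] at h1 h2
      rw [map_neg] at h2
      linarith
    have hφg : ∀ y ∈ Z, φ (g y) ≤ 0 := fun y hy =>
      hφL0 ▸ hφle _ (subset_closure (hCD (coneOf_g_mem g hy)))
    have hy₀ : ∃ y₀ ∈ Z, φ (g y₀) ≠ 0 := by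
      by_contra hall
      push_neg at hall
      have hφS₀ : ∀ x ∈ S₀, φ x = 0 := by
        intro x hx
        have hker : S₀ ≤ LinearMap.ker (φ : E →ₗ[ℝ] ℝ) := by
          rw [hS₀]
          refine span_le.mpr ?_
          rintro _ ⟨y, hy, rfl⟩
          exact LinearMap.mem_ker.mpr (hall y hy)
        exact hker hx
      have hx₀0 : φ x₀ = 0 := by
        have hx₀top : x₀ ∈ S₀ ⊔ W' := by rw [hcompl.sup_eq_top]; trivial
        obtain ⟨a, ha, b, hb, rfl⟩ := Submodule.mem_sup.mp hx₀top
        rw [map_add, hφS₀ a ha, hφW b hb, add_zero]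
      rw [hφL0, hx₀0] at hφlt
      exact lt_irrefl 0 hφlt
    obtain ⟨y₀, hy₀Z, hy₀ne⟩ := hy₀
    -- a.e. vanishing of φ ∘ g on Z
    have hφgint : IntegrableOn (fun y => φ (g y)) Z μ := φ.integrable_comp hint
    have hintzero : ∫ y in Z, -φ (g y) ∂μ = 0 := by
      rw [integral_neg, ContinuousLinearMap.integral_comp_comm φ hint, hφL0, neg_zero]
    have hae : (fun y => -φ (g y)) =ᵐ[μ.restrict Z] 0 := by
      refine (integral_eq_zero_iff_of_nonneg_ae ?_ hφgint.neg).mp hintzero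
      refine (ae_restrict_iff' hZ).mpr (Filter.Eventually.of_forall ?_)
      intro y hy
      simpa using neg_nonneg.mpr (hφg y hy)
    set Z' := Z ∩ {y | φ (g y) = 0} with hZ'def
    have hmeasset : MeasurableSet {y | φ (g y) = 0} :=
      (φ.continuous.measurable.comp hg) (measurableSet_singleton 0)
    have hZ'meas : MeasurableSet Z' := hZ.inter hmeasset
    have hZZ' : Z =ᵐ[μ] Z' := by
      rw [MeasureTheory.ae_eq_set]
      constructor
      · have h2 : ∀ᵐ y ∂μ.restrict Z, φ (g y) = 0 := by
          filter_upwards [hae] with y hy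
          simpa [neg_eq_zero] using hy
        rw [MeasureTheory.ae_iff] at h2
        rw [← Set.compl_setOf, Measure.restrict_apply hmeasset.compl] at h2
        refine measure_mono_null ?_ h2
        intro y hy
        obtain ⟨hyZ, hyZ'⟩ := hy
        refine ⟨fun h => hyZ' ⟨hyZ, h⟩, hyZ⟩
      · have hempty : Z' \ Z = ∅ := by
          rw [Set.diff_eq_empty]
          exact Set.inter_subset_left
        simp [hempty]
    have hrestr : μ.restrict Z = μ.restrict Z' := Measure.restrict_congr_set hZZ'
    have hker' : span ℝ (g '' Z') ≤ LinearMap.ker (φ : E →ₗ[ℝ] ℝ) := by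
      refine span_le.mpr ?_
      rintro _ ⟨y, hy, rfl⟩
      exact LinearMap.mem_ker.mpr hy.2
    have hlt : span ℝ (g '' Z') < S₀ := by
      refine lt_of_le_of_ne (span_mono (Set.image_mono (f := g) Set.inter_subset_left)) ?_
      intro heq
      have h1 : g y₀ ∈ S₀ := subset_span (Set.mem_image_of_mem g hy₀Z)
      rw [← heq] at h1
      exact hy₀ne (hker' h1)
    have hrank' : finrank ℝ (span ℝ (g '' Z')) ≤ n := by
      have hlt2 := Submodule.finrank_lt_finrank_of_lt hlt
      omega
    have hint' : IntegrableOn g Z' μ := hint.mono_set Set.inter_subset_left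
    have hIH := ih Z' hZ'meas hint' hrank'
    apply hmem
    rw [hL, show (∫ y in Z, g y ∂μ) = ∫ y in Z', g y ∂μ from by rw [hrestr]]
    exact coneOf_mono g Set.inter_subset_left hIH

end ConeBasics

set_option maxHeartbeats 1000000 in
/-- Richter–Tchakaloff theorem: every integral functional on a finite-dimensional space of
integrable functions is given by a finitely atomic measure with at most `dim V` atoms. -/
theorem richter_tchakaloff {Y : Type*} [MeasurableSpace Y] (μ : Measure Y)
    (V : Submodule ℝ (Y → ℝ)) [FiniteDimensional ℝ V]
    (hmeas : ∀ f ∈ V, Measurable f) (hint : ∀ f ∈ V, Integrable f μ) :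
    ∃ (k : ℕ), k ≤ Module.finrank ℝ V ∧
      ∃ (x : Fin k → Y) (m : Fin k → ℝ), Function.Injective x ∧ (∀ j, 0 < m j) ∧
        ∀ f ∈ V, ∫ y, f y ∂μ = ∑ j, m j * f (x j) := by
  classical
  set n := Module.finrank ℝ V with hn
  let b : Basis (Fin n) ℝ V := Module.finBasis ℝ V
  set g : Y → (Fin n → ℝ) := fun y i => (b i : Y → ℝ) y with hgdef
  have hgmeas : Measurable g := measurable_pi_iff.mpr fun i => hmeas _ (b i).2
  have hgint : Integrable g μ := by
    have hgeq : g = fun y => ∑ i : Fin n, ((b i : Y → ℝ) y) • (Pi.single i 1 : Fin n → ℝ) := by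
      funext y
      funext j
      simp [hgdef, Pi.single_apply]
    rw [hgeq]
    exact integrable_finset_sum _ fun i _ => (hint _ (b i).2).smul_const _
  have hrank : Module.finrank ℝ (span ℝ (g '' Set.univ)) ≤ n := by
    calc Module.finrank ℝ (span ℝ (g '' Set.univ)) ≤ Module.finrank ℝ (Fin n → ℝ) :=
          Submodule.finrank_le _
    _ = n := Module.finrank_fin_fun ℝ
  have hcone := coneA μ g hgmeas n Set.univ MeasurableSet.univ
    (by rwa [integrableOn_univ]) hrank
  rw [Measure.restrict_univ] at hcone
  obtain ⟨s, w, -, hw, hsum⟩ := hcone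
  set s₁ := s.filter (fun y => 0 < w y) with hs₁
  have hsum₁ : ∑ y ∈ s₁, w y • g y = ∑ y ∈ s, w y • g y :=
    Finset.sum_filter_of_ne fun y hy hne =>
      (hw y hy).lt_of_ne (fun h => hne (by rw [← h, zero_smul]))
  obtain ⟨t, v, hts, hv, hli, hsum₂⟩ :=
    cara g s₁.card s₁ le_rfl w (fun y hy => (Finset.mem_filter.mp hy).2)
  have htotal : ∑ y ∈ t, v y • g y = ∫ y, g y ∂μ := by
    rw [hsum₂, hsum₁, ← hsum]
  set e : ↥t ≃ Fin t.card := Fintype.equivFinOfCardEq (Fintype.card_coe t) with he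
  refine ⟨t.card, ?_, fun j => ↑(e.symm j), fun j => v ↑(e.symm j), ?_, ?_, ?_⟩
  · have hcard := hli.fintype_card_le_finrank
    rw [Fintype.card_coe] at hcard
    calc t.card ≤ Module.finrank ℝ (Fin n → ℝ) := hcard
    _ = n := Module.finrank_fin_fun ℝ
  · intro j₁ j₂ h
    exact e.symm.injective (Subtype.coe_injective h)
  · intro j
    exact hv _ (e.symm j).2
  · intro f hf
    set F : ↥V := ⟨f, hf⟩ with hF
    set c : Fin n → ℝ := fun i => b.repr F i with hc
    have hFrepr : ∀ y, f y = ∑ i, c i * (b i : Y → ℝ) y := by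
      intro y
      have h1 : (∑ i, c i • b i : ↥V) = F := b.sum_repr F
      have h2 := congrArg (fun u : ↥V => (u : Y → ℝ) y) h1
      simpa [Finset.sum_apply] using h2.symm
    have hcoord : ∀ i : Fin n, ∫ y, (b i : Y → ℝ) y ∂μ = ∑ y ∈ t, v y * (b i : Y → ℝ) y := by
      intro i
      have h1 : ∫ y, g y i ∂μ = (∫ y, g y ∂μ) i := by
        have := (ContinuousLinearMap.proj (R := ℝ) (φ := fun _ : Fin n => ℝ) i).integral_comp_comm
          hgint
        simpa using this
      have h2 := congrFun htotal i
      simp only [Finset.sum_apply, Pi.smul_apply, smul_eq_mul] at h2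
      rw [show (fun y => (b i : Y → ℝ) y) = fun y => g y i from rfl, h1, ← h2]
    calc ∫ y, f y ∂μ = ∫ y, ∑ i, c i * (b i : Y → ℝ) y ∂μ := by
          simp only [hFrepr]
    _ = ∑ i, ∫ y, c i * (b i : Y → ℝ) y ∂μ :=
          integral_finset_sum _ fun i _ => ((hint _ (b i).2).const_mul (c i))
    _ = ∑ i, c i * ∫ y, (b i : Y → ℝ) y ∂μ := by
          simp only [integral_const_mul]
    _ = ∑ i, c i * ∑ y ∈ t, v y * (b i : Y → ℝ) y := by
          simp only [hcoord]
    _ = ∑ y ∈ t, v y * f y := by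
          simp_rw [Finset.mul_sum]
          rw [Finset.sum_comm]
          refine Finset.sum_congr rfl fun y _ => ?_
          rw [hFrepr y, Finset.mul_sum]
          exact Finset.sum_congr rfl fun i _ => by ring
    _ = ∑ j, v ↑(e.symm j) * f ↑(e.symm j) := by
          rw [← Finset.sum_coe_sort t (fun y => v y * f y)]
          exact (Equiv.sum_comp e.symm (fun i : ↥t => v ↑i * f ↑i)).symm
end

section
/- Stochel's theorem: Let K be a closed subset of ℝ^d and let L be a linear functional on ℝ[x₁,…,x_d]. Suppose that for each n ∈ ℕ there exists a Radon measure μ_n on ℝ^d supported on K such that every polynomial of degree at most 2n is μ_n-integrable and L(p) = ∫ p dμ_n for all p ∈ ℝ[x₁,…,x_d] with deg p ≤ 2n. Then L is a K-moment functional: there exists a Radon measure μ on ℝ^d supported on K such that every polynomial is μ-integrable and L(p) = ∫ p dμ for all p ∈ ℝ[x₁,…,x_d]. -/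
open MeasureTheory Filter Topology Set ENNReal

noncomputable section
namespace StochelAux

variable (U : Ultrafilter ℕ)

def elim (a : ℕ → ℝ≥0∞) : ℝ≥0∞ := (U.map a).lim

lemma tendsto_elim (a : ℕ → ℝ≥0∞) : Tendsto a U (𝓝 (elim U a)) :=
  (U.map a).le_nhds_lim

lemma elim_eq {a : ℕ → ℝ≥0∞} {x : ℝ≥0∞} (h : Tendsto a U (𝓝 x)) : elim U a = x :=
  tendsto_nhds_unique (tendsto_elim U a) h

lemma elim_const (x : ℝ≥0∞) : elim U (fun _ => x) = x :=
  elim_eq U tendsto_const_nhds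

lemma elim_mono {a b : ℕ → ℝ≥0∞} (h : ∀ᶠ n in (U : Filter ℕ), a n ≤ b n) :
    elim U a ≤ elim U b :=
  le_of_tendsto_of_tendsto (tendsto_elim U a) (tendsto_elim U b) h

lemma elim_mono' {a b : ℕ → ℝ≥0∞} (h : ∀ n, a n ≤ b n) :
    elim U a ≤ elim U b :=
  elim_mono U (Eventually.of_forall h)

lemma elim_le {a : ℕ → ℝ≥0∞} {x : ℝ≥0∞} (h : ∀ᶠ n in (U : Filter ℕ), a n ≤ x) :
    elim U a ≤ x := by
  simpa [elim_const] using elim_mono U (b := fun _ => x) h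

lemma le_elim {a : ℕ → ℝ≥0∞} {x : ℝ≥0∞} (h : ∀ᶠ n in (U : Filter ℕ), x ≤ a n) :
    x ≤ elim U a := by
  simpa [elim_const] using elim_mono U (a := fun _ => x) h

lemma elim_add (a b : ℕ → ℝ≥0∞) : elim U (fun n => a n + b n) = elim U a + elim U b :=
  elim_eq U ((tendsto_elim U a).add (tendsto_elim U b))

lemma elim_sum {ι : Type*} (s : Finset ι) (a : ι → ℕ → ℝ≥0∞) :
    elim U (fun n => ∑ i ∈ s, a i n) = ∑ i ∈ s, elim U (a i) :=
  elim_eq U (tendsto_finset_sum s fun i _ => tendsto_elim U (a i))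

lemma elim_const_mul (c : ℝ≥0∞) (hc : c ≠ ∞) (a : ℕ → ℝ≥0∞) :
    elim U (fun n => c * a n) = c * elim U a :=
  elim_eq U (ENNReal.Tendsto.const_mul (tendsto_elim U a) (Or.inr hc))

/-! ### The limit content -/

variable {X : Type*} [TopologicalSpace X] [T2Space X] [MeasurableSpace X] [BorelSpace X]
variable (μs : ℕ → Measure X) {c : ℝ≥0∞}

lemma elim_meas_le (hc : ∀ n, μs n Set.univ ≤ c) (s : Set X) :
    elim U (fun n => μs n s) ≤ c :=
  elim_le U <| Eventually.of_forall fun n => (measure_mono (subset_univ s)).trans (hc n)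

lemma elim_meas_ne_top (hcT : c ≠ ∞) (hc : ∀ n, μs n Set.univ ≤ c) (s : Set X) :
    elim U (fun n => μs n s) ≠ ∞ :=
  ((elim_meas_le U μs hc s).trans_lt hcT.lt_top).ne

/-- The content given by the ultrafilter limit of the measures. -/
def limCont (hcT : c ≠ ∞) (hc : ∀ n, μs n Set.univ ≤ c) : MeasureTheory.Content X where
  toFun K := (elim U (fun n => μs n K)).toNNReal
  mono' K₁ K₂ h :=
    ENNReal.toNNReal_mono (elim_meas_ne_top U μs hcT hc _)
      (elim_mono' U fun n => measure_mono h)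
  sup_disjoint' K₁ K₂ hd h₁ h₂ := by
    have he : elim U (fun n => μs n (↑K₁ ∪ ↑K₂))
        = elim U (fun n => μs n K₁) + elim U (fun n => μs n K₂) := by
      rw [show (fun n => μs n (↑K₁ ∪ ↑K₂)) = fun n => μs n K₁ + μs n K₂ from
        funext fun n => measure_union hd h₂.measurableSet]
      exact elim_add U _ _
    show (elim U (fun n => μs n (↑K₁ ∪ ↑K₂))).toNNReal = _
    rw [he, ENNReal.toNNReal_add (elim_meas_ne_top U μs hcT hc _)
      (elim_meas_ne_top U μs hcT hc _)]
  sup_le' K₁ K₂ := by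
    have h1 : elim U (fun n => μs n (↑K₁ ∪ ↑K₂))
        ≤ elim U (fun n => μs n K₁) + elim U (fun n => μs n K₂) := by
      rw [← elim_add U]
      exact elim_mono' U fun n => measure_union_le _ _
    show (elim U (fun n => μs n (↑K₁ ∪ ↑K₂))).toNNReal ≤ _
    calc (elim U (fun n => μs n (↑K₁ ∪ ↑K₂))).toNNReal
        ≤ (elim U (fun n => μs n K₁) + elim U (fun n => μs n K₂)).toNNReal :=
          ENNReal.toNNReal_mono
            (ENNReal.add_lt_top.2 ⟨(elim_meas_ne_top U μs hcT hc _).lt_top,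
              (elim_meas_ne_top U μs hcT hc _).lt_top⟩).ne h1
      _ = _ := ENNReal.toNNReal_add (elim_meas_ne_top U μs hcT hc _)
          (elim_meas_ne_top U μs hcT hc _)

variable (hcT : c ≠ ∞) (hc : ∀ n, μs n Set.univ ≤ c)

lemma limCont_apply (K : TopologicalSpace.Compacts X) :
    (limCont U μs hcT hc K : ℝ≥0∞) = elim U (fun n => μs n K) :=
  ENNReal.coe_toNNReal (elim_meas_ne_top U μs hcT hc _)

/-- The limit measure. -/
def limMeas : Measure X := (limCont U μs hcT hc).measure

lemma limMeas_open_le {V : Set X} (hV : IsOpen V) :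
    limMeas U μs hcT hc V ≤ elim U (fun n => μs n V) := by
  rw [limMeas, Content.measure_apply _ hV.measurableSet,
    Content.outerMeasure_of_isOpen _ _ hV]
  rw [Content.innerContent]
  apply iSup₂_le
  intro K hK
  rw [limCont_apply]
  exact elim_mono' U fun n => measure_mono hK

lemma le_limMeas_compact {C : Set X} (hC : IsCompact C) :
    elim U (fun n => μs n C) ≤ limMeas U μs hcT hc C := by
  rw [limMeas, Content.measure_apply _ hC.measurableSet]
  have := (limCont U μs hcT hc).le_outerMeasure_compacts ⟨C, hC⟩
  rwa [limCont_apply] at this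



lemma real_lower {δ a : ℝ} (hδ : 0 ≤ δ) (ha : 0 ≤ a) (N : ℕ) (p : ℕ → Prop) [DecidablePred p]
    (hp : ∀ i, p i → (i : ℝ) * δ ≤ a) :
    δ * (∑ i ∈ Finset.Icc 1 N, if p i then (1:ℝ) else 0) ≤ a := by
  induction N with
  | zero => simpa using ha
  | succ N ih =>
    rw [Finset.sum_Icc_succ_top (by omega)]
    by_cases hpN : p (N + 1)
    · have hS : (∑ i ∈ Finset.Icc 1 N, if p i then (1:ℝ) else 0) ≤ N := by
        calc (∑ i ∈ Finset.Icc 1 N, if p i then (1:ℝ) else 0)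
            ≤ ∑ _i ∈ Finset.Icc 1 N, (1:ℝ) := by
              apply Finset.sum_le_sum; intro i _; split <;> norm_num
          _ = N := by simp [Nat.Icc_eq_range']
      have h2 : ((N:ℝ) + 1) * δ ≤ a := by
        have := hp (N+1) hpN; push_cast at this; linarith
      rw [if_pos hpN]
      nlinarith
    · rw [if_neg hpN, add_zero]; exact ih
  
lemma real_upper {δ a : ℝ} (hδ : 0 < δ) (ha : 0 ≤ a) (N : ℕ) (haN : a ≤ N * δ)
    (p : ℕ → Prop) [DecidablePred p] (hp : ∀ i : ℕ, (i : ℝ) * δ < a → p i) :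
    a ≤ δ * (∑ i ∈ Finset.Icc 1 N, if p i then (1:ℝ) else 0) + δ := by
  induction N with
  | zero =>
    simp only [Nat.cast_zero, zero_mul] at haN
    have hS : (0:ℝ) ≤ ∑ i ∈ Finset.Icc 1 0, if p i then (1:ℝ) else 0 :=
      Finset.sum_nonneg fun i _ => by split <;> norm_num
    nlinarith
  | succ N ih =>
    by_cases hc : a ≤ N * δ
    · have h1 := ih hc
      have h2 : (∑ i ∈ Finset.Icc 1 N, if p i then (1:ℝ) else 0)
          ≤ ∑ i ∈ Finset.Icc 1 (N+1), if p i then (1:ℝ) else 0 := by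
        rw [Finset.sum_Icc_succ_top (by omega)]
        have : (0:ℝ) ≤ if p (N+1) then (1:ℝ) else 0 := by split <;> norm_num
        linarith
      nlinarith
    · push_neg at hc
      have hS : (N:ℝ) ≤ ∑ i ∈ Finset.Icc 1 (N+1), if p i then (1:ℝ) else 0 := by
        calc (N:ℝ) = ∑ _i ∈ Finset.Icc 1 N, (1:ℝ) := by simp [Nat.Icc_eq_range']
          _ ≤ ∑ i ∈ Finset.Icc 1 N, if p i then (1:ℝ) else 0 := by
              apply Finset.sum_le_sum; intro i hi
              rw [if_pos]
              apply hp
              rw [Finset.mem_Icc] at hi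
              calc (i:ℝ) * δ ≤ (N:ℝ) * δ := by
                    apply mul_le_mul_of_nonneg_right _ hδ.le
                    exact_mod_cast hi.2
                _ < a := hc
          _ ≤ _ := by
              rw [Finset.sum_Icc_succ_top (by omega)]
              have : (0:ℝ) ≤ if p (N+1) then (1:ℝ) else 0 := by split <;> norm_num
              linarith
      push_cast at haN ⊢
      nlinarith


lemma sum_le_lintegral (ν : Measure X) {g : X → ℝ} (hg : Continuous g)
    (hg0 : ∀ x, 0 ≤ g x) {δ : ℝ} (hδ : 0 ≤ δ) (N : ℕ) (s : ℕ → Set X)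
    (hmeas : ∀ i, MeasurableSet (s i)) (hsub : ∀ i x, x ∈ s i → (i : ℝ) * δ ≤ g x) :
    ∑ i ∈ Finset.Icc 1 N, ENNReal.ofReal δ * ν (s i) ≤ ∫⁻ x, ENNReal.ofReal (g x) ∂ν := by
  classical
  have key : ∀ x, ∑ i ∈ Finset.Icc 1 N, (s i).indicator (fun _ => ENNReal.ofReal δ) x
      ≤ ENNReal.ofReal (g x) := by
    intro x
    have hr := real_lower hδ (hg0 x) N (fun i => x ∈ s i) (fun i hi => hsub i x hi)
    calc ∑ i ∈ Finset.Icc 1 N, (s i).indicator (fun _ => ENNReal.ofReal δ) x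
        = ENNReal.ofReal (δ * ∑ i ∈ Finset.Icc 1 N, if x ∈ s i then (1:ℝ) else 0) := by
          rw [ENNReal.ofReal_mul hδ]
          rw [ENNReal.ofReal_sum_of_nonneg (fun i _ => by split <;> norm_num)]
          rw [Finset.mul_sum]
          congr 1
          ext i
          simp only [Set.indicator]
          split <;> simp
      _ ≤ ENNReal.ofReal (g x) := ENNReal.ofReal_le_ofReal hr
  calc ∑ i ∈ Finset.Icc 1 N, ENNReal.ofReal δ * ν (s i)
      = ∫⁻ x, ∑ i ∈ Finset.Icc 1 N, (s i).indicator (fun _ => ENNReal.ofReal δ) x ∂ν := by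
        rw [lintegral_finset_sum]
        · congr 1; ext i
          rw [lintegral_indicator_const (hmeas i)]
        · exact fun i _ => measurable_const.indicator (hmeas i)
    _ ≤ _ := lintegral_mono key

lemma lintegral_le_sum (ν : Measure X) {g : X → ℝ} (hg : Continuous g)
    (hg0 : ∀ x, 0 ≤ g x) {δ : ℝ} (hδ : 0 < δ) (N : ℕ) (hgN : ∀ x, g x ≤ N * δ)
    (s : ℕ → Set X) (hmeas : ∀ i, MeasurableSet (s i))
    (hsub : ∀ (i : ℕ) (x : X), (i : ℝ) * δ < g x → x ∈ s i) :
    ∫⁻ x, ENNReal.ofReal (g x) ∂ν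
      ≤ (∑ i ∈ Finset.Icc 1 N, ENNReal.ofReal δ * ν (s i)) + ENNReal.ofReal δ * ν Set.univ := by
  classical
  have key : ∀ x, ENNReal.ofReal (g x)
      ≤ (∑ i ∈ Finset.Icc 1 N, (s i).indicator (fun _ => ENNReal.ofReal δ) x)
        + ENNReal.ofReal δ := by
    intro x
    have hr := real_upper hδ (hg0 x) N (hgN x) (fun i => x ∈ s i) (fun i hi => hsub i x hi)
    calc ENNReal.ofReal (g x)
        ≤ ENNReal.ofReal (δ * (∑ i ∈ Finset.Icc 1 N, if x ∈ s i then (1:ℝ) else 0) + δ) :=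
          ENNReal.ofReal_le_ofReal hr
      _ = (∑ i ∈ Finset.Icc 1 N, (s i).indicator (fun _ => ENNReal.ofReal δ) x)
          + ENNReal.ofReal δ := by
          rw [ENNReal.ofReal_add (by positivity) hδ.le]
          congr 1
          rw [ENNReal.ofReal_mul hδ.le]
          rw [ENNReal.ofReal_sum_of_nonneg (fun i _ => by split <;> norm_num)]
          rw [Finset.mul_sum]
          congr 1
          ext i
          simp only [Set.indicator]
          split <;> simp
  calc ∫⁻ x, ENNReal.ofReal (g x) ∂ν
      ≤ ∫⁻ x, (∑ i ∈ Finset.Icc 1 N, (s i).indicator (fun _ => ENNReal.ofReal δ) x)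
          + ENNReal.ofReal δ ∂ν := lintegral_mono key
    _ = (∑ i ∈ Finset.Icc 1 N, ENNReal.ofReal δ * ν (s i)) + ENNReal.ofReal δ * ν Set.univ := by
        rw [lintegral_add_right _ measurable_const, lintegral_const]
        congr 1
        rw [lintegral_finset_sum]
        · congr 1; ext i
          rw [lintegral_indicator_const (hmeas i)]
        · exact fun i _ => measurable_const.indicator (hmeas i)



lemma ofReal_mul_le_of_elim {a b : ℝ≥0∞} {δ : ℝ} (h : a ≤ b) (hδ : 0 ≤ δ) :
    ENNReal.ofReal δ * a ≤ ENNReal.ofReal δ * b := mul_le_mul_right h _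

lemma elim_lintegral_eq {g : X → ℝ} (hg : Continuous g) (hg0 : ∀ x, 0 ≤ g x)
    {M : ℝ} (hM : ∀ x, g x ≤ M) {S : Set X} (hS : IsCompact S)
    (hgS : ∀ x ∉ S, g x = 0) :
    ∫⁻ x, ENNReal.ofReal (g x) ∂(limMeas U μs hcT hc)
      = elim U (fun n => ∫⁻ x, ENNReal.ofReal (g x) ∂(μs n)) := by
  set μ := limMeas U μs hcT hc with hμ
  have hμuniv : μ Set.univ ≤ c :=
    (limMeas_open_le U μs hcT hc isOpen_univ).trans (elim_meas_le U μs hc _)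
  have key : ∀ δ : ℝ, 0 < δ →
      (∫⁻ x, ENNReal.ofReal (g x) ∂μ
          ≤ elim U (fun n => ∫⁻ x, ENNReal.ofReal (g x) ∂(μs n)) + ENNReal.ofReal δ * c) ∧
      (elim U (fun n => ∫⁻ x, ENNReal.ofReal (g x) ∂(μs n))
          ≤ (∫⁻ x, ENNReal.ofReal (g x) ∂μ) + ENNReal.ofReal δ * c) := by
    intro δ hδ
    set N : ℕ := ⌈M / δ⌉₊ with hN
    have hMN : ∀ x, g x ≤ N * δ := by
      intro x
      calc g x ≤ M := hM x
        _ ≤ N * δ := by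
          rw [← div_le_iff₀ hδ]
          exact Nat.le_ceil _
    set sLt : ℕ → Set X := fun i => {x | (i : ℝ) * δ < g x} with hsLt
    set sLe : ℕ → Set X := fun i => {x | (i : ℝ) * δ ≤ g x} with hsLe
    have hsLtOpen : ∀ i, IsOpen (sLt i) := fun i => isOpen_lt continuous_const hg
    have hsLeClosed : ∀ i, IsClosed (sLe i) := fun i => isClosed_le continuous_const hg
    have hsLtMeas : ∀ i, MeasurableSet (sLt i) := fun i => (hsLtOpen i).measurableSet
    have hsLeMeas : ∀ i, MeasurableSet (sLe i) := fun i => (hsLeClosed i).measurableSet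
    have hsLeCompact : ∀ i : ℕ, 1 ≤ i → IsCompact (sLe i) := by
      intro i hi
      apply hS.of_isClosed_subset (hsLeClosed i)
      intro x hx
      by_contra hxS
      have h0 : g x = 0 := hgS x hxS
      have : (i : ℝ) * δ ≤ 0 := by rw [← h0]; exact hx
      nlinarith [show (1:ℝ) ≤ (i:ℝ) from by exact_mod_cast hi]
    constructor
    · calc ∫⁻ x, ENNReal.ofReal (g x) ∂μ
          ≤ (∑ i ∈ Finset.Icc 1 N, ENNReal.ofReal δ * μ (sLt i))
              + ENNReal.ofReal δ * μ Set.univ :=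
            lintegral_le_sum μ hg hg0 hδ N hMN sLt hsLtMeas (fun i x h => h)
        _ ≤ (∑ i ∈ Finset.Icc 1 N, ENNReal.ofReal δ * elim U (fun n => μs n (sLt i)))
              + ENNReal.ofReal δ * c := by
            refine add_le_add (Finset.sum_le_sum fun i _ => mul_le_mul_right ?_ _)
              (mul_le_mul_right hμuniv _)
            exact limMeas_open_le U μs hcT hc (hsLtOpen i)
        _ = elim U (fun n => ∑ i ∈ Finset.Icc 1 N, ENNReal.ofReal δ * μs n (sLt i))
              + ENNReal.ofReal δ * c := by
            congr 1
            rw [elim_sum]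
            exact Finset.sum_congr rfl fun i _ =>
              (elim_const_mul U _ ENNReal.ofReal_ne_top _).symm
        _ ≤ elim U (fun n => ∫⁻ x, ENNReal.ofReal (g x) ∂(μs n)) + ENNReal.ofReal δ * c := by
            refine add_le_add_left (elim_mono' U fun n => ?_) _
            exact sum_le_lintegral (μs n) hg hg0 hδ.le N sLt hsLtMeas
              (fun i x h => le_of_lt h)
    · calc elim U (fun n => ∫⁻ x, ENNReal.ofReal (g x) ∂(μs n))
          ≤ elim U (fun n => (∑ i ∈ Finset.Icc 1 N, ENNReal.ofReal δ * μs n (sLe i))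
              + ENNReal.ofReal δ * μs n Set.univ) :=
            elim_mono' U fun n => lintegral_le_sum (μs n) hg hg0 hδ N hMN sLe hsLeMeas
              (fun i x h => le_of_lt h)
        _ = (∑ i ∈ Finset.Icc 1 N, ENNReal.ofReal δ * elim U (fun n => μs n (sLe i)))
              + ENNReal.ofReal δ * elim U (fun n => μs n Set.univ) := by
            rw [elim_add U (fun n => ∑ i ∈ Finset.Icc 1 N, ENNReal.ofReal δ * μs n (sLe i))
              (fun n => ENNReal.ofReal δ * μs n Set.univ)]
            rw [elim_sum, elim_const_mul U _ ENNReal.ofReal_ne_top]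
            congr 1
            exact Finset.sum_congr rfl fun i _ => elim_const_mul U _ ENNReal.ofReal_ne_top _
        _ ≤ (∑ i ∈ Finset.Icc 1 N, ENNReal.ofReal δ * μ (sLe i)) + ENNReal.ofReal δ * c := by
            refine add_le_add (Finset.sum_le_sum fun i hi => mul_le_mul_right ?_ _)
              (mul_le_mul_right (elim_meas_le U μs hc _) _)
            exact le_limMeas_compact U μs hcT hc (hsLeCompact i (Finset.mem_Icc.mp hi).1)
        _ ≤ (∫⁻ x, ENNReal.ofReal (g x) ∂μ) + ENNReal.ofReal δ * c :=
            add_le_add_left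
              (sum_le_lintegral μ hg hg0 hδ.le N sLe hsLeMeas (fun i x h => h)) _
  have htend : Tendsto (fun k : ℕ => ENNReal.ofReal (1 / ((k : ℝ) + 1)) * c) atTop (𝓝 0) := by
    have h1 : Tendsto (fun k : ℕ => ENNReal.ofReal (1 / ((k : ℝ) + 1))) atTop (𝓝 0) := by
      have := tendsto_one_div_add_atTop_nhds_zero_nat (𝕜 := ℝ)
      have h2 := ENNReal.tendsto_ofReal (a := 0) this
      simpa using h2
    have := ENNReal.Tendsto.mul_const h1 (Or.inr hcT)
    simpa using this
  apply le_antisymm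
  · refine ge_of_tendsto' (x := (atTop : Filter ℕ)) (f := fun k : ℕ =>
      elim U (fun n => ∫⁻ x, ENNReal.ofReal (g x) ∂(μs n))
        + ENNReal.ofReal (1 / ((k : ℝ) + 1)) * c) ?_ ?_
    · have := Tendsto.add (tendsto_const_nhds
        (x := elim U (fun n => ∫⁻ x, ENNReal.ofReal (g x) ∂(μs n))) (f := atTop)) htend
      simpa using this
    · intro k
      exact (key (1 / ((k : ℝ) + 1)) (by positivity)).1
  · refine ge_of_tendsto' (x := (atTop : Filter ℕ)) (f := fun k : ℕ =>
      (∫⁻ x, ENNReal.ofReal (g x) ∂μ) + ENNReal.ofReal (1 / ((k : ℝ) + 1)) * c) ?_ ?_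
    · have := Tendsto.add (tendsto_const_nhds
        (x := ∫⁻ x, ENNReal.ofReal (g x) ∂μ) (f := atTop)) htend
      simpa using this
    · intro k
      exact (key (1 / ((k : ℝ) + 1)) (by positivity)).2

end StochelAux


open MeasureTheory

/-- Stochel's theorem: if for each `n` the restriction of `L` to polynomials of degree at
most `2n` has a representing measure supported on the closed set `K`, then `L` itself is a
`K`-moment functional. -/
theorem stochel (d : ℕ) (K : Set (Fin d → ℝ)) (hK : IsClosed K)
    (L : MvPolynomial (Fin d) ℝ →ₗ[ℝ] ℝ)
    (htrunc : ∀ n : ℕ, ∃ μ : Measure (Fin d → ℝ), IsRadon μ ∧ μ Kᶜ = 0 ∧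
      ∀ p : MvPolynomial (Fin d) ℝ, p.totalDegree ≤ 2 * n →
        Integrable (fun x => MvPolynomial.eval x p) μ ∧
        L p = ∫ x, MvPolynomial.eval x p ∂μ) :
    ∃ μ : Measure (Fin d → ℝ), IsRadon μ ∧ μ Kᶜ = 0 ∧
      ∀ p : MvPolynomial (Fin d) ℝ,
        Integrable (fun x => MvPolynomial.eval x p) μ ∧
        L p = ∫ x, MvPolynomial.eval x p ∂μ := by
  classical
  choose μs hRadon hsupp hint using htrunc
  clear hRadon
  have hfin : ∀ n, μs n Set.univ = ENNReal.ofReal (L 1) := by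
    intro n
    obtain ⟨hi, he⟩ := hint n 1 (by simp)
    simp only [map_one] at hi he
    have hlt : μs n Set.univ < ∞ := by
      haveI := (integrable_const_iff.mp hi).resolve_left one_ne_zero
      exact measure_lt_top _ _
    rw [MeasureTheory.integral_const, smul_eq_mul, mul_one] at he
    rw [he, measureReal_def, ENNReal.ofReal_toReal hlt.ne]
  set c : ℝ≥0∞ := ENNReal.ofReal (L 1) with hcdef
  have hcT : c ≠ ∞ := ENNReal.ofReal_ne_top
  have hc : ∀ n, μs n Set.univ ≤ c := fun n => (hfin n).le
  set U : Ultrafilter ℕ := Ultrafilter.of Filter.atTop with hUdef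
  have hUle : (U : Filter ℕ) ≤ Filter.atTop := Ultrafilter.of_le _
  set μ : Measure (Fin d → ℝ) := StochelAux.limMeas U μs hcT hc with hμdef
  have hμuniv : μ Set.univ ≤ c :=
    (StochelAux.limMeas_open_le U μs hcT hc isOpen_univ).trans
      (StochelAux.elim_meas_le U μs hc _)
  haveI hμfin : IsFiniteMeasure μ := ⟨hμuniv.trans_lt hcT.lt_top⟩
  -- eventual representation along the ultrafilter
  have hev : ∀ q : MvPolynomial (Fin d) ℝ, ∀ᶠ n in (U : Filter ℕ),
      Integrable (fun x => MvPolynomial.eval x q) (μs n) ∧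
      L q = ∫ x, MvPolynomial.eval x q ∂(μs n) := by
    intro q
    apply hUle
    filter_upwards [Filter.eventually_ge_atTop q.totalDegree] with n hn
    exact hint n q (by omega)
  have hlintn : ∀ q : MvPolynomial (Fin d) ℝ, (∀ x, 0 ≤ MvPolynomial.eval x q) →
      ∀ᶠ n in (U : Filter ℕ),
        ∫⁻ x, ENNReal.ofReal (MvPolynomial.eval x q) ∂(μs n) = ENNReal.ofReal (L q) := by
    intro q hq
    filter_upwards [hev q] with n hn
    rw [hn.2, MeasureTheory.ofReal_integral_eq_lintegral_ofReal hn.1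
      (Filter.Eventually.of_forall hq)]
  have hLnonneg : ∀ q : MvPolynomial (Fin d) ℝ, (∀ x, 0 ≤ MvPolynomial.eval x q) → 0 ≤ L q := by
    intro q hq
    obtain ⟨hi, he⟩ := hint q.totalDegree q (by omega)
    rw [he]
    exact integral_nonneg hq
  -- the main lintegral identity for nonnegative polynomials
  have main : ∀ q : MvPolynomial (Fin d) ℝ, (∀ x, 0 ≤ MvPolynomial.eval x q) →
      ∫⁻ x, ENNReal.ofReal (MvPolynomial.eval x q) ∂μ = ENNReal.ofReal (L q) := by
    intro q hq
    set r : MvPolynomial (Fin d) ℝ := ∑ i : Fin d, (MvPolynomial.X i)^2 with hrdef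
    have hreval : ∀ x, MvPolynomial.eval x r = ∑ i, (x i)^2 := by
      intro x; simp [hrdef]
    have hqr : ∀ x, 0 ≤ MvPolynomial.eval x (q * r) := by
      intro x
      rw [map_mul, hreval]
      exact mul_nonneg (hq x) (Finset.sum_nonneg fun i _ => sq_nonneg _)
    -- the cutoff functions
    set φ : ℕ → (Fin d → ℝ) → ℝ := fun k x => max 0 (min 1 (2 - ‖x‖ / ((k:ℝ)+1))) with hφdef
    have hφcont : ∀ k, Continuous (φ k) := fun k =>
      continuous_const.max (continuous_const.min
        (continuous_const.sub (continuous_norm.div_const _)))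
    have hφ0 : ∀ k x, 0 ≤ φ k x := fun k x => le_max_left _ _
    have hφ1 : ∀ k x, φ k x ≤ 1 := fun k x => max_le zero_le_one (min_le_left _ _)
    have hφeq1 : ∀ (k : ℕ) (x : Fin d → ℝ), ‖x‖ ≤ (k:ℝ)+1 → φ k x = 1 := by
      intro k x hx
      have hk : (0:ℝ) < (k:ℝ)+1 := by positivity
      have h1 : (1:ℝ) ≤ 2 - ‖x‖/((k:ℝ)+1) := by
        have : ‖x‖/((k:ℝ)+1) ≤ 1 := by rw [div_le_one hk]; exact hx
        linarith
      rw [hφdef]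
      simp only [min_eq_left h1, max_eq_right zero_le_one]
    have hφeq0 : ∀ (k : ℕ) (x : Fin d → ℝ), 2*((k:ℝ)+1) ≤ ‖x‖ → φ k x = 0 := by
      intro k x hx
      have hk : (0:ℝ) < (k:ℝ)+1 := by positivity
      have h1 : 2 - ‖x‖/((k:ℝ)+1) ≤ 0 := by
        rw [sub_nonpos, le_div_iff₀ hk]; linarith
      rw [hφdef]
      simp only []
      rw [min_eq_right (h1.trans zero_le_one), max_eq_left h1]
    have hφmono : ∀ (k l : ℕ), k ≤ l → ∀ x, φ k x ≤ φ l x := by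
      intro k l hkl x
      apply max_le_max le_rfl
      apply min_le_min le_rfl
      apply sub_le_sub_left
      apply div_le_div_of_nonneg_left (norm_nonneg x) (by positivity)
      have : (k:ℝ) ≤ l := by exact_mod_cast hkl
      linarith
    set g : ℕ → (Fin d → ℝ) → ℝ := fun k x => MvPolynomial.eval x q * φ k x with hgdef
    have hgcont : ∀ k, Continuous (g k) := fun k =>
      (MvPolynomial.continuous_eval q).mul (hφcont k)
    have hg0 : ∀ k x, 0 ≤ g k x := fun k x => mul_nonneg (hq x) (hφ0 k x)
    have hgle : ∀ k x, g k x ≤ MvPolynomial.eval x q := by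
      intro k x
      calc g k x ≤ MvPolynomial.eval x q * 1 :=
            mul_le_mul_of_nonneg_left (hφ1 k x) (hq x)
        _ = _ := mul_one _
    have hgbdd : ∀ k, ∃ M, ∀ x, g k x ≤ M := by
      intro k
      obtain ⟨B, hB⟩ := (isCompact_closedBall (0 : Fin d → ℝ)
        (2*((k:ℝ)+1))).exists_bound_of_continuousOn
        (MvPolynomial.continuous_eval q).continuousOn
      refine ⟨max B 0, fun x => ?_⟩
      by_cases hx : ‖x‖ ≤ 2*((k:ℝ)+1)
      · have hxball : x ∈ Metric.closedBall (0 : Fin d → ℝ) (2*((k:ℝ)+1)) := by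
          simpa [Metric.mem_closedBall, dist_zero_right] using hx
        calc g k x ≤ MvPolynomial.eval x q := hgle k x
          _ ≤ |MvPolynomial.eval x q| := le_abs_self _
          _ ≤ B := by have := hB x hxball; rwa [Real.norm_eq_abs] at this
          _ ≤ max B 0 := le_max_left _ _
      · push_neg at hx
        rw [hgdef]
        simp only []
        rw [hφeq0 k x hx.le, mul_zero]
        exact le_max_right _ _
    have hgsupp : ∀ (k : ℕ) (x : Fin d → ℝ),
        x ∉ Metric.closedBall (0 : Fin d → ℝ) (2*((k:ℝ)+1)) → g k x = 0 := by
      intro k x hx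
      rw [Metric.mem_closedBall, dist_zero_right, not_le] at hx
      rw [hgdef]
      simp only []
      rw [hφeq0 k x hx.le, mul_zero]
    have hEk : ∀ k, ∫⁻ x, ENNReal.ofReal (g k x) ∂μ
        = StochelAux.elim U (fun n => ∫⁻ x, ENNReal.ofReal (g k x) ∂(μs n)) := by
      intro k
      obtain ⟨M, hM⟩ := hgbdd k
      exact StochelAux.elim_lintegral_eq U μs hcT hc (hgcont k) (hg0 k) hM
        (isCompact_closedBall _ _) (hgsupp k)
    have hupper : ∀ k, ∫⁻ x, ENNReal.ofReal (g k x) ∂μ ≤ ENNReal.ofReal (L q) := by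
      intro k
      rw [hEk k]
      apply StochelAux.elim_le
      filter_upwards [hlintn q hq] with n hn
      rw [← hn]
      exact lintegral_mono fun x => ENNReal.ofReal_le_ofReal (hgle k x)
    have hlower : ∀ k : ℕ, ENNReal.ofReal (L q) ≤ (∫⁻ x, ENNReal.ofReal (g k x) ∂μ)
        + ENNReal.ofReal (L (q * r)) / ENNReal.ofReal (((k:ℝ)+1)*((k:ℝ)+1)) := by
      intro k
      set κ : ℝ := ((k:ℝ)+1)*((k:ℝ)+1) with hκdef
      have hκpos : 0 < κ := by positivity
      rw [hEk k]
      have hadd := StochelAux.elim_add U (fun n => ∫⁻ x, ENNReal.ofReal (g k x) ∂(μs n))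
        (fun _ => ENNReal.ofReal (L (q*r)) / ENNReal.ofReal κ)
      rw [StochelAux.elim_const] at hadd
      rw [← hadd]
      apply StochelAux.le_elim
      filter_upwards [hlintn q hq, hlintn (q*r) hqr] with n hn hnr
      have hpoint : ∀ x, ENNReal.ofReal (MvPolynomial.eval x q)
          ≤ ENNReal.ofReal (g k x)
            + ENNReal.ofReal (MvPolynomial.eval x (q*r)) / ENNReal.ofReal κ := by
        intro x
        by_cases hx : ‖x‖ ≤ (k:ℝ)+1
        · have : ENNReal.ofReal (MvPolynomial.eval x q) = ENNReal.ofReal (g k x) := by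
            rw [hgdef]; simp only []; rw [hφeq1 k x hx, mul_one]
          rw [this]; exact le_self_add
        · push_neg at hx
          obtain ⟨i, hi⟩ : ∃ i, (k:ℝ)+1 < ‖x i‖ := by
            by_contra hcon
            push_neg at hcon
            exact absurd ((pi_norm_le_iff_of_nonneg (by positivity)).mpr fun i => hcon i)
              (not_le.mpr hx)
          have hrlb : κ ≤ MvPolynomial.eval x r := by
            rw [hreval]
            have h1 : κ ≤ ‖x i‖ * ‖x i‖ := by
              rw [hκdef]
              nlinarith [norm_nonneg (x i)]
            have h2 : ‖x i‖ * ‖x i‖ = (x i)^2 := by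
              rw [Real.norm_eq_abs, abs_mul_abs_self, sq]
            calc κ ≤ (x i)^2 := by rw [← h2]; exact h1
              _ ≤ ∑ j, (x j)^2 :=
                  Finset.single_le_sum (f := fun j => (x j)^2)
                    (fun j _ => sq_nonneg _) (Finset.mem_univ i)
          have hle : MvPolynomial.eval x q ≤ MvPolynomial.eval x (q*r) / κ := by
            rw [map_mul, le_div_iff₀ hκpos]
            exact mul_le_mul_of_nonneg_left hrlb (hq x)
          calc ENNReal.ofReal (MvPolynomial.eval x q)
              ≤ ENNReal.ofReal (MvPolynomial.eval x (q*r) / κ) :=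
                ENNReal.ofReal_le_ofReal hle
            _ = ENNReal.ofReal (MvPolynomial.eval x (q*r)) / ENNReal.ofReal κ :=
                ENNReal.ofReal_div_of_pos hκpos
            _ ≤ _ := le_add_self
      have hmeasg : Measurable fun x => ENNReal.ofReal (g k x) :=
        ENNReal.measurable_ofReal.comp (hgcont k).measurable
      have hκne : ENNReal.ofReal κ ≠ 0 := by
        simp [ENNReal.ofReal_eq_zero, not_le, hκpos]
      calc ENNReal.ofReal (L q) = ∫⁻ x, ENNReal.ofReal (MvPolynomial.eval x q) ∂(μs n) :=
            hn.symm
        _ ≤ ∫⁻ x, (ENNReal.ofReal (g k x)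
              + ENNReal.ofReal (MvPolynomial.eval x (q*r)) / ENNReal.ofReal κ) ∂(μs n) :=
            lintegral_mono hpoint
        _ = (∫⁻ x, ENNReal.ofReal (g k x) ∂(μs n))
              + (∫⁻ x, ENNReal.ofReal (MvPolynomial.eval x (q*r)) ∂(μs n))
                / ENNReal.ofReal κ := by
            rw [lintegral_add_left hmeasg]
            congr 1
            simp only [div_eq_mul_inv]
            exact lintegral_mul_const' _ _ (by simpa using hκne)
        _ = (∫⁻ x, ENNReal.ofReal (g k x) ∂(μs n))
              + ENNReal.ofReal (L (q*r)) / ENNReal.ofReal κ := by rw [hnr]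
    -- monotone convergence in k
    have hgmono : Monotone fun k : ℕ => fun x => ENNReal.ofReal (g k x) := by
      intro k l hkl x
      exact ENNReal.ofReal_le_ofReal
        (mul_le_mul_of_nonneg_left (hφmono k l hkl x) (hq x))
    have hsup : ∫⁻ x, ENNReal.ofReal (MvPolynomial.eval x q) ∂μ
        = ⨆ k, ∫⁻ x, ENNReal.ofReal (g k x) ∂μ := by
      rw [← lintegral_iSup (fun k => ((hgcont k).measurable).ennreal_ofReal) hgmono]
      apply lintegral_congr
      intro x
      symm
      apply iSup_eq_of_tendsto (fun k l hkl => hgmono hkl x)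
      apply Filter.Tendsto.congr' _ (tendsto_const_nhds (x := ENNReal.ofReal
        (MvPolynomial.eval x q)))
      filter_upwards [Filter.eventually_ge_atTop ⌈‖x‖⌉₊] with k hk
      have hxk : ‖x‖ ≤ (k:ℝ)+1 := by
        calc ‖x‖ ≤ (⌈‖x‖⌉₊ : ℝ) := Nat.le_ceil _
          _ ≤ (k:ℝ) := by exact_mod_cast hk
          _ ≤ (k:ℝ)+1 := by linarith
      rw [hgdef]
      simp only []
      rw [hφeq1 k x hxk, mul_one]
    have hA_le : ∫⁻ x, ENNReal.ofReal (MvPolynomial.eval x q) ∂μ ≤ ENNReal.ofReal (L q) := by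
      rw [hsup]; exact iSup_le hupper
    have hle_A : ENNReal.ofReal (L q) ≤ ∫⁻ x, ENNReal.ofReal (MvPolynomial.eval x q) ∂μ := by
      have htend0 : Filter.Tendsto (fun k : ℕ =>
          ENNReal.ofReal (L (q*r)) / ENNReal.ofReal (((k:ℝ)+1)*((k:ℝ)+1)))
          Filter.atTop (nhds 0) := by
        have hre : Filter.Tendsto (fun k : ℕ => L (q*r) / (((k:ℝ)+1)*((k:ℝ)+1)))
            Filter.atTop (nhds 0) := by
          have t1 := tendsto_one_div_add_atTop_nhds_zero_nat (𝕜 := ℝ)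
          have t2 := (t1.mul t1).const_mul (L (q*r))
          simp only [mul_zero] at t2
          apply t2.congr
          intro k
          field_simp
        have := ENNReal.tendsto_ofReal (a := 0) hre
        rw [ENNReal.ofReal_zero] at this
        apply this.congr
        intro k
        rw [ENNReal.ofReal_div_of_pos (by positivity)]
      refine ge_of_tendsto' (x := (Filter.atTop : Filter ℕ)) (f := fun k : ℕ =>
        (∫⁻ x, ENNReal.ofReal (MvPolynomial.eval x q) ∂μ)
          + ENNReal.ofReal (L (q*r)) / ENNReal.ofReal (((k:ℝ)+1)*((k:ℝ)+1))) ?_ ?_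
      · have := Filter.Tendsto.add (tendsto_const_nhds
          (x := ∫⁻ x, ENNReal.ofReal (MvPolynomial.eval x q) ∂μ)
          (f := (Filter.atTop : Filter ℕ))) htend0
        simpa using this
      · intro k
        refine (hlower k).trans (add_le_add_left ?_ _)
        exact lintegral_mono fun x => ENNReal.ofReal_le_ofReal (hgle k x)
    exact le_antisymm hA_le hle_A
  -- Bochner integrability and integral identity for nonnegative polynomials
  have keyq : ∀ q : MvPolynomial (Fin d) ℝ, (∀ x, 0 ≤ MvPolynomial.eval x q) →
      Integrable (fun x => MvPolynomial.eval x q) μ ∧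
        (∫ x, MvPolynomial.eval x q ∂μ) = L q := by
    intro q hq
    have hA := main q hq
    have hmeas : AEStronglyMeasurable (fun x => MvPolynomial.eval x q) μ :=
      (MvPolynomial.continuous_eval q).aestronglyMeasurable
    have hintq : Integrable (fun x => MvPolynomial.eval x q) μ := by
      refine ⟨hmeas, ?_⟩
      rw [hasFiniteIntegral_iff_ofReal (Filter.Eventually.of_forall hq), hA]
      exact ENNReal.ofReal_lt_top
    refine ⟨hintq, ?_⟩
    rw [integral_eq_lintegral_of_nonneg_ae (Filter.Eventually.of_forall hq) hmeas, hA,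
      ENNReal.toReal_ofReal (hLnonneg q hq)]
  refine ⟨μ, ⟨inferInstance, ?_⟩, ?_, ?_⟩
  · -- inner regularity
    haveI hreg : μ.Regular :=
      (inferInstance : ((StochelAux.limCont U μs hcT hc).measure).Regular)
    haveI : μ.InnerRegularCompactLTTop := inferInstance
    exact inferInstance
  · -- support in K
    have h1 : μ Kᶜ ≤ StochelAux.elim U (fun n => μs n Kᶜ) :=
      StochelAux.limMeas_open_le U μs hcT hc hK.isOpen_compl
    have h2 : (fun n => μs n Kᶜ) = fun _ => (0:ℝ≥0∞) := funext hsupp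
    rw [h2, StochelAux.elim_const] at h1
    exact le_antisymm h1 (by positivity)
  · -- moments
    intro p
    have h1 : ∀ x, (0:ℝ) ≤ MvPolynomial.eval x (p*p) := fun x => by
      rw [map_mul]; exact mul_self_nonneg _
    have h2 : ∀ x, (0:ℝ) ≤ MvPolynomial.eval x ((p+1)*(p+1)) := fun x => by
      rw [map_mul]; exact mul_self_nonneg _
    have h3 : ∀ x : Fin d → ℝ, (0:ℝ) ≤ MvPolynomial.eval x (1 : MvPolynomial (Fin d) ℝ) :=
      fun x => by simp
    obtain ⟨hi1, he1⟩ := keyq _ h1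
    obtain ⟨hi2, he2⟩ := keyq _ h2
    obtain ⟨hi3, he3⟩ := keyq _ h3
    have hintp : Integrable (fun x => MvPolynomial.eval x p) μ := by
      have hbound : Integrable (fun x => (MvPolynomial.eval x (p*p) + 1)/2) μ :=
        (hi1.add (integrable_const 1)).div_const 2
      apply hbound.mono ((MvPolynomial.continuous_eval p).aestronglyMeasurable)
      apply Filter.Eventually.of_forall
      intro x
      rw [Real.norm_eq_abs, Real.norm_eq_abs, map_mul]
      have habs : |MvPolynomial.eval x p| ≤ (MvPolynomial.eval x p * MvPolynomial.eval x p + 1)/2 := by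
        nlinarith [sq_nonneg (|MvPolynomial.eval x p| - 1), abs_nonneg (MvPolynomial.eval x p),
          sq_abs (MvPolynomial.eval x p)]
      have hrhs : (0:ℝ) ≤ (MvPolynomial.eval x p * MvPolynomial.eval x p + 1)/2 := by
        nlinarith [mul_self_nonneg (MvPolynomial.eval x p)]
      rw [abs_of_nonneg hrhs]
      exact habs
    refine ⟨hintp, ?_⟩
    have hexp : (p+1)*(p+1) = p*p + (2:ℝ) • p + 1 := by
      rw [MvPolynomial.smul_eq_C_mul, map_ofNat]
      ring
    have hLexp : L ((p+1)*(p+1)) = L (p*p) + 2 * L p + L 1 := by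
      rw [hexp, map_add, map_add, _root_.map_smul, smul_eq_mul]
    have hfun : (fun x => MvPolynomial.eval x ((p+1)*(p+1)))
        = fun x => MvPolynomial.eval x (p*p) + 2 * MvPolynomial.eval x p
          + MvPolynomial.eval x (1 : MvPolynomial (Fin d) ℝ) := by
      funext x
      simp only [map_mul, map_add, map_one]
      ring
    have hIexp : ∫ x, MvPolynomial.eval x ((p+1)*(p+1)) ∂μ
        = (∫ x, MvPolynomial.eval x (p*p) ∂μ) + 2*(∫ x, MvPolynomial.eval x p ∂μ)
          + (∫ x, MvPolynomial.eval x (1 : MvPolynomial (Fin d) ℝ) ∂μ) := by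
      rw [hfun]
      have hiA : Integrable (fun x => MvPolynomial.eval x (p*p)
          + 2 * MvPolynomial.eval x p) μ := hi1.add (hintp.const_mul 2)
      have hiB : Integrable (fun x => 2 * MvPolynomial.eval x p) μ := hintp.const_mul 2
      rw [integral_add hiA hi3, integral_add hi1 hiB, MeasureTheory.integral_const_mul]
    rw [he1, he3] at hIexp
    rw [he2] at hIexp
    linarith [hIexp, hLexp]
end
end
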